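/- arXiv:1502.08050 — 5 statements merged into one kernel-verified Lean document; each statement's English description precedes it below -/
import Mathlib

section
/- Let v_L be a positive integer and L = (L_1, …, L_{v_L}) a vector of non-negative integers, and set v_R = 1 + Σ_{i=1}^{v_L} L_i. Then the number T(L) of trees in 𝒢(L) equals ((v_R − 1)! / Π_{i=1}^{v_L} L_i!) · v_R^{v_L − 1}. -/
/-- A graph on a sum type is bipartite with respect to the two summands:
no edges within `V_L` and no edges within `V_R`. -/
def IsBipartiteSum {α β : Type*} (G : SimpleGraph (α ⊕ β)) : Prop :=
  (∀ a a' : α, ¬ G.Adj (Sum.inl a) (Sum.inl a')) ∧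
  (∀ b b' : β, ¬ G.Adj (Sum.inr b) (Sum.inr b'))

/-- The degree of a vertex, as the cardinality of its neighbor set. -/
noncomputable def deg {V : Type*} (G : SimpleGraph V) (v : V) : ℕ :=
  (G.neighborSet v).ncard

section TreeCountingAux

open SimpleGraph

section Basics
variable {V W : Type*}

lemma deg_eq_degree [Fintype V] (G : SimpleGraph V) [DecidableRel G.Adj] (v : V) :
    deg G v = G.degree v := by
  rw [deg, Set.ncard_eq_toFinset_card', ← card_neighborSet_eq_degree]
  simp [Set.toFinset_card]

lemma sum_deg_tree [Fintype V] (G : SimpleGraph V) (h : G.IsTree) :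
    ∑ v, deg G v = 2 * (Fintype.card V - 1) := by
  classical
  have h1 := G.sum_degrees_eq_twice_card_edges
  have h2 := h.card_edgeFinset
  have h3 : ∑ v, deg G v = ∑ v, G.degree v := by
    simp only [deg_eq_degree]
  omega

lemma two_le_deg [Finite V] {G : SimpleGraph V} {v a b : V} (hab : a ≠ b)
    (ha : G.Adj v a) (hb : G.Adj v b) : 2 ≤ deg G v := by
  have : ({a, b} : Set V) ⊆ G.neighborSet v := by
    intro z hz; rcases hz with rfl | rfl
    · exact ha
    · exact hb
  calc 2 = ({a, b} : Set V).ncard := (Set.ncard_pair hab).symm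
    _ ≤ _ := Set.ncard_le_ncard this (Set.toFinite _)

lemma one_le_deg_of_adj [Finite V] {G : SimpleGraph V} {v a : V} (ha : G.Adj v a) :
    1 ≤ deg G v := by
  have : (G.neighborSet v).Nonempty := ⟨a, ha⟩
  exact Set.ncard_pos (Set.toFinite (G.neighborSet v)) |>.mpr this

/-- a connected graph on ≥ 2 vertices has everywhere positive degree -/
lemma one_le_deg_of_connected [Fintype V] {G : SimpleGraph V} (h : G.Connected)
    (hcard : 1 < Fintype.card V) (v : V) : 1 ≤ deg G v := by
  obtain ⟨w, hw⟩ := Fintype.exists_ne_of_one_lt_card hcard v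
  obtain ⟨p⟩ := h.preconnected v w
  have hnn : ¬ p.Nil := Walk.not_nil_of_ne (Ne.symm hw)
  exact one_le_deg_of_adj (Walk.adj_snd hnn)

/-- an internal vertex of a path has two distinct neighbors -/
lemma internal_two_nbrs {G : SimpleGraph V} {u w v : V} (p : G.Walk u w) (hp : p.IsPath)
    (hv : v ∈ p.support) (hu : v ≠ u) (hw : v ≠ w) :
    ∃ a b, a ≠ b ∧ G.Adj v a ∧ G.Adj v b := by
  classical
  set q := p.takeUntil v hv with hq
  set r := p.dropUntil v hv with hr
  have hpq : p = q.append r := (p.take_spec hv).symm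
  have hqn : ¬ q.reverse.Nil := Walk.not_nil_of_ne hu
  have hrn : ¬ r.Nil := Walk.not_nil_of_ne hw
  refine ⟨q.reverse.getVert 1, r.getVert 1, ?_, Walk.adj_snd hqn,
    Walk.adj_snd hrn⟩
  have hamem : q.reverse.getVert 1 ∈ q.support := by
    have : q.reverse.getVert 1 ∈ q.reverse.support := by
      rw [← Walk.cons_support_tail hqn]
      exact List.mem_cons_of_mem _ (Walk.start_mem_support _)
    rwa [Walk.support_reverse, List.mem_reverse] at this
  have hbmem : r.getVert 1 ∈ r.support.tail := by
    rw [← Walk.cons_support_tail hrn, List.tail_cons]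
    exact Walk.start_mem_support _
  have hnd : (q.support ++ r.support.tail).Nodup := by
    rw [← Walk.support_append, ← hpq]; exact hp.support_nodup
  intro hab
  exact (List.nodup_append'.mp hnd).2.2 hamem (hab ▸ hbmem)

lemma first_edge_mem {V : Type*} {G : SimpleGraph V} {a b : V} (w : G.Walk a b) (h : ¬ w.Nil) :
    s(a, w.getVert 1) ∈ w.edges := by
  rw [← Walk.cons_tail_eq w h, Walk.edges_cons]
  simp [Walk.getVert_cons_succ]

/-- a vertex on a cycle has two distinct neighbors -/
lemma cycle_two_nbrs {G : SimpleGraph V} {u v : V} (c : G.Walk u u) (hc : c.IsCycle)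
    (hv : v ∈ c.support) : ∃ a b, a ≠ b ∧ G.Adj v a ∧ G.Adj v b := by
  classical
  set c' := c.rotate v hv with hc'def
  have hc' : c'.IsCycle := hc.rotate hv
  have hnn : ¬ c'.Nil := hc'.not_nil
  have hcons := Walk.cons_tail_eq c' hnn
  have hcyc : c'.tail.IsPath ∧ s(v, c'.getVert 1) ∉ c'.tail.edges := by
    rw [← Walk.cons_isCycle_iff]
    rw [hcons]; exact hc'
    exact Walk.adj_snd hnn
  have hlen : c'.tail.length + 1 = c'.length := Walk.length_tail_add_one hnn
  have h3 : 3 ≤ c'.length := hc'.three_le_length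
  have hqn : ¬ c'.tail.Nil := by
    rw [Walk.nil_iff_length_eq]; omega
  have hqrn : ¬ c'.tail.reverse.Nil := by
    rw [Walk.nil_iff_length_eq, Walk.length_reverse]
    rw [Walk.nil_iff_length_eq] at hqn; exact hqn
  refine ⟨c'.getVert 1, c'.tail.reverse.getVert 1, ?_, Walk.adj_snd hnn,
    Walk.adj_snd hqrn⟩
  intro hab
  apply hcyc.2
  have : s(v, c'.tail.reverse.getVert 1) ∈ c'.tail.reverse.edges :=
    first_edge_mem _ hqrn
  rw [Walk.edges_reverse, List.mem_reverse] at this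
  have he : s(v, c'.getVert 1) = s(v, c'.tail.reverse.getVert 1) :=
    congrArg (fun z => s(v, z)) hab
  rw [he]; exact this
end Basics

section Lift
open SimpleGraph
variable {V W : Type*}

lemma exists_lift_walk (f : V → W) (hf : Function.Injective f) (G : SimpleGraph W) :
    ∀ {a b : W} (w : G.Walk a b), (∀ x ∈ w.support, x ∈ Set.range f) →
    ∀ {u v : V}, f u = a → f v = b →
    ∃ w' : (G.comap f).Walk u v, w'.support.map f = w.support ∧
      w'.edges.map (Sym2.map f) = w.edges := by
  intro a b w
  induction w with
  | nil =>
    intro hs u v hu hv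
    cases hf (hu.trans hv.symm)
    exact ⟨.nil, by simp [hu], by simp⟩
  | @cons a c b h w ih =>
    intro hs u v hu hv
    obtain ⟨c', hc'⟩ := hs c (by
      rw [Walk.support_cons]; exact List.mem_cons_of_mem _ (Walk.start_mem_support w))
    obtain ⟨w', hw1, hw2⟩ := ih (fun x hx => hs x (by
      rw [Walk.support_cons]; exact List.mem_cons_of_mem _ hx)) hc' hv
    have hadj : (G.comap f).Adj u c' := by rw [comap_adj, hu, hc']; exact h
    exact ⟨.cons hadj w', by simp [Walk.support_cons, hw1, hu],
      by simp [Walk.edges_cons, hw2, hu, hc']⟩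

lemma reachable_comap (f : V → W) (hf : Function.Injective f) (G : SimpleGraph W)
    {u v : V} (w : G.Walk (f u) (f v)) (hs : ∀ x ∈ w.support, x ∈ Set.range f) :
    (G.comap f).Reachable u v := by
  obtain ⟨w', -, -⟩ := exists_lift_walk f hf G w hs rfl rfl
  exact ⟨w'⟩

lemma isCycle_lift (f : V → W) (hf : Function.Injective f) (G : SimpleGraph W)
    {u : V} (c : G.Walk (f u) (f u)) (hc : c.IsCycle)
    (hs : ∀ x ∈ c.support, x ∈ Set.range f) :
    ∃ c' : (G.comap f).Walk u u, c'.IsCycle := by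
  obtain ⟨c', h1, h2⟩ := exists_lift_walk f hf G c hs rfl rfl
  refine ⟨c', ?_⟩
  have h3 := hc.three_le_length
  rw [Walk.isCycle_def] at hc ⊢
  obtain ⟨ht, hne, hnd⟩ := hc
  refine ⟨?_, ?_, ?_⟩
  · rw [Walk.isTrail_def]
    exact List.Nodup.of_map _ (h2 ▸ ht.edges_nodup)
  · intro hnil
    subst hnil
    have hlen : (1 : ℕ) = c.length + 1 := by
      simpa [Walk.length_support] using congrArg List.length h1
    omega
  · refine List.Nodup.of_map f ?_
    rw [List.map_tail, h1]
    exact hnd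

lemma deg_comap_of_bijective (f : V → W) (hf : Function.Bijective f) (G : SimpleGraph W)
    (v : V) : deg (G.comap f) v = deg G (f v) := by
  have hset : (G.comap f).neighborSet v = f ⁻¹' (G.neighborSet (f v)) := rfl
  rw [deg, deg, hset, ← Set.ncard_image_of_injective _ hf.1,
    Set.image_preimage_eq _ hf.2]

lemma isTree_comap_of_bijective (f : V → W) (hf : Function.Bijective f) (G : SimpleGraph W)
    (h : G.IsTree) : (G.comap f).IsTree := by
  constructor
  · have hne : Nonempty V := by
      have := h.isConnected.nonempty
      exact Nonempty.map (Function.surjInv hf.2) this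
    rw [SimpleGraph.connected_iff]
    refine ⟨fun x y => ?_, hne⟩
    obtain ⟨w⟩ := h.isConnected.preconnected (f x) (f y)
    exact reachable_comap f hf.1 G w (fun z _ => hf.2 z)
  · intro v c hc
    exact h.IsAcyclic (c.map ⟨f, fun hab => hab⟩)
      ((Walk.map_isCycle_iff_of_injective
        (f := (⟨f, fun hab => hab⟩ : G.comap f →g G)) hf.1).mpr hc)

end Lift

/-- the set of bipartite trees with specified degrees (minus one) on both sides -/
def TSP (m n : ℕ) (L : Fin m → ℕ) (R : Fin n → ℕ) (G : SimpleGraph (Fin m ⊕ Fin n)) : Prop :=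
  IsBipartiteSum G ∧ (∀ i, deg G (Sum.inl i) = L i + 1) ∧
    (∀ j, deg G (Sum.inr j) = R j + 1) ∧ G.IsTree

abbrev TS (m n : ℕ) (L : Fin m → ℕ) (R : Fin n → ℕ) : Type :=
  {G : SimpleGraph (Fin m ⊕ Fin n) // TSP m n L R G}

section TSbasic
open SimpleGraph

lemma TSP_sum {m n : ℕ} {L : Fin m → ℕ} {R : Fin n → ℕ} {G : SimpleGraph (Fin m ⊕ Fin n)}
    (h : TSP m n L R G) : (∑ i, L i) + (∑ j, R j) + 2 = m + n := by
  obtain ⟨-, hL, hR, ht⟩ := h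
  have hs := sum_deg_tree G ht
  rw [Fintype.sum_sum_type] at hs
  have hl : ∑ i, deg G (Sum.inl i) = (∑ i, L i) + m := by
    rw [Finset.sum_congr rfl (fun i _ => hL i), Finset.sum_add_distrib]
    simp [Finset.card_univ]
  have hr : ∑ j, deg G (Sum.inr j) = (∑ j, R j) + n := by
    rw [Finset.sum_congr rfl (fun j _ => hR j), Finset.sum_add_distrib]
    simp [Finset.card_univ]
  have hcard : Fintype.card (Fin m ⊕ Fin n) = m + n := by simp
  have hpos : 0 < Fintype.card (Fin m ⊕ Fin n) := by
    have := ht.isConnected.nonempty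
    exact Fintype.card_pos
  rw [hl, hr, hcard] at hs
  rw [hcard] at hpos
  omega

lemma TS_card_zero {m n : ℕ} {L : Fin m → ℕ} {R : Fin n → ℕ}
    (h : (∑ i, L i) + (∑ j, R j) + 2 ≠ m + n) : Nat.card (TS m n L R) = 0 := by
  have : IsEmpty (TS m n L R) := ⟨fun X => h (TSP_sum X.2)⟩
  exact Nat.card_of_isEmpty

end TSbasic
section Transfer
open SimpleGraph

lemma TSP_comap_perm {m n : ℕ} {L : Fin m → ℕ} {R : Fin n → ℕ} (σ : Equiv.Perm (Fin n))
    {G : SimpleGraph (Fin m ⊕ Fin n)} (h : TSP m n L R G) :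
    TSP m n L (R ∘ σ) (G.comap (Sum.map id ⇑σ)) := by
  have hbij : Function.Bijective (Sum.map (id : Fin m → Fin m) ⇑σ) :=
    (Function.injective_id.sumMap σ.injective).bijective_of_finite
  obtain ⟨hb, hL, hR, ht⟩ := h
  refine ⟨⟨fun a a' => ?_, fun b b' => ?_⟩, fun i => ?_, fun j => ?_, ?_⟩
  · simpa [comap_adj, Sum.map] using hb.1 a a'
  · simpa [comap_adj, Sum.map] using hb.2 (σ b) (σ b')
  · rw [deg_comap_of_bijective _ hbij]; simpa using hL i
  · rw [deg_comap_of_bijective _ hbij]; simpa using hR (σ j)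
  · exact isTree_comap_of_bijective _ hbij G ht

lemma TS_card_perm {m n : ℕ} (L : Fin m → ℕ) (R : Fin n → ℕ) (σ : Equiv.Perm (Fin n)) :
    Nat.card (TS m n L R) = Nat.card (TS m n L (R ∘ σ)) := by
  apply Nat.card_congr
  refine ⟨fun X => ⟨X.1.comap (Sum.map id ⇑σ), TSP_comap_perm σ X.2⟩,
          fun Y => ⟨Y.1.comap (Sum.map id ⇑σ.symm), ?_⟩, ?_, ?_⟩
  · have h' := TSP_comap_perm σ.symm Y.2
    have he : (R ∘ ⇑σ) ∘ ⇑σ.symm = R := by funext j; simp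
    rwa [he] at h'
  · intro X; apply Subtype.ext; ext a b
    cases a <;> cases b <;> simp [comap_adj, Sum.map]
  · intro Y; apply Subtype.ext; ext a b
    cases a <;> cases b <;> simp [comap_adj, Sum.map]

lemma TSP_comap_swap {m n : ℕ} {L : Fin m → ℕ} {R : Fin n → ℕ}
    {G : SimpleGraph (Fin m ⊕ Fin n)} (h : TSP m n L R G) :
    TSP n m R L (G.comap (Sum.swap : Fin n ⊕ Fin m → Fin m ⊕ Fin n)) := by
  have hbij : Function.Bijective (Sum.swap : Fin n ⊕ Fin m → Fin m ⊕ Fin n) :=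
    Function.bijective_iff_has_inverse.mpr ⟨Sum.swap, fun a => Sum.swap_swap a, fun a => Sum.swap_swap a⟩
  obtain ⟨hb, hL, hR, ht⟩ := h
  refine ⟨⟨fun a a' => ?_, fun b b' => ?_⟩, fun i => ?_, fun j => ?_, ?_⟩
  · simpa [comap_adj] using hb.2 a a'
  · simpa [comap_adj] using hb.1 b b'
  · rw [deg_comap_of_bijective _ hbij]; simpa using hR i
  · rw [deg_comap_of_bijective _ hbij]; simpa using hL j
  · exact isTree_comap_of_bijective _ hbij G ht

lemma TS_card_swap {m n : ℕ} (L : Fin m → ℕ) (R : Fin n → ℕ) :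
    Nat.card (TS m n L R) = Nat.card (TS n m R L) := by
  apply Nat.card_congr
  refine ⟨fun X => ⟨X.1.comap Sum.swap, TSP_comap_swap X.2⟩,
          fun Y => ⟨Y.1.comap Sum.swap, TSP_comap_swap Y.2⟩, ?_, ?_⟩
  · intro X; apply Subtype.ext; ext a b
    cases a <;> cases b <;> simp [comap_adj]
  · intro Y; apply Subtype.ext; ext a b
    cases a <;> cases b <;> simp [comap_adj]

end Transfer

section Base
open SimpleGraph

/-- the star graph : complete bipartite on `Fin m ⊕ Fin 1` -/
def starG (m : ℕ) : SimpleGraph (Fin m ⊕ Fin 1) where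
  Adj a b := a.isLeft ≠ b.isLeft
  symm := ⟨fun a b h => h.symm⟩
  loopless := ⟨fun a h => h rfl⟩

lemma TSP_adj_base {m : ℕ} {L : Fin m → ℕ} {R : Fin 1 → ℕ} (hL : ∀ i, L i = 0)
    {G : SimpleGraph (Fin m ⊕ Fin 1)} (h : TSP m 1 L R G) (a b : Fin m ⊕ Fin 1) :
    G.Adj a b ↔ (a.isLeft ≠ b.isLeft) := by
  obtain ⟨hb, hLd, hRd, ht⟩ := h
  have key : ∀ i : Fin m, G.neighborSet (Sum.inl i) = {Sum.inr 0} := by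
    intro i
    have h1 : deg G (Sum.inl i) = 1 := by rw [hLd i, hL i]
    obtain ⟨z, hz⟩ := Set.ncard_eq_one.mp h1
    have hzmem : z ∈ G.neighborSet (Sum.inl i) := by rw [hz]; rfl
    rw [hz]
    match z with
    | Sum.inl a' => exact absurd hzmem (hb.1 i a')
    | Sum.inr j => rw [Fin.fin_one_eq_zero j]
  have hadjr : ∀ (i : Fin m) (j : Fin 1), G.Adj (Sum.inl i) (Sum.inr j) := by
    intro i j
    rw [Fin.fin_one_eq_zero j]
    have : Sum.inr 0 ∈ G.neighborSet (Sum.inl i) := by rw [key i]; rfl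
    exact this
  match a, b with
  | Sum.inl a, Sum.inl b => simpa using hb.1 a b
  | Sum.inl a, Sum.inr j => simpa using hadjr a j
  | Sum.inr j, Sum.inl b => simpa using (hadjr b j).symm
  | Sum.inr j, Sum.inr j' => simpa using hb.2 j j'

lemma TSP_starG {m : ℕ} (hm : 1 ≤ m) {L : Fin m → ℕ} {R : Fin 1 → ℕ}
    (hL : ∀ i, L i = 0) (hR : R 0 = m - 1) : TSP m 1 L R (starG m) := by
  have hadj : ∀ a b, (starG m).Adj a b ↔ (a.isLeft ≠ b.isLeft) := fun a b => Iff.rfl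
  refine ⟨⟨fun a a' => by simp [hadj], fun b b' => by simp [hadj]⟩, fun i => ?_, fun j => ?_, ?_, ?_⟩
  · have : (starG m).neighborSet (Sum.inl i) = {Sum.inr 0} := by
      ext z
      match z with
      | Sum.inl a' => simp [mem_neighborSet, hadj]
      | Sum.inr j => simp [mem_neighborSet, hadj, Fin.fin_one_eq_zero j]
    rw [deg, this, Set.ncard_singleton, hL i]
  · have : (starG m).neighborSet (Sum.inr j) = Set.range Sum.inl := by
      ext z
      match z with
      | Sum.inl a' => simp [mem_neighborSet, hadj]
      | Sum.inr j' => simp [mem_neighborSet, hadj, Fin.fin_one_eq_zero j, Fin.fin_one_eq_zero j']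
    rw [deg, this, ← Set.image_univ, Set.ncard_image_of_injective _ Sum.inl_injective,
      Set.ncard_univ, Nat.card_eq_fintype_card, Fintype.card_fin, Fin.fin_one_eq_zero j, hR]
    omega
  · -- connected
    rw [connected_iff]
    have hre : ∀ x, (starG m).Reachable x (Sum.inr 0) := by
      intro x
      match x with
      | Sum.inl i => exact (by simp [hadj] : (starG m).Adj (Sum.inl i) (Sum.inr 0)).reachable
      | Sum.inr j => rw [Fin.fin_one_eq_zero j]
    exact ⟨fun x y => (hre x).trans (hre y).symm, ⟨Sum.inr 0⟩⟩
  · -- acyclic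
    intro v c hc
    have hmem : ∃ i : Fin m, Sum.inl i ∈ c.support := by
      match hv : v with
      | Sum.inl i => exact ⟨i, Walk.start_mem_support c⟩
      | Sum.inr j =>
        have hadj1 : (starG m).Adj (Sum.inr j) (c.getVert 1) := Walk.adj_snd hc.not_nil
        have hmem1 : c.getVert 1 ∈ c.support := by
          rw [← Walk.cons_support_tail hc.not_nil]
          exact List.mem_cons_of_mem _ (Walk.start_mem_support _)
        match hz : c.getVert 1 with
        | Sum.inl i => exact ⟨i, hz ▸ hmem1⟩
        | Sum.inr j' => rw [hadj, hz] at hadj1; simp at hadj1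
    obtain ⟨i, hi⟩ := hmem
    obtain ⟨a, b, hab, ha, hb⟩ := cycle_two_nbrs c hc hi
    have hfix : ∀ z, (starG m).Adj (Sum.inl i) z → z = Sum.inr 0 := by
      intro z hz
      match z with
      | Sum.inl a' => rw [hadj] at hz; simp at hz
      | Sum.inr j => rw [Fin.fin_one_eq_zero j]
    exact hab ((hfix a ha).trans (hfix b hb).symm)

lemma TS_card_base {m : ℕ} (hm : 1 ≤ m) (L : Fin m → ℕ) (R : Fin 1 → ℕ)
    (hL : ∀ i, L i = 0) (hR : R 0 = m - 1) : Nat.card (TS m 1 L R) = 1 := by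
  rw [Nat.card_eq_one_iff_unique]
  constructor
  · constructor
    rintro ⟨G₁, h₁⟩ ⟨G₂, h₂⟩
    apply Subtype.ext
    ext a b
    rw [TSP_adj_base hL h₁, TSP_adj_base hL h₂]
  · exact ⟨⟨starG m, TSP_starG hm hL hR⟩⟩

end Base
section Delete
open SimpleGraph

variable (m n : ℕ)

/-- inclusion of the smaller vertex set -/
def ιv : Fin m ⊕ Fin n → Fin m ⊕ Fin (n + 1) := Sum.map id Fin.castSucc

/-- the leaf vertex -/
def yv : Fin m ⊕ Fin (n + 1) := Sum.inr (Fin.last n)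

lemma ιv_inj : Function.Injective (ιv m n) :=
  Function.injective_id.sumMap (Fin.castSucc_injective n)

lemma yv_not_range : yv m n ∉ Set.range (ιv m n) := by
  rintro ⟨z, hz⟩
  match z with
  | Sum.inl a => exact absurd hz (by simp [ιv, yv])
  | Sum.inr j =>
    have : Fin.castSucc j = Fin.last n := by simpa [ιv, yv, Sum.map] using hz
    exact absurd this (Fin.castSucc_lt_last j).ne

lemma mem_range_ιv {z : Fin m ⊕ Fin (n + 1)} (hz : z ≠ yv m n) : z ∈ Set.range (ιv m n) := by
  match z with
  | Sum.inl a => exact ⟨Sum.inl a, rfl⟩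
  | Sum.inr j =>
    have : j ≠ Fin.last n := fun h => hz (by rw [yv, h])
    obtain ⟨j', hj'⟩ := Fin.exists_castSucc_eq.mpr this
    exact ⟨Sum.inr j', by rw [ιv]; simp [hj']⟩

variable {m n}

/-- extension of a graph by a new leaf at `yv` attached to `Sum.inl i` -/
def ExtG (i : Fin m) (G' : SimpleGraph (Fin m ⊕ Fin n)) : SimpleGraph (Fin m ⊕ Fin (n + 1)) :=
  SimpleGraph.map (⟨ιv m n, ιv_inj m n⟩ : _ ↪ _) G' ⊔ fromEdgeSet {s(yv m n, Sum.inl i)}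

lemma yv_ne_inl (i : Fin m) : yv m n ≠ Sum.inl i := by rw [yv]; simp

lemma extG_adj_iota (i : Fin m) (G' : SimpleGraph (Fin m ⊕ Fin n)) (u v : Fin m ⊕ Fin n) :
    (ExtG i G').Adj (ιv m n u) (ιv m n v) ↔ G'.Adj u v := by
  rw [ExtG, sup_adj, map_adj, fromEdgeSet_adj]
  constructor
  · rintro (⟨u', v', h, hu, hv⟩ | ⟨he, -⟩)
    · rwa [ιv_inj m n hu, ιv_inj m n hv] at h
    · exfalso
      rw [Set.mem_singleton_iff, Sym2.eq_iff] at he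
      rcases he with ⟨h1, -⟩ | ⟨-, h2⟩
      · exact yv_not_range m n ⟨u, h1⟩
      · exact yv_not_range m n ⟨v, h2⟩
  · intro h; exact Or.inl ⟨u, v, h, rfl, rfl⟩

lemma extG_adj_y (i : Fin m) (G' : SimpleGraph (Fin m ⊕ Fin n)) (z : Fin m ⊕ Fin (n + 1)) :
    (ExtG i G').Adj (yv m n) z ↔ z = Sum.inl i := by
  rw [ExtG, sup_adj, map_adj, fromEdgeSet_adj]
  constructor
  · rintro (⟨u', v', h, hu, hv⟩ | ⟨he, -⟩)
    · exact absurd ⟨u', hu⟩ (yv_not_range m n)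
    · rw [Set.mem_singleton_iff, Sym2.eq_iff] at he
      rcases he with ⟨-, h2⟩ | ⟨h1, -⟩
      · exact h2
      · exact absurd h1 (yv_ne_inl i)
  · rintro rfl
    exact Or.inr ⟨rfl, yv_ne_inl i⟩

lemma comap_extG (i : Fin m) (G' : SimpleGraph (Fin m ⊕ Fin n)) :
    (ExtG i G').comap (ιv m n) = G' := by
  ext u v
  rw [comap_adj, extG_adj_iota]

lemma extG_nbr_y (i : Fin m) (G' : SimpleGraph (Fin m ⊕ Fin n)) :
    (ExtG i G').neighborSet (yv m n) = {Sum.inl i} := by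
  ext z
  rw [mem_neighborSet, extG_adj_y]
  rfl

lemma extG_nbr_iota (i : Fin m) (G' : SimpleGraph (Fin m ⊕ Fin n)) (v : Fin m ⊕ Fin n)
    (hv : v ≠ Sum.inl i) :
    (ExtG i G').neighborSet (ιv m n v) = ιv m n '' (G'.neighborSet v) := by
  ext z
  rw [mem_neighborSet]
  constructor
  · intro hz
    have hzy : z ≠ yv m n := by
      rintro rfl
      rw [adj_comm, extG_adj_y] at hz
      exact hv (ιv_inj m n (hz.trans (rfl : Sum.inl i = ιv m n (Sum.inl i))))
    obtain ⟨w, rfl⟩ := mem_range_ιv m n hzy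
    rw [extG_adj_iota] at hz
    exact ⟨w, hz, rfl⟩
  · rintro ⟨w, hw, rfl⟩
    rw [extG_adj_iota]
    exact hw

lemma extG_nbr_inl (i : Fin m) (G' : SimpleGraph (Fin m ⊕ Fin n)) :
    (ExtG i G').neighborSet (ιv m n (Sum.inl i)) =
      insert (yv m n) (ιv m n '' (G'.neighborSet (Sum.inl i))) := by
  ext z
  rw [mem_neighborSet]
  constructor
  · intro hz
    rcases eq_or_ne z (yv m n) with rfl | hzy
    · exact Set.mem_insert _ _
    · obtain ⟨w, rfl⟩ := mem_range_ιv m n hzy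
      rw [extG_adj_iota] at hz
      exact Set.mem_insert_of_mem _ ⟨w, hz, rfl⟩
  · rintro (rfl | ⟨w, hw, rfl⟩)
    · rw [adj_comm, extG_adj_y]; rfl
    · rw [extG_adj_iota]; exact hw

end Delete
section Ext
open SimpleGraph

lemma ncard_preimage_subset_range {V W : Type*} (f : V → W) (hf : Function.Injective f)
    {t : Set W} (ht : t ⊆ Set.range f) : (f ⁻¹' t).ncard = t.ncard := by
  calc (f ⁻¹' t).ncard = (f '' (f ⁻¹' t)).ncard := (Set.ncard_image_of_injective _ hf).symm
    _ = t.ncard := by rw [Set.image_preimage_eq_of_subset ht]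

lemma sum_update_sub {m : ℕ} (L : Fin m → ℕ) (i : Fin m) (h : 1 ≤ L i) :
    ∑ i', Function.update L i (L i - 1) i' = (∑ i', L i') - 1 := by
  rw [Finset.sum_update_of_mem (Finset.mem_univ i)]
  have h2 : ∑ i', L i' = (∑ x ∈ Finset.univ \ {i}, L x) + L i :=
    (Finset.sum_eq_sum_sdiff_singleton_add (Finset.mem_univ i) L)
  omega

lemma sum_castSucc_eq {n : ℕ} (R : Fin (n+1) → ℕ) (hRlast : R (Fin.last n) = 0) :
    ∑ j : Fin n, R j.castSucc = ∑ j, R j := by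
  rw [Fin.sum_univ_castSucc (f := R), hRlast, add_zero]

lemma upd_pos {m n : ℕ} (hm : 1 ≤ m) {L : Fin m → ℕ} {R : Fin (n+1) → ℕ}
    (hRlast : R (Fin.last n) = 0) (hsL : ∑ i, L i = n) (hsR : ∑ j, R j = m - 1)
    (i : Fin m) {G' : SimpleGraph (Fin m ⊕ Fin n)}
    (hG' : TSP m n (Function.update L i (L i - 1)) (fun j => R j.castSucc) G') : 1 ≤ L i := by
  by_contra h
  have hLi : L i = 0 := by omega
  have hupd : Function.update L i (L i - 1) = L := by
    rw [show L i - 1 = L i by omega]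
    exact Function.update_eq_self i L
  have hs := TSP_sum hG'
  rw [hupd, hsL, sum_castSucc_eq R hRlast, hsR] at hs
  omega

lemma TSP_ext {m n : ℕ} (hm : 1 ≤ m) {L : Fin m → ℕ} {R : Fin (n+1) → ℕ}
    (hRlast : R (Fin.last n) = 0) (i : Fin m) (hLi : 1 ≤ L i)
    {G' : SimpleGraph (Fin m ⊕ Fin n)}
    (hG' : TSP m n (Function.update L i (L i - 1)) (fun j => R j.castSucc) G') :
    TSP m (n+1) L R (ExtG i G') := by
  obtain ⟨hb, hL', hR', ht⟩ := hG'
  refine ⟨⟨?_, ?_⟩, ?_, ?_, ?_, ?_⟩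
  · intro a a' hadj
    exact hb.1 a a' ((extG_adj_iota i G' (Sum.inl a) (Sum.inl a')).mp hadj)
  · intro b b' hadj
    induction b using Fin.lastCases with
    | last =>
      induction b' using Fin.lastCases with
      | last => exact hadj.ne rfl
      | cast b' =>
        have := (extG_adj_y i G' (Sum.inr b'.castSucc)).mp hadj
        simp at this
    | cast b =>
      induction b' using Fin.lastCases with
      | last =>
        have := (extG_adj_y i G' (Sum.inr b.castSucc)).mp hadj.symm
        simp at this
      | cast b' =>
        exact hb.2 b b' ((extG_adj_iota i G' (Sum.inr b) (Sum.inr b')).mp hadj)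
  · intro i'
    rcases eq_or_ne i' i with rfl | hne
    · rw [deg, show (Sum.inl i' : Fin m ⊕ Fin (n+1)) = ιv m n (Sum.inl i') from rfl,
        extG_nbr_inl]
      have hnot : yv m n ∉ ιv m n '' (G'.neighborSet (Sum.inl i')) := by
        rintro ⟨w, -, hw⟩
        exact yv_not_range m n ⟨w, hw⟩
      rw [Set.ncard_insert_of_notMem hnot (Set.toFinite _),
        Set.ncard_image_of_injective _ (ιv_inj m n)]
      have hdd := hL' i'
      rw [Function.update_self] at hdd
      rw [deg] at hdd
      omega
    · rw [deg, show (Sum.inl i' : Fin m ⊕ Fin (n+1)) = ιv m n (Sum.inl i') from rfl,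
        extG_nbr_iota i G' (Sum.inl i') (by simp [hne]),
        Set.ncard_image_of_injective _ (ιv_inj m n)]
      have hdd := hL' i'
      rw [Function.update_of_ne hne] at hdd
      rw [deg] at hdd
      omega
  · intro j
    induction j using Fin.lastCases with
    | last =>
      rw [deg, show (Sum.inr (Fin.last n) : Fin m ⊕ Fin (n+1)) = yv m n from rfl,
        extG_nbr_y, Set.ncard_singleton, hRlast]
    | cast j =>
      rw [deg, show (Sum.inr j.castSucc : Fin m ⊕ Fin (n+1)) = ιv m n (Sum.inr j) from rfl,
        extG_nbr_iota i G' (Sum.inr j) (by simp),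
        Set.ncard_image_of_injective _ (ιv_inj m n)]
      have hdd := hR' j
      rw [deg] at hdd
      exact hdd
  · rw [connected_iff]
    refine ⟨?_, ⟨yv m n⟩⟩
    have hre : ∀ x, (ExtG i G').Reachable x (Sum.inl i) := by
      intro x
      rcases eq_or_ne x (yv m n) with rfl | hx
      · exact ((extG_adj_y i G' (Sum.inl i)).mpr rfl).reachable
      · obtain ⟨u, rfl⟩ := mem_range_ιv m n hx
        have hreach : G'.Reachable u (Sum.inl i) := ht.isConnected.preconnected u (Sum.inl i)
        exact hreach.map
          (⟨ιv m n, fun {a b} hab => (extG_adj_iota i G' a b).mpr hab⟩ : G' →g ExtG i G')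
    exact fun x y => (hre x).trans (hre y).symm
  · intro v c hc
    rcases Classical.em (yv m n ∈ c.support) with hy | hy
    · obtain ⟨a, b, hab, ha, hb2⟩ := cycle_two_nbrs c hc hy
      rw [extG_adj_y] at ha hb2
      exact hab (ha.trans hb2.symm)
    · have hsup : ∀ x ∈ c.support, x ∈ Set.range (ιv m n) :=
        fun x hx => mem_range_ιv m n (fun h => hy (h ▸ hx))
      obtain ⟨u₀, rfl⟩ := hsup v c.start_mem_support
      have hex := isCycle_lift (ιv m n) (ιv_inj m n) (ExtG i G') c hc hsup
      rw [comap_extG] at hex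
      obtain ⟨c', hc'⟩ := hex
      exact ht.IsAcyclic c' hc'

end Ext
section Forward
open SimpleGraph

instance {V : Type*} [Finite V] : Finite (SimpleGraph V) :=
  Finite.of_injective (fun G => G.Adj)
    (fun G H h => by ext u v; exact iff_of_eq (congrFun (congrFun h u) v))

lemma TSP_comap_forward {m n : ℕ} (hm : 1 ≤ m) (hn : 1 ≤ n) {L : Fin m → ℕ}
    {R : Fin (n+1) → ℕ} (hRlast : R (Fin.last n) = 0)
    {G : SimpleGraph (Fin m ⊕ Fin (n+1))} (hG : TSP m (n+1) L R G) :
    ∃ i : Fin m, 1 ≤ L i ∧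
      TSP m n (Function.update L i (L i - 1)) (fun j => R j.castSucc) (G.comap (ιv m n)) ∧
      ExtG i (G.comap (ιv m n)) = G := by
  obtain ⟨hb, hL, hR, ht⟩ := hG
  -- the unique neighbor of the leaf
  have hdegy : deg G (yv m n) = 1 := by
    have := hR (Fin.last n)
    rw [hRlast] at this
    exact this
  obtain ⟨z, hz⟩ := Set.ncard_eq_one.mp hdegy
  have hzmem : G.Adj (yv m n) z := by
    have : z ∈ G.neighborSet (yv m n) := by rw [hz]; rfl
    exact this
  obtain ⟨i, rfl⟩ : ∃ i : Fin m, z = Sum.inl i := by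
    match z with
    | Sum.inl i => exact ⟨i, rfl⟩
    | Sum.inr j => exact absurd hzmem (hb.2 (Fin.last n) j)
  have hAdjy : ∀ w, G.Adj (yv m n) w ↔ w = Sum.inl i := by
    intro w
    rw [← mem_neighborSet, hz, Set.mem_singleton_iff]
  -- the leaf's neighbor has another neighbor
  have hz0 : (Sum.inr (Fin.castSucc ⟨0, hn⟩) : Fin m ⊕ Fin (n+1)) ≠ yv m n := by
    rw [yv]
    simp only [ne_eq, Sum.inr.injEq]
    exact (Fin.castSucc_lt_last _).ne
  have hz0i : (Sum.inr (Fin.castSucc ⟨0, hn⟩) : Fin m ⊕ Fin (n+1)) ≠ Sum.inl i := by simp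
  have hLi : 1 ≤ L i := by
    by_contra hcon
    have hLi0 : L i = 0 := by omega
    have hdegi : deg G (Sum.inl i) = 1 := by rw [hL i, hLi0]
    obtain ⟨w, hw⟩ := Set.ncard_eq_one.mp hdegi
    have hyw : (yv m n) ∈ G.neighborSet (Sum.inl i) := ((hAdjy (Sum.inl i)).mpr rfl).symm
    rw [hw, Set.mem_singleton_iff] at hyw
    subst hyw
    obtain ⟨wk⟩ := ht.isConnected.preconnected (Sum.inr (Fin.castSucc ⟨0, hn⟩)) (yv m n)
    set p := wk.toPath with hp
    have hqnn : ¬ p.1.reverse.Nil := Walk.not_nil_of_ne (fun h => hz0 h.symm)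
    have hbadj : G.Adj (yv m n) (p.1.reverse.getVert 1) := Walk.adj_snd hqnn
    rw [hAdjy] at hbadj
    have hmem : Sum.inl i ∈ p.1.support := by
      have h1 : p.1.reverse.getVert 1 ∈ p.1.reverse.support := by
        rw [← Walk.cons_support_tail hqnn]
        exact List.mem_cons_of_mem _ (Walk.start_mem_support _)
      rw [hbadj, Walk.support_reverse, List.mem_reverse] at h1
      exact h1
    obtain ⟨a, b2, hab, ha, hb2⟩ := internal_two_nbrs p.1 p.2 hmem
      (fun h => hz0i h.symm) (Ne.symm (yv_ne_inl i))

    have haw : a ∈ G.neighborSet (Sum.inl i) := ha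
    have hbw : b2 ∈ G.neighborSet (Sum.inl i) := hb2
    rw [hw, Set.mem_singleton_iff] at haw hbw
    exact hab (haw.trans hbw.symm)
  -- the restricted graph
  have hnadj : ∀ v : Fin m ⊕ Fin n, G.Adj (ιv m n v) (yv m n) ↔ v = Sum.inl i := by
    intro v
    rw [adj_comm, hAdjy]
    constructor
    · intro h
      exact ιv_inj m n (h.trans (rfl : Sum.inl i = ιv m n (Sum.inl i)))
    · rintro rfl; rfl
  have hdeg1 : ∀ v : Fin m ⊕ Fin n, ¬ G.Adj (ιv m n v) (yv m n) →
      deg (G.comap (ιv m n)) v = deg G (ιv m n v) := by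
    intro v hv
    rw [deg, deg]
    exact ncard_preimage_subset_range _ (ιv_inj m n)
      (fun w hw => mem_range_ιv m n (fun h => hv (h ▸ hw)))
  have hdegi : deg (G.comap (ιv m n)) (Sum.inl i) = L i := by
    have hpre : (ιv m n) ⁻¹' (G.neighborSet (ιv m n (Sum.inl i))) =
        (ιv m n) ⁻¹' ((G.neighborSet (ιv m n (Sum.inl i))) \ {yv m n}) := by
      ext w
      simp only [Set.mem_preimage, Set.mem_diff, Set.mem_singleton_iff]
      exact ⟨fun h => ⟨h, fun hc => yv_not_range m n ⟨w, hc⟩⟩, fun h => h.1⟩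
    have hymem : yv m n ∈ G.neighborSet (ιv m n (Sum.inl i)) :=
      ((hnadj (Sum.inl i)).mpr rfl)
    rw [deg, show (G.comap (ιv m n)).neighborSet (Sum.inl i) =
      (ιv m n) ⁻¹' (G.neighborSet (ιv m n (Sum.inl i))) from rfl, hpre,
      ncard_preimage_subset_range _ (ιv_inj m n)
        (fun w hw => mem_range_ιv m n (fun h => hw.2 h)),
      Set.ncard_sdiff_singleton_of_mem hymem]
    have := hL i
    rw [deg] at this
    rw [show (Sum.inl i : Fin m ⊕ Fin (n+1)) = ιv m n (Sum.inl i) from rfl] at this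
    omega
  refine ⟨i, hLi, ⟨⟨?_, ?_⟩, ?_, ?_, ?_⟩, ?_⟩
  · exact fun a a' h => hb.1 a a' h
  · exact fun b b' h => hb.2 _ _ h
  · intro i'
    rcases eq_or_ne i' i with rfl | hne
    · rw [hdegi, Function.update_self]
      omega
    · rw [hdeg1 (Sum.inl i') (by rw [hnadj]; simp [hne]), Function.update_of_ne hne]
      exact hL i'
  · intro j
    rw [hdeg1 (Sum.inr j) (by rw [hnadj]; simp)]
    exact hR j.castSucc
  · constructor
    · rw [connected_iff]
      refine ⟨?_, ⟨Sum.inl i⟩⟩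
      intro x y
      obtain ⟨wk⟩ := ht.isConnected.preconnected (ιv m n x) (ιv m n y)
      set p := wk.toPath with hp
      have hymem : yv m n ∉ p.1.support := by
        intro hmem
        obtain ⟨a, b2, hab, ha, hb2⟩ := internal_two_nbrs p.1 p.2 hmem
          (fun h => yv_not_range m n ⟨x, h.symm⟩) (fun h => yv_not_range m n ⟨y, h.symm⟩)
        rw [hAdjy] at ha hb2
        exact hab (ha.trans hb2.symm)
      exact reachable_comap _ (ιv_inj m n) G p.1
        (fun z hz => mem_range_ιv m n (fun h => hymem (h ▸ hz)))
    · intro v c hc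
      exact ht.IsAcyclic (c.map ⟨ιv m n, fun hab => hab⟩)
        ((Walk.map_isCycle_iff_of_injective
          (f := (⟨ιv m n, fun hab => hab⟩ : G.comap (ιv m n) →g G)) (ιv_inj m n)).mpr hc)
  · ext a b
    have key : ∀ z : Fin m ⊕ Fin (n+1), z = yv m n ∨ ∃ u, ιv m n u = z := by
      intro z
      rcases Classical.em (z = yv m n) with h | h
      · exact Or.inl h
      · exact Or.inr (mem_range_ιv m n h)
    rcases key a with rfl | ⟨u, rfl⟩ <;> rcases key b with rfl | ⟨w, rfl⟩
    · exact ⟨fun h => absurd rfl h.ne, fun h => absurd rfl h.ne⟩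
    · rw [extG_adj_y, hAdjy]
    · rw [adj_comm, extG_adj_y, adj_comm, hAdjy]
    · rw [extG_adj_iota]
      rfl

end Forward
section DeleteCard
open SimpleGraph

lemma TS_card_delete {m n : ℕ} (hm : 1 ≤ m) (hn : 1 ≤ n) (L : Fin m → ℕ)
    (R : Fin (n+1) → ℕ) (hRlast : R (Fin.last n) = 0) (hsL : ∑ i, L i = n)
    (hsR : ∑ j, R j = m - 1) :
    Nat.card (TS m (n+1) L R) =
      ∑ i, Nat.card (TS m n (Function.update L i (L i - 1)) (fun j => R j.castSucc)) := by
  classical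
  letI : ∀ i : Fin m, Fintype (TS m n (Function.update L i (L i - 1)) (fun j => R j.castSucc)) :=
    fun i => Fintype.ofFinite _
  have hsig : Nat.card ((i : Fin m) ×
      TS m n (Function.update L i (L i - 1)) (fun j => R j.castSucc)) =
      ∑ i, Nat.card (TS m n (Function.update L i (L i - 1)) (fun j => R j.castSucc)) := by
    rw [Nat.card_eq_fintype_card, Fintype.card_sigma]
    exact Finset.sum_congr rfl (fun i _ => (Nat.card_eq_fintype_card).symm)
  rw [← hsig]
  symm
  apply Nat.card_eq_of_bijective
    (fun A => (⟨ExtG A.1 A.2.1,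
      TSP_ext hm hRlast A.1 (upd_pos hm hRlast hsL hsR A.1 A.2.2) A.2.2⟩ : TS m (n+1) L R))
  constructor
  · rintro ⟨i1, G1, h1⟩ ⟨i2, G2, h2⟩ heq
    have hval : ExtG i1 G1 = ExtG i2 G2 := congrArg Subtype.val heq
    have hi : i1 = i2 := by
      have h1' : (ExtG i1 G1).Adj (yv m n) (Sum.inl i1) := (extG_adj_y i1 G1 _).mpr rfl
      rw [hval, extG_adj_y] at h1'
      exact Sum.inl_injective h1'
    subst hi
    have hG12 : G1 = G2 := by rw [← comap_extG i1 G1, ← comap_extG i1 G2, hval]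
    subst hG12
    rfl
  · rintro ⟨G, hG⟩
    obtain ⟨i, hLi, hTSP, hExt⟩ := TSP_comap_forward hm hn hRlast hG
    exact ⟨⟨i, ⟨G.comap (ιv m n), hTSP⟩⟩, Subtype.ext hExt⟩

end DeleteCard
section Formula
open SimpleGraph

lemma prod_factorial_update {m : ℕ} (L : Fin m → ℕ) (i : Fin m) (hLi : 1 ≤ L i) :
    (∏ i', ((L i').factorial : ℚ)) =
      (L i) * ∏ i', ((Function.update L i (L i - 1) i').factorial : ℚ) := by
  classical
  have h1 : (∏ i', ((Function.update L i (L i - 1) i').factorial : ℚ))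
      = ∏ i', Function.update (fun k => ((L k).factorial : ℚ)) i
          (((L i - 1).factorial : ℚ)) i' := by
    apply Finset.prod_congr rfl
    intro i' _
    exact Function.apply_update (fun _ v => ((v.factorial : ℚ))) L i (L i - 1) i'
  rw [h1, Finset.prod_update_of_mem (Finset.mem_univ i)]
  have h2 : (∏ i', ((L i').factorial : ℚ)) =
      (∏ x ∈ Finset.univ \ {i}, ((L x).factorial : ℚ)) * ((L i).factorial : ℚ) :=
    Finset.prod_eq_prod_diff_singleton_mul (Finset.mem_univ i) _
  have h3 : ((L i).factorial : ℚ) = (L i) * ((L i - 1).factorial : ℚ) := by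
    exact_mod_cast (Nat.mul_factorial_pred (Nat.one_le_iff_ne_zero.mp hLi)).symm
  rw [h2, h3]
  ring

lemma prod_factorial_castSucc {n : ℕ} (R : Fin (n+1) → ℕ) (hRlast : R (Fin.last n) = 0) :
    (∏ j, ((R j).factorial : ℚ)) = ∏ j : Fin n, ((R j.castSucc).factorial : ℚ) := by
  rw [Fin.prod_univ_castSucc (f := fun j => ((R j).factorial : ℚ)), hRlast]
  simp

lemma TS_step (m n' : ℕ) (hm : 1 ≤ m) (hn' : 1 ≤ n') (L : Fin m → ℕ) (R : Fin (n'+1) → ℕ)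
    (hsL : ∑ i, L i = n') (hsR : ∑ j, R j = m - 1) (j0 : Fin (n'+1)) (hj0 : R j0 = 0)
    (IH : ∀ m₁ n₁ : ℕ, m₁ + n₁ < m + (n'+1) → 1 ≤ m₁ → 1 ≤ n₁ →
      ∀ (L₁ : Fin m₁ → ℕ) (R₁ : Fin n₁ → ℕ), (∑ i, L₁ i = n₁ - 1) → (∑ j, R₁ j = m₁ - 1) →
      (Nat.card (TS m₁ n₁ L₁ R₁) : ℚ) *
        ((∏ i, ((L₁ i).factorial : ℚ)) * (∏ j, ((R₁ j).factorial : ℚ)))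
        = ((m₁-1).factorial : ℚ) * ((n₁-1).factorial : ℚ)) :
    (Nat.card (TS m (n'+1) L R) : ℚ) *
      ((∏ i, ((L i).factorial : ℚ)) * (∏ j, ((R j).factorial : ℚ)))
      = ((m-1).factorial : ℚ) * (n'.factorial : ℚ) := by
  classical
  set σ := Equiv.swap j0 (Fin.last n') with hσ
  have hRlast : (R ∘ σ) (Fin.last n') = 0 := by
    show R (σ (Fin.last n')) = 0
    rw [hσ, Equiv.swap_apply_right]
    exact hj0
  have hsum : ∑ j, (R ∘ σ) j = m - 1 := by rw [← hsR]; exact Equiv.sum_comp σ R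
  have hprodR : (∏ j, ((R j).factorial : ℚ)) = ∏ j, (((R ∘ σ) j).factorial : ℚ) :=
    (Equiv.prod_comp σ (fun j => ((R j).factorial : ℚ))).symm
  rw [TS_card_perm L R σ, TS_card_delete hm hn' L (R ∘ σ) hRlast hsL hsum]
  rw [Nat.cast_sum, Finset.sum_mul]
  have hterm : ∀ i ∈ Finset.univ, (Nat.card (TS m n' (Function.update L i (L i - 1))
        (fun j => (R ∘ σ) j.castSucc)) : ℚ) *
      ((∏ i', ((L i').factorial : ℚ)) * (∏ j, ((R j).factorial : ℚ)))
      = (L i) * (((m-1).factorial : ℚ) * ((n'-1).factorial : ℚ)) := by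
    intro i _
    rcases Nat.eq_zero_or_pos (L i) with hLi | hLi
    · have hzero : Nat.card (TS m n' (Function.update L i (L i - 1))
          (fun j => (R ∘ σ) j.castSucc)) = 0 := by
        apply TS_card_zero
        have h1 : Function.update L i (L i - 1) = L := by
          rw [show L i - 1 = L i by omega]
          exact Function.update_eq_self i L
        rw [h1, hsL, sum_castSucc_eq _ hRlast, hsum]
        omega
      rw [hzero, hLi]
      simp
    · have hIH := IH m n' (by omega) hm hn' (Function.update L i (L i - 1))
        (fun j => (R ∘ σ) j.castSucc)
        (by rw [sum_update_sub L i hLi, hsL])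
        (by rw [sum_castSucc_eq _ hRlast, hsum])
      rw [hprodR, prod_factorial_castSucc (R ∘ σ) hRlast, prod_factorial_update L i hLi]
      rw [← hIH]
      ring
  rw [Finset.sum_congr rfl hterm, ← Finset.sum_mul]
  have hcast : (∑ i, ((L i : ℚ))) = (n' : ℚ) := by
    rw [← Nat.cast_sum, hsL]
  rw [hcast]
  have hfac : (n'.factorial : ℚ) = n' * ((n' - 1).factorial : ℚ) := by
    exact_mod_cast (Nat.mul_factorial_pred (Nat.one_le_iff_ne_zero.mp hn')).symm
  rw [hfac]
  ring

theorem TS_formula : ∀ (k m n : ℕ), m + n = k → 1 ≤ m → 1 ≤ n →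
    ∀ (L : Fin m → ℕ) (R : Fin n → ℕ), (∑ i, L i = n - 1) → (∑ j, R j = m - 1) →
    (Nat.card (TS m n L R) : ℚ) *
      ((∏ i, ((L i).factorial : ℚ)) * (∏ j, ((R j).factorial : ℚ)))
      = ((m-1).factorial : ℚ) * ((n-1).factorial : ℚ) := by
  intro k
  induction k using Nat.strong_induction_on with
  | _ k IH =>
  intro m n hk hm hn L R hsL hsR
  obtain ⟨n', rfl⟩ : ∃ n', n = n' + 1 := ⟨n - 1, by omega⟩
  rcases Nat.eq_zero_or_pos n' with rfl | hn'
  · -- base case n = 1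
    have hL0 : ∀ i, L i = 0 := by
      intro i
      have h0 : ∑ i, L i = 0 := by simpa using hsL
      exact Finset.sum_eq_zero_iff.mp h0 i (Finset.mem_univ i)
    have hR0 : R 0 = m - 1 := by
      have := hsR
      rwa [Fin.sum_univ_one] at this
    rw [TS_card_base hm L R hL0 hR0]
    simp [hL0, Fin.prod_univ_one, hR0]
  · by_cases hex : ∃ j, R j = 0
    · obtain ⟨j0, hj0⟩ := hex
      have hstep := TS_step m n' hm hn' L R (by simpa using hsL) hsR j0 hj0
        (fun m₁ n₁ hlt h1 h2 L₁ R₁ hL₁ hR₁ =>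
          IH (m₁ + n₁) (by omega) m₁ n₁ rfl h1 h2 L₁ R₁ hL₁ hR₁)
      simpa using hstep
    · push_neg at hex
      have hRpos : ∀ j, 1 ≤ R j := fun j => by have := hex j; omega
      have hmn : n' + 1 ≤ m - 1 := by
        have h1 : n' + 1 ≤ ∑ j, R j := by
          calc n' + 1 = ∑ _j : Fin (n'+1), 1 := by simp
            _ ≤ ∑ j, R j := Finset.sum_le_sum (fun j _ => hRpos j)
        omega
      obtain ⟨i0, hi0⟩ : ∃ i, L i = 0 := by
        by_contra hc
        push_neg at hc
        have hL1 : ∀ i, 1 ≤ L i := fun i => by have := hc i; omega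
        have h1 : m ≤ ∑ i, L i := by
          calc m = ∑ _i : Fin m, 1 := by simp
            _ ≤ ∑ i, L i := Finset.sum_le_sum (fun i _ => hL1 i)
        have h2 : ∑ i, L i = n' := by simpa using hsL
        omega
      obtain ⟨m', rfl⟩ : ∃ m', m = m' + 1 := ⟨m - 1, by omega⟩
      rw [TS_card_swap L R]
      have hstep := TS_step (n'+1) m' (by omega) (by omega) R L
        (by simpa using hsR) (by simpa using hsL) i0 hi0
        (fun m₁ n₁ hlt h1 h2 L₁ R₁ hL₁ hR₁ =>
          IH (m₁ + n₁) (by omega) m₁ n₁ rfl h1 h2 L₁ R₁ hL₁ hR₁)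
      simp only [Nat.add_sub_cancel] at hstep ⊢
      linear_combination hstep

end Formula

end TreeCountingAux

section Main
open SimpleGraph

/-- Tree Counting Theorem: the number of bipartite trees on `V_L ⊔ V_R` with
`|V_L| = v_L`, `|V_R| = v_R = 1 + ∑ L_i`, where the `i`-th left vertex has degree
`L_i + 1`, equals `((v_R - 1)! / ∏ L_i!) · v_R^(v_L - 1)`. -/
theorem tree_counting (vL : ℕ) (hvL : 0 < vL) (L : Fin vL → ℕ)
    (vR : ℕ) (hvR : vR = 1 + ∑ i, L i) :
    (Nat.card {G : SimpleGraph (Fin vL ⊕ Fin vR) //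
        IsBipartiteSum G ∧ (∀ i : Fin vL, deg G (Sum.inl i) = L i + 1) ∧ G.IsTree} : ℚ)
      = ((vR - 1).factorial : ℚ) / (∏ i, ((L i).factorial : ℚ))
        * (vR : ℚ) ^ (vL - 1) := by
  classical
  have hvR1 : 1 ≤ vR := by omega
  have hsL : ∑ i, L i = vR - 1 := by omega
  letI : ∀ r : Fin vR → ℕ, Fintype (TS vL vR L r) := fun r => Fintype.ofFinite _
  have hpart : Nat.card {G : SimpleGraph (Fin vL ⊕ Fin vR) //
        IsBipartiteSum G ∧ (∀ i : Fin vL, deg G (Sum.inl i) = L i + 1) ∧ G.IsTree}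
      = ∑ r ∈ Finset.piAntidiag (Finset.univ : Finset (Fin vR)) (vL - 1),
          Nat.card (TS vL vR L r) := by
    have h1 : Nat.card ((r : ↥(Finset.piAntidiag (Finset.univ : Finset (Fin vR)) (vL - 1))) ×
        TS vL vR L r.1)
        = ∑ r ∈ Finset.piAntidiag (Finset.univ : Finset (Fin vR)) (vL - 1),
            Nat.card (TS vL vR L r) := by
      rw [Nat.card_eq_fintype_card, Fintype.card_sigma,
        ← Finset.sum_coe_sort (Finset.piAntidiag (Finset.univ : Finset (Fin vR)) (vL - 1))
          (fun r => Nat.card (TS vL vR L r))]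
      exact Finset.sum_congr rfl fun r _ => Nat.card_eq_fintype_card.symm
    rw [← h1]
    symm
    apply Nat.card_eq_of_bijective
      (fun X => ⟨X.2.1, X.2.2.1, X.2.2.2.1, X.2.2.2.2.2⟩)
    constructor
    · rintro ⟨⟨r1, hr1⟩, G1, hb1, hdL1, hdR1, ht1⟩ ⟨⟨r2, hr2⟩, G2, hb2, hdL2, hdR2, ht2⟩ heq
      have hG : G1 = G2 := congrArg Subtype.val heq
      subst hG
      have hr : r1 = r2 := funext fun j => by
        have e1 : deg G1 (Sum.inr j) = r1 j + 1 := hdR1 j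
        have e2 : deg G1 (Sum.inr j) = r2 j + 1 := hdR2 j
        omega
      subst hr
      rfl
    · rintro ⟨G, hb, hdL, ht⟩
      have hc2 : 1 < Fintype.card (Fin vL ⊕ Fin vR) := by simp; omega
      have hdegpos : ∀ j, 1 ≤ deg G (Sum.inr j) := fun j =>
        one_le_deg_of_connected ht.isConnected hc2 (Sum.inr j)
      have hsum := sum_deg_tree G ht
      rw [Fintype.sum_sum_type] at hsum
      have hsleft : ∑ i, deg G (Sum.inl i) = (vR - 1) + vL := by
        rw [Finset.sum_congr rfl (fun i _ => hdL i), Finset.sum_add_distrib]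
        simp [hsL]
      have hcardV : Fintype.card (Fin vL ⊕ Fin vR) = vL + vR := by simp
      rw [hcardV, hsleft] at hsum
      have hdegr : ∀ j, deg G (Sum.inr j) = (deg G (Sum.inr j) - 1) + 1 := fun j => by
        have := hdegpos j
        omega
      have hsr : ∑ j, (deg G (Sum.inr j) - 1) = vL - 1 := by
        have h2 : ∑ j, ((deg G (Sum.inr j) - 1) + 1) = ∑ j, deg G (Sum.inr j) :=
          Finset.sum_congr rfl (fun j _ => (hdegr j).symm)
        rw [Finset.sum_add_distrib] at h2
        simp only [Finset.sum_const, Finset.card_univ, Fintype.card_fin, smul_eq_mul,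
          mul_one] at h2
        omega
      refine ⟨⟨⟨fun j => deg G (Sum.inr j) - 1, ?_⟩, ⟨G, hb, hdL, hdegr, ht⟩⟩, rfl⟩
      rw [Finset.mem_piAntidiag]
      exact ⟨hsr, fun j _ => Finset.mem_univ j⟩
  rw [hpart, Nat.cast_sum]
  have hL0 : (∏ i, ((L i).factorial : ℚ)) ≠ 0 := by
    apply Finset.prod_ne_zero_iff.mpr
    intro i _
    exact_mod_cast (Nat.factorial_pos (L i)).ne'
  have hms : ∀ r : Fin vR → ℕ, (∑ j, r j = vL - 1) →
      ((Nat.multinomial Finset.univ r : ℕ) : ℚ) * (∏ j, ((r j).factorial : ℚ))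
        = (((vL-1).factorial : ℕ) : ℚ) := by
    intro r hr
    have h2 : (∏ j, (r j).factorial) * Nat.multinomial Finset.univ r = (vL - 1).factorial :=
      (Nat.multinomial_spec _ r).trans (by rw [hr])
    exact_mod_cast (mul_comm ((Nat.multinomial Finset.univ r)) (∏ j, (r j).factorial)) ▸ h2
  have hterm : ∀ r ∈ Finset.piAntidiag (Finset.univ : Finset (Fin vR)) (vL - 1),
      (Nat.card (TS vL vR L r) : ℚ)
        = ((vR - 1).factorial : ℚ) / (∏ i, ((L i).factorial : ℚ))
          * ((Nat.multinomial Finset.univ r : ℕ) : ℚ) := by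
    intro r hr
    rw [Finset.mem_piAntidiag] at hr
    have hr0 : (∏ j, ((r j).factorial : ℚ)) ≠ 0 := by
      apply Finset.prod_ne_zero_iff.mpr
      intro j _
      exact_mod_cast (Nat.factorial_pos (r j)).ne'
    have hform := TS_formula (vL + vR) vL vR rfl hvL hvR1 L r hsL (by rw [hr.1])
    have hmsr := hms r hr.1
    rw [div_mul_eq_mul_div, eq_div_iff hL0]
    apply mul_right_cancel₀ hr0
    linear_combination hform - (((vR - 1).factorial : ℚ)) * hmsr
  rw [Finset.sum_congr rfl hterm, ← Finset.mul_sum]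
  have hpow : ∑ r ∈ Finset.piAntidiag (Finset.univ : Finset (Fin vR)) (vL - 1),
      ((Nat.multinomial Finset.univ r : ℕ) : ℚ) = (vR : ℚ) ^ (vL - 1) := by
    have h := Finset.sum_pow_eq_sum_piAntidiag (Finset.univ : Finset (Fin vR))
      (fun _ => (1 : ℚ)) (vL - 1)
    simp only [Finset.sum_const, Finset.card_univ, Fintype.card_fin, smul_eq_mul, nsmul_eq_mul,
      mul_one, one_pow, Finset.prod_const_one] at h
    exact h.symm
  rw [hpow]

end Main
end

section
/- Let G be a finite bipartite tree with parts V_L and V_R, where V_R is nonempty. Then G has exactly |V_R| left maximal divisions. -/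
/-- A division of a bipartite graph: a partition of the edge set into two compartments
`Lpart` and `Rpart` such that every vertex of `V_L` is incident to at most one edge of
`Lpart` and every vertex of `V_R` is incident to at most one edge of `Rpart`. -/
structure Division {α β : Type*} (G : SimpleGraph (α ⊕ β)) where
  Lpart : Set (Sym2 (α ⊕ β))
  Rpart : Set (Sym2 (α ⊕ β))
  union_eq : Lpart ∪ Rpart = G.edgeSet
  disj : Disjoint Lpart Rpart
  left_le_one : ∀ a : α, {e ∈ Lpart | Sum.inl a ∈ e}.Subsingleton
  right_le_one : ∀ b : β, {e ∈ Rpart | Sum.inr b ∈ e}.Subsingleton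

/-- A division is left maximal if every vertex of `V_L` is incident to exactly one
edge of `Lpart` (existence suffices, since a division allows at most one). -/
def Division.LeftMaximal {α β : Type*} {G : SimpleGraph (α ⊕ β)} (D : Division G) : Prop :=
  ∀ a : α, ∃ e ∈ D.Lpart, Sum.inl a ∈ e

/-- A division is right maximal if every vertex of `V_R` is incident to exactly one
edge of `Rpart`. -/
def Division.RightMaximal {α β : Type*} {G : SimpleGraph (α ⊕ β)} (D : Division G) : Prop :=
  ∀ b : β, ∃ e ∈ D.Rpart, Sum.inr b ∈ e

namespace TreeDiv

open SimpleGraph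

variable {α β : Type*} {G : SimpleGraph (α ⊕ β)}

/-- The unique path between two vertices of a tree. -/
noncomputable def tpath (ht : G.IsTree) (v w : α ⊕ β) : G.Walk v w :=
  (ht.existsUnique_path v w).choose

lemma tpath_isPath (ht : G.IsTree) (v w : α ⊕ β) : (tpath ht v w).IsPath :=
  (ht.existsUnique_path v w).choose_spec.1

lemma tpath_unique (ht : G.IsTree) {v w : α ⊕ β} (p : G.Walk v w) (hp : p.IsPath) :
    p = tpath ht v w :=
  (ht.existsUnique_path v w).choose_spec.2 p hp

lemma tpath_self (ht : G.IsTree) (v : α ⊕ β) : tpath ht v v = Walk.nil :=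
  (tpath_unique ht Walk.nil (by simp)).symm

/-- The parent of `v` with respect to root `r` : the second vertex on the unique path
from `v` to `r`. -/
noncomputable def parent (ht : G.IsTree) (r v : α ⊕ β) : α ⊕ β :=
  (tpath ht v r).getVert 1

lemma tpath_eq_cons (ht : G.IsTree) {r v : α ⊕ β} (hv : v ≠ r) :
    ∃ h : G.Adj v (parent ht r v),
      tpath ht v r = Walk.cons h (tpath ht (parent ht r v) r) := by
  obtain ⟨w, h, q, hq⟩ := Walk.exists_eq_cons_of_ne hv (tpath ht v r)
  have hw : parent ht r v = w := by
    rw [parent, hq, Walk.getVert_cons_succ, Walk.getVert_zero]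
  subst hw
  have hqp : q.IsPath := by
    have := tpath_isPath ht v r
    rw [hq] at this
    exact this.of_cons
  exact ⟨h, by rw [hq, tpath_unique ht q hqp]⟩

lemma adj_parent (ht : G.IsTree) {r v : α ⊕ β} (hv : v ≠ r) :
    G.Adj v (parent ht r v) :=
  (tpath_eq_cons ht hv).choose

lemma len_parent (ht : G.IsTree) {r v : α ⊕ β} (hv : v ≠ r) :
    (tpath ht v r).length = (tpath ht (parent ht r v) r).length + 1 := by
  obtain ⟨h, hc⟩ := tpath_eq_cons ht hv
  rw [hc, Walk.length_cons]

lemma not_both_parent (ht : G.IsTree) {r v w : α ⊕ β} (hv : v ≠ r) (hw : w ≠ r)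
    (hpv : parent ht r v = w) : parent ht r w ≠ v := by
  intro hpw
  have l1 := len_parent ht hv
  have l2 := len_parent ht hw
  rw [hpv] at l1
  rw [hpw] at l2
  omega

/-- Dichotomy: for an edge `vw` of a tree with `v ≠ r`, either `w` is the parent of `v`
or `v` is the parent of `w`. -/
lemma parent_dichotomy (ht : G.IsTree) {r v w : α ⊕ β} (hv : v ≠ r) (h : G.Adj v w) :
    parent ht r v = w ∨ (w ≠ r ∧ parent ht r w = v) := by
  letI : DecidableEq (α ⊕ β) := Classical.decEq _
  rcases Classical.em (w ∈ (tpath ht v r).support) with hw | hw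
  · left
    have h1 : (Walk.cons h (Walk.nil : G.Walk w w)).IsPath := by simp [h.ne]
    have h2 : ((tpath ht v r).takeUntil w hw).IsPath := (tpath_isPath ht v r).takeUntil hw
    have heq : (tpath ht v r).takeUntil w hw = Walk.cons h Walk.nil := by
      rw [tpath_unique ht _ h2, tpath_unique ht _ h1]
    have hspec := (tpath ht v r).take_spec hw
    rw [heq] at hspec
    rw [parent, ← hspec, Walk.cons_append, Walk.getVert_cons_succ, Walk.getVert_zero]
  · right
    have hwr : w ≠ r := by
      intro hwr
      subst hwr
      exact hw (Walk.end_mem_support _)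
    have hcons : (Walk.cons h.symm (tpath ht v r)).IsPath := (tpath_isPath ht v r).cons hw
    refine ⟨hwr, ?_⟩
    rw [parent, ← tpath_unique ht _ hcons, Walk.getVert_cons_succ, Walk.getVert_zero]

lemma neighbor_of_inl (hbip : IsBipartiteSum G) {a : α} {w : α ⊕ β}
    (h : G.Adj (Sum.inl a) w) : ∃ b, w = Sum.inr b := by
  cases w with
  | inl a' => exact absurd h (hbip.1 a a')
  | inr b => exact ⟨b, rfl⟩

lemma neighbor_of_inr (hbip : IsBipartiteSum G) {b : β} {w : α ⊕ β}
    (h : G.Adj (Sum.inr b) w) : ∃ a, w = Sum.inl a := by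
  cases w with
  | inl a => exact ⟨a, rfl⟩
  | inr b' => exact absurd h (hbip.2 b b')

lemma edge_rep (hbip : IsBipartiteSum G) {e : Sym2 (α ⊕ β)} (he : e ∈ G.edgeSet) :
    ∃ a b, e = s(Sum.inl a, Sum.inr b) ∧ G.Adj (Sum.inl a) (Sum.inr b) := by
  induction e with
  | _ x y =>
    rw [SimpleGraph.mem_edgeSet] at he
    cases x with
    | inl a =>
      cases y with
      | inl a' => exact absurd he (hbip.1 a a')
      | inr b => exact ⟨a, b, rfl, he⟩
    | inr b =>
      cases y with
      | inl a => exact ⟨a, b, Sym2.eq_swap, he.symm⟩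
      | inr b' => exact absurd he (hbip.2 b b')

lemma parent_inl_inr (ht : G.IsTree) (hbip : IsBipartiteSum G) (b : β) (a : α) :
    ∃ b', parent ht (Sum.inr b) (Sum.inl a) = Sum.inr b' :=
  neighbor_of_inl hbip (adj_parent ht (by simp))

/-- The canonical division associated to a root `b : β` : `Lpart` consists of the
edges joining each left vertex to its parent. -/
noncomputable def Fdiv (ht : G.IsTree) (hbip : IsBipartiteSum G) (b : β) : Division G where
  Lpart := {e | ∃ a : α, e = s(Sum.inl a, parent ht (Sum.inr b) (Sum.inl a))}
  Rpart := G.edgeSet \ {e | ∃ a : α, e = s(Sum.inl a, parent ht (Sum.inr b) (Sum.inl a))}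
  union_eq := by
    apply Set.union_diff_cancel
    rintro e ⟨a, rfl⟩
    exact (adj_parent ht (by simp : (Sum.inl a : α ⊕ β) ≠ Sum.inr b))
  disj := Set.disjoint_sdiff_right
  left_le_one := by
    rintro a e1 ⟨⟨a1, rfl⟩, hm1⟩ e2 ⟨⟨a2, rfl⟩, hm2⟩
    obtain ⟨b1, hb1⟩ := parent_inl_inr ht hbip b a1
    obtain ⟨b2, hb2⟩ := parent_inl_inr ht hbip b a2
    rw [Sym2.mem_iff] at hm1 hm2
    have ha1 : a1 = a := by
      rcases hm1 with h | h
      · exact (Sum.inl.injEq _ _ ▸ h.symm : _)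
      · rw [hb1] at h; exact absurd h (by simp)
    have ha2 : a2 = a := by
      rcases hm2 with h | h
      · exact (Sum.inl.injEq _ _ ▸ h.symm : _)
      · rw [hb2] at h; exact absurd h (by simp)
    rw [ha1, ha2]
  right_le_one := by
    have key : ∀ b' : β, ∀ e ∈ G.edgeSet,
        e ∉ {e | ∃ a : α, e = s(Sum.inl a, parent ht (Sum.inr b) (Sum.inl a))} →
        Sum.inr b' ∈ e →
        b' ≠ b ∧ e = s(Sum.inr b', parent ht (Sum.inr b) (Sum.inr b')) := by
      intro b' e he hnl hm
      obtain ⟨a, b2, rfl, hadj⟩ := edge_rep hbip he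
      rw [Sym2.mem_iff] at hm
      have hb2 : b2 = b' := by
        rcases hm with h | h
        · exact absurd h (by simp)
        · exact (Sum.inr.injEq _ _ ▸ h.symm : _)
      subst hb2
      have hnp : parent ht (Sum.inr b) (Sum.inl a) ≠ Sum.inr b2 := by
        intro hp
        exact hnl ⟨a, by rw [hp]⟩
      rcases parent_dichotomy ht (by simp : (Sum.inl a : α ⊕ β) ≠ Sum.inr b) hadj with
        h | ⟨h1, h2⟩
      · exact absurd h hnp
      · refine ⟨fun hb => h1 (by rw [hb]), ?_⟩
        rw [h2, Sym2.eq_swap]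
    rintro b' e1 ⟨⟨he1, hnl1⟩, hm1⟩ e2 ⟨⟨he2, hnl2⟩, hm2⟩
    rw [(key b' e1 he1 hnl1 hm1).2, (key b' e2 he2 hnl2 hm2).2]

lemma Fdiv_leftMaximal (ht : G.IsTree) (hbip : IsBipartiteSum G) (b : β) :
    (Fdiv ht hbip b).LeftMaximal := by
  intro a
  exact ⟨s(Sum.inl a, parent ht (Sum.inr b) (Sum.inl a)), ⟨a, rfl⟩, Sym2.mem_mk_left _ _⟩

lemma Division.rpart_eq {D : Division G} : D.Rpart = G.edgeSet \ D.Lpart := by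
  ext e
  constructor
  · intro he
    refine ⟨D.union_eq ▸ Set.mem_union_right _ he, fun hl => ?_⟩
    exact Set.disjoint_left.mp D.disj hl he
  · rintro ⟨he, hnl⟩
    rw [← D.union_eq] at he
    rcases he with h | h
    · exact absurd h hnl
    · exact h

lemma Division.ext' {D1 D2 : Division G} (h : D1.Lpart = D2.Lpart) : D1 = D2 := by
  have h2 : D1.Rpart = D2.Rpart := by
    rw [Division.rpart_eq, Division.rpart_eq, h]
  cases D1; cases D2
  simp only at h h2
  subst h h2
  rfl

lemma Fdiv_injective (ht : G.IsTree) (hbip : IsBipartiteSum G) :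
    Function.Injective (Fdiv ht hbip) := by
  intro b1 b2 heq
  by_contra hne
  -- the edge from `inr b2` to its parent (w.r.t. root `inr b1`)
  set e := s(Sum.inr b2, parent ht (Sum.inr b1) (Sum.inr b2)) with he
  have hb21 : (Sum.inr b2 : α ⊕ β) ≠ Sum.inr b1 := fun h => hne (Sum.inr.inj h).symm
  have heE : e ∈ G.edgeSet := adj_parent ht hb21
  have heR : e ∈ (Fdiv ht hbip b1).Rpart := by
    refine ⟨heE, ?_⟩
    rintro ⟨a, ha⟩
    rw [Sym2.eq_iff] at ha
    rcases ha with ⟨h1, _⟩ | ⟨h1, h2⟩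
    · exact absurd h1 (by simp)
    · exact not_both_parent ht (by simp : (Sum.inl a : α ⊕ β) ≠ Sum.inr b1) hb21
        h1.symm h2
  rw [heq] at heR
  obtain ⟨heE2, hnl2⟩ := heR
  obtain ⟨a, b3, hrep, hadj⟩ := edge_rep hbip heE2
  have hb3 : b3 = b2 := by
    have : (Sum.inr b2 : α ⊕ β) ∈ e := Sym2.mem_mk_left _ _
    rw [hrep, Sym2.mem_iff] at this
    rcases this with h | h
    · exact absurd h (by simp)
    · exact (Sum.inr.injEq _ _ ▸ h.symm : _)
  rw [hb3] at hrep hadj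
  have hnp : parent ht (Sum.inr b2) (Sum.inl a) ≠ Sum.inr b2 := by
    intro hp
    exact hnl2 ⟨a, by rw [hp, ← hrep]⟩
  rcases parent_dichotomy ht (by simp : (Sum.inl a : α ⊕ β) ≠ Sum.inr b2) hadj with
    h | ⟨h1, _⟩
  · exact hnp h
  · exact h1 rfl

lemma Fdiv_surjective (ht : G.IsTree) (hbip : IsBipartiteSum G)
    [Fintype α] [Fintype β] (D : Division G) (hD : D.LeftMaximal) :
    ∃ b : β, D = Fdiv ht hbip b := by
  classical
  -- choose representations of edges
  have hrep : ∀ e : G.edgeSet, ∃ a b,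
      (e : Sym2 (α ⊕ β)) = s(Sum.inl a, Sum.inr b) ∧ G.Adj (Sum.inl a) (Sum.inr b) :=
    fun e => edge_rep hbip e.2
  choose A B hAB hadjAB using hrep
  -- membership in Rpart
  have hmemR : ∀ e ∈ G.edgeSet, (e ∈ D.Rpart ↔ e ∉ D.Lpart) := by
    intro e he
    rw [Division.rpart_eq]
    exact ⟨fun h => h.2, fun h => ⟨he, h⟩⟩
  -- the owner of each edge
  set g : G.edgeSet → α ⊕ β :=
    fun e => if (e : Sym2 (α ⊕ β)) ∈ D.Lpart then Sum.inl (A e) else Sum.inr (B e) with hg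
  have hgif : ∀ e : G.edgeSet,
      g e = if (e : Sym2 (α ⊕ β)) ∈ D.Lpart then Sum.inl (A e) else Sum.inr (B e) :=
    fun e => rfl
  have hA_eq : ∀ (e : G.edgeSet) (a : α), Sum.inl a ∈ (e : Sym2 (α ⊕ β)) → A e = a := by
    intro e a hm
    rw [hAB e, Sym2.mem_iff] at hm
    rcases hm with h | h
    · exact (Sum.inl.injEq _ _ ▸ h.symm : _)
    · exact absurd h (by simp)
  have hB_eq : ∀ (e : G.edgeSet) (b : β), Sum.inr b ∈ (e : Sym2 (α ⊕ β)) → B e = b := by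
    intro e b hm
    rw [hAB e, Sym2.mem_iff] at hm
    rcases hm with h | h
    · exact absurd h (by simp)
    · exact (Sum.inr.injEq _ _ ▸ h.symm : _)
  have hgmem : ∀ e : G.edgeSet, g e ∈ (e : Sym2 (α ⊕ β)) := by
    intro e
    rw [hgif]
    by_cases h : (e : Sym2 (α ⊕ β)) ∈ D.Lpart
    · rw [if_pos h, hAB e]; exact Sym2.mem_mk_left _ _
    · rw [if_neg h, hAB e]; exact Sym2.mem_mk_right _ _
  have hginj : Function.Injective g := by
    intro e1 e2 h12
    rw [hgif e1, hgif e2] at h12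
    by_cases h1 : (e1 : Sym2 (α ⊕ β)) ∈ D.Lpart <;>
      by_cases h2 : (e2 : Sym2 (α ⊕ β)) ∈ D.Lpart
    · rw [if_pos h1, if_pos h2] at h12
      have hA : A e1 = A e2 := by simpa using h12
      apply Subtype.ext
      apply D.left_le_one (A e1)
      · exact ⟨h1, by rw [hAB e1]; exact Sym2.mem_mk_left _ _⟩
      · exact ⟨h2, by rw [hA, hAB e2]; exact Sym2.mem_mk_left _ _⟩
    · rw [if_pos h1, if_neg h2] at h12; exact absurd h12 (by simp)
    · rw [if_neg h1, if_pos h2] at h12; exact absurd h12 (by simp)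
    · rw [if_neg h1, if_neg h2] at h12
      have hB : B e1 = B e2 := by simpa using h12
      apply Subtype.ext
      apply D.right_le_one (B e1)
      · exact ⟨(hmemR _ e1.2).2 h1, by rw [hAB e1]; exact Sym2.mem_mk_right _ _⟩
      · exact ⟨(hmemR _ e2.2).2 h2, by rw [hB, hAB e2]; exact Sym2.mem_mk_right _ _⟩
  -- counting : the image of g misses exactly one vertex
  haveI : Fintype G.edgeSet := Fintype.ofFinite _
  have hcardE : Fintype.card G.edgeSet + 1 = Fintype.card (α ⊕ β) := by
    have := ht.card_edgeFinset
    rwa [SimpleGraph.edgeFinset, Set.toFinset_card] at this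
  set img : Finset (α ⊕ β) := Finset.univ.image g with himg
  have himgcard : img.card = Fintype.card G.edgeSet := by
    rw [himg, Finset.card_image_of_injective _ hginj, Finset.card_univ]
  have hinl_mem : ∀ a : α, (Sum.inl a : α ⊕ β) ∈ img := by
    intro a
    obtain ⟨e, heL, hae⟩ := hD a
    have heE : e ∈ G.edgeSet := D.union_eq ▸ Set.mem_union_left _ heL
    refine Finset.mem_image.mpr ⟨⟨e, heE⟩, Finset.mem_univ _, ?_⟩
    rw [hgif, if_pos heL, hA_eq ⟨e, heE⟩ a hae]
  have hsdcard : (Finset.univ \ img).card = 1 := by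
    rw [Finset.card_sdiff_of_subset (Finset.subset_univ _), Finset.card_univ, himgcard]
    omega
  obtain ⟨m, hm⟩ := Finset.card_eq_one.mp hsdcard
  have hm_not : m ∉ img := by
    have : m ∈ Finset.univ \ img := hm ▸ Finset.mem_singleton_self m
    exact (Finset.mem_sdiff.mp this).2
  have hm_mem : ∀ v : α ⊕ β, v ≠ m → v ∈ img := by
    intro v hv
    by_contra hvn
    have : v ∈ Finset.univ \ img := Finset.mem_sdiff.mpr ⟨Finset.mem_univ _, hvn⟩
    rw [hm, Finset.mem_singleton] at this
    exact hv this
  obtain ⟨b₀, hb₀⟩ : ∃ b₀ : β, m = Sum.inr b₀ := by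
    cases m with
    | inl a => exact absurd (hinl_mem a) hm_not
    | inr b => exact ⟨b, rfl⟩
  subst hb₀
  set r : α ⊕ β := Sum.inr b₀ with hr
  -- every edge is the parent edge of its owner
  have main : ∀ k : ℕ, ∀ v : α ⊕ β, v ≠ r →
      Fintype.card (α ⊕ β) - (tpath ht v r).length = k →
      ∀ e : G.edgeSet, g e = v → (e : Sym2 (α ⊕ β)) = s(v, parent ht r v) := by
    intro k
    induction k using Nat.strong_induction_on with
    | _ k IH =>
      intro v hv hk e hge
      -- the edge e is s(v, w) for some neighbor w
      obtain ⟨w, hew, hvw⟩ : ∃ w, (e : Sym2 (α ⊕ β)) = s(v, w) ∧ G.Adj v w := by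
        rw [hgif] at hge
        by_cases h : (e : Sym2 (α ⊕ β)) ∈ D.Lpart
        · rw [if_pos h] at hge
          refine ⟨Sum.inr (B e), ?_, ?_⟩
          · rw [hAB e, hge]
          · rw [← hge]; exact hadjAB e
        · rw [if_neg h] at hge
          refine ⟨Sum.inl (A e), ?_, ?_⟩
          · rw [hAB e, hge, Sym2.eq_swap]
          · rw [← hge]; exact (hadjAB e).symm
      rcases parent_dichotomy ht hv hvw with h | ⟨hwr, hpw⟩
      · rw [hew, h]
      · exfalso
        obtain ⟨e', hge'⟩ : ∃ e' : G.edgeSet, g e' = w := by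
          obtain ⟨e', _, hge'⟩ := Finset.mem_image.mp (hm_mem w hwr)
          exact ⟨e', hge'⟩
        have hlenv : (tpath ht v r).length < Fintype.card (α ⊕ β) :=
          (tpath_isPath ht v r).length_lt
        have hlenw : (tpath ht w r).length = (tpath ht v r).length + 1 := by
          have := len_parent ht hwr
          rwa [hpw] at this
        have hdec : Fintype.card (α ⊕ β) - (tpath ht w r).length < k := by omega
        have he' := IH _ hdec w hwr rfl e' hge'
        rw [hpw] at he'
        have hee : (e' : Sym2 (α ⊕ β)) = (e : Sym2 (α ⊕ β)) := by
          rw [he', hew, Sym2.eq_swap]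
        have : e' = e := Subtype.ext hee
        rw [this, hge] at hge'
        exact hvw.ne hge'
  -- conclude : D = Fdiv ht hbip b₀
  refine ⟨b₀, Division.ext' ?_⟩
  ext e
  constructor
  · intro heL
    have heE : e ∈ G.edgeSet := D.union_eq ▸ Set.mem_union_left _ heL
    set eW := (⟨e, heE⟩ : G.edgeSet) with heW
    have hgeW : g eW = Sum.inl (A eW) := by rw [hgif, if_pos heL]
    have := main _ (Sum.inl (A eW)) (by simp) rfl eW hgeW
    exact ⟨A eW, this⟩
  · rintro ⟨a, rfl⟩
    obtain ⟨e', heL', hae'⟩ := hD a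
    have heE' : e' ∈ G.edgeSet := D.union_eq ▸ Set.mem_union_left _ heL'
    set eW := (⟨e', heE'⟩ : G.edgeSet) with heW
    have hgeW : g eW = Sum.inl (A eW) := by rw [hgif, if_pos heL']
    have hAa : A eW = a := hA_eq eW a hae'
    have := main _ (Sum.inl (A eW)) (by simp) rfl eW hgeW
    rw [hAa] at this
    rw [← this]
    exact heL'

end TreeDiv

/-- A finite bipartite tree with `V_R` nonempty has exactly `|V_R|` left maximal
divisions. -/
theorem card_left_maximal_divisions {α β : Type*} [Fintype α] [Fintype β] [Nonempty β]
    (G : SimpleGraph (α ⊕ β)) (hbip : IsBipartiteSum G) (htree : G.IsTree) :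
    Nat.card {D : Division G // D.LeftMaximal} = Fintype.card β := by
  classical
  set F : β → {D : Division G // D.LeftMaximal} :=
    fun b => ⟨TreeDiv.Fdiv htree hbip b, TreeDiv.Fdiv_leftMaximal htree hbip b⟩ with hF
  have hbij : Function.Bijective F := by
    constructor
    · intro b1 b2 h
      exact TreeDiv.Fdiv_injective htree hbip (congrArg Subtype.val h)
    · rintro ⟨D, hD⟩
      obtain ⟨b, hb⟩ := TreeDiv.Fdiv_surjective htree hbip D hD
      exact ⟨b, Subtype.ext hb.symm⟩
  rw [← Nat.card_eq_fintype_card]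
  exact (Nat.card_congr (Equiv.ofBijective F hbij)).symm
end

section
/- In every left maximal division E = L ⊔ R of a finite bipartite tree G with parts V_L and V_R, the class R contains exactly |V_R| − 1 edges; equivalently, exactly one vertex of V_R is incident to no edge of R, and every other vertex of V_R is incident to exactly one edge of R. -/
lemma edge_form {α β : Type*} {G : SimpleGraph (α ⊕ β)} (hbip : IsBipartiteSum G)
    {e : Sym2 (α ⊕ β)} (he : e ∈ G.edgeSet) :
    ∃ a b, G.Adj (Sum.inl a) (Sum.inr b) ∧ e = s(Sum.inl a, Sum.inr b) := by
  induction e using Sym2.inductionOn with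
  | hf x y =>
    rw [SimpleGraph.mem_edgeSet] at he
    match x, y with
    | Sum.inl a, Sum.inl a' => exact absurd he (hbip.1 a a')
    | Sum.inl a, Sum.inr b => exact ⟨a, b, he, rfl⟩
    | Sum.inr b, Sum.inl a => exact ⟨a, b, he.symm, Sym2.eq_swap⟩
    | Sum.inr b, Sum.inr b' => exact absurd he (hbip.2 b b')

/-- In every left maximal division `E = L ⊔ R` of a finite bipartite tree, the
compartment `R` contains exactly `|V_R| − 1` edges; equivalently, exactly one vertex
of `V_R` is incident to no edge of `R` (and every other vertex of `V_R` is incident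
to exactly one edge of `R`, since a division allows at most one). -/
theorem left_maximal_division_red_count {α β : Type*} [Fintype α] [Fintype β]
    (G : SimpleGraph (α ⊕ β)) (hbip : IsBipartiteSum G) (htree : G.IsTree)
    (D : Division G) (hD : D.LeftMaximal) :
    D.Rpart.ncard = Fintype.card β - 1 ∧
    (∃! b : β, ∀ e ∈ D.Rpart, Sum.inr b ∉ e) := by
  classical
  have hLsub : D.Lpart ⊆ G.edgeSet := D.union_eq ▸ Set.subset_union_left
  have hRsub : D.Rpart ⊆ G.edgeSet := D.union_eq ▸ Set.subset_union_right
  -- β is nonempty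
  have hβ : Nonempty β := by
    by_contra hβ
    have hβ' : IsEmpty β := not_nonempty_iff.mp hβ
    obtain ⟨x⟩ := htree.isConnected.nonempty
    match x with
    | Sum.inr b => exact hβ'.elim b
    | Sum.inl a =>
      obtain ⟨e, heL, _⟩ := hD a
      obtain ⟨a', b, _, _⟩ := edge_form hbip (hLsub heL)
      exact hβ'.elim b
  -- choice function for left maximality
  choose f hfL hfmem using hD
  -- f is injective
  have hf_inj : Function.Injective f := by
    intro a a' h
    obtain ⟨c, d, _, he⟩ := edge_form hbip (hLsub (hfL a))
    have h1 : (Sum.inl a : α ⊕ β) = Sum.inl c := by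
      have := hfmem a; rw [he, Sym2.mem_iff] at this
      rcases this with h' | h' <;> simp_all
    have h2 : (Sum.inl a' : α ⊕ β) = Sum.inl c := by
      have := hfmem a'; rw [← h, he, Sym2.mem_iff] at this
      rcases this with h' | h' <;> simp_all
    rw [← h2] at h1; exact Sum.inl_injective h1
  -- Lpart is the range of f
  have hLrange : D.Lpart = Set.range f := by
    apply Set.Subset.antisymm
    · intro e he
      obtain ⟨a, b, _, heq⟩ := edge_form hbip (hLsub he)
      have h1 : e ∈ {e ∈ D.Lpart | Sum.inl a ∈ e} := ⟨he, by rw [heq]; simp⟩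
      have h2 : f a ∈ {e ∈ D.Lpart | Sum.inl a ∈ e} := ⟨hfL a, hfmem a⟩
      exact ⟨a, (D.left_le_one a h1 h2).symm⟩
    · rintro e ⟨a, rfl⟩; exact hfL a
  have hLcard : D.Lpart.ncard = Fintype.card α := by
    rw [hLrange, ← Set.image_univ, Set.ncard_image_of_injective _ hf_inj,
      Set.ncard_univ, Nat.card_eq_fintype_card]
  -- total edge count
  have hEcard : G.edgeSet.ncard = Fintype.card α + Fintype.card β - 1 := by
    have h1 := htree.card_edgeFinset
    rw [Fintype.card_sum] at h1
    rw [← SimpleGraph.coe_edgeFinset, Set.ncard_coe_finset]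
    omega
  have hsplit : D.Lpart.ncard + D.Rpart.ncard = Fintype.card α + Fintype.card β - 1 := by
    rw [← Set.ncard_union_eq D.disj (Set.toFinite _) (Set.toFinite _), D.union_eq, hEcard]
  have hβpos : 1 ≤ Fintype.card β := Fintype.card_pos_iff.mpr hβ
  have hRcard : D.Rpart.ncard = Fintype.card β - 1 := by omega
  refine ⟨hRcard, ?_⟩
  -- the map sending a red edge to its β endpoint
  set h : Sym2 (α ⊕ β) → β := fun e =>
    if hx : ∃ b, Sum.inr b ∈ e then hx.choose else Classical.arbitrary β with hdef
  have hmem : ∀ e ∈ D.Rpart, Sum.inr (h e) ∈ e := by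
    intro e he
    obtain ⟨a, b, _, heq⟩ := edge_form hbip (hRsub he)
    have hx : ∃ b, Sum.inr b ∈ e := ⟨b, by rw [heq]; simp⟩
    rw [hdef]; simp only [hx, dif_pos]; exact hx.choose_spec
  have hinj : Set.InjOn h D.Rpart := by
    intro e he e' he' heq
    exact D.right_le_one (h e) ⟨he, hmem e he⟩ ⟨he', heq ▸ hmem e' he'⟩
  -- image of Rpart = set of covered β vertices
  have himg : h '' D.Rpart = {b | ∃ e ∈ D.Rpart, Sum.inr b ∈ e} := by
    apply Set.Subset.antisymm
    · rintro b ⟨e, he, rfl⟩; exact ⟨e, he, hmem e he⟩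
    · rintro b ⟨e, he, hbe⟩
      refine ⟨e, he, ?_⟩
      obtain ⟨a, b', _, heq⟩ := edge_form hbip (hRsub he)
      have h1 : b = b' := by
        rw [heq, Sym2.mem_iff] at hbe; rcases hbe with h' | h' <;> simp_all
      have h2 : h e = b' := by
        have := hmem e he
        rw [heq, Sym2.mem_iff] at this; rcases this with h' | h' <;> simp_all
      rw [h1, h2]
  have hScard : {b | ∃ e ∈ D.Rpart, Sum.inr b ∈ e}.ncard = Fintype.card β - 1 := by
    rw [← himg, Set.ncard_image_of_injOn hinj, hRcard]
  have hcompl : {b | ∀ e ∈ D.Rpart, Sum.inr b ∉ e} = {b | ∃ e ∈ D.Rpart, Sum.inr b ∈ e}ᶜ := by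
    ext b; simp [not_exists]
  have hcomplcard : {b | ∀ e ∈ D.Rpart, Sum.inr b ∉ e}.ncard = 1 := by
    have := Set.ncard_add_ncard_compl {b | ∃ e ∈ D.Rpart, Sum.inr b ∈ e}
      (Set.toFinite _) (Set.toFinite _)
    rw [Nat.card_eq_fintype_card] at this
    rw [hcompl]
    omega
  obtain ⟨b, hb⟩ := Set.ncard_eq_one.mp hcomplcard
  refine ⟨b, ?_, ?_⟩
  · have : b ∈ {b | ∀ e ∈ D.Rpart, Sum.inr b ∉ e} := hb ▸ rfl
    exact this
  · intro b' hb'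
    have : b' ∈ {b | ∀ e ∈ D.Rpart, Sum.inr b ∉ e} := hb'
    rw [hb] at this; exact this
end

section
/- Let v_L be a positive integer, L = (L_1, …, L_{v_L}) a vector of non-negative integers, and v_R = 1 + Σ_{i=1}^{v_L} L_i. Let G_R be any bipartite graph on parts V_L = {1, …, v_L} and V_R = {1, …, v_R} in which the i-th vertex of V_L is incident to exactly L_i edges and every vertex of V_R is incident to at most one edge. Then the number of functions b : V_L → V_R such that the simple bipartite graph with edge set E(G_R) ∪ {{i, b(i)} : i ∈ V_L} is a tree on the full vertex set V_L ⊔ V_R equals v_R^{v_L − 1}. In particular, this number is independent of the choice of G_R. -/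
namespace BlueCount

open SimpleGraph Finset

def stepf {n : ℕ} (φ : Fin n → Option (Fin n)) (o : Option (Fin n)) : Option (Fin n) := o.bind φ

def Reaches {n : ℕ} (φ : Fin n → Option (Fin n)) (i : Fin n) : Prop :=
  ∃ k, (stepf φ)^[k] (some i) = none

def IsForest {n : ℕ} (φ : Fin n → Option (Fin n)) : Prop := ∀ i, Reaches φ i

lemma reaches_none {n} {φ : Fin n → Option (Fin n)} {i} (h : φ i = none) : Reaches φ i := by
  exact ⟨1, by simp [stepf, h]⟩

lemma reaches_of_step {n} {φ : Fin n → Option (Fin n)} {i j} (h : φ i = some j)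
    (hj : Reaches φ j) : Reaches φ i := by
  obtain ⟨k, hk⟩ := hj
  exact ⟨k + 1, by rw [Function.iterate_succ_apply]; simpa [stepf, h] using hk⟩

lemma reaches_step {n} {φ : Fin n → Option (Fin n)} {i j} (h : φ i = some j)
    (hi : Reaches φ i) : Reaches φ j := by
  obtain ⟨k, hk⟩ := hi
  match k, hk with
  | 0, hk => simp at hk
  | k + 1, hk =>
    rw [Function.iterate_succ_apply] at hk
    exact ⟨k, by simpa [stepf, h] using hk⟩

lemma not_reaches_fixed {n} {φ : Fin n → Option (Fin n)} {i} (h : φ i = some i) :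
    ¬ Reaches φ i := by
  rintro ⟨k, hk⟩
  induction k with
  | zero => simp at hk
  | succ k ih => rw [Function.iterate_succ_apply] at hk; exact ih (by simpa [stepf, h] using hk)

lemma isForest_iff_depth {n} (φ : Fin n → Option (Fin n)) :
    IsForest φ ↔ ∃ d : Fin n → ℕ, ∀ i j, φ i = some j → d j < d i := by
  constructor
  · intro h
    refine ⟨fun i => Nat.find (h i), fun i j hij => ?_⟩
    show Nat.find (h j) < Nat.find (h i)
    have h0 : Nat.find (h i) ≠ 0 := by
      intro h0
      have := Nat.find_spec (h i)
      rw [h0] at this; simp at this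
    obtain ⟨m, hm⟩ := Nat.exists_eq_succ_of_ne_zero h0
    have hspec := Nat.find_spec (h i)
    rw [hm, Function.iterate_succ_apply] at hspec
    have : (stepf φ)^[m] (some j) = none := by simpa [stepf, hij] using hspec
    have hle : Nat.find (h j) ≤ m := Nat.find_le this
    omega
  · rintro ⟨d, hd⟩ i
    have main : ∀ m (i : Fin n), d i < m → Reaches φ i := by
      intro m
      induction m with
      | zero => omega
      | succ m ih =>
        intro i him
        cases hφ : φ i with
        | none => exact reaches_none hφ
        | some j =>
          have := hd i j hφ
          exact reaches_of_step hφ (ih j (by omega))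
    exact main (d i + 1) i (by omega)


def wt {n : ℕ} (t : ℕ) (x : Fin n → ℕ) : Option (Fin n) → ℕ
  | none => t
  | some j => x j

def up {n : ℕ} : Option (Fin n) → Option (Fin (n+1)) := Option.map Fin.castSucc

def down {n : ℕ} : Option (Fin (n+1)) → Option (Fin n) :=
  fun o => o.bind (fun j => if h : j = Fin.last n then none else some (j.castPred h))

@[simp] lemma down_up {n} (o : Option (Fin n)) : down (up o) = o := by
  cases o with
  | none => rfl
  | some j =>
    simp [up, down, dif_neg (Fin.castSucc_lt_last j).ne]

lemma up_ne_some_last {n} (o : Option (Fin n)) : up o ≠ some (Fin.last n) := by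
  cases o with
  | none => simp [up]
  | some j => simpa [up] using (Fin.castSucc_lt_last j).ne

lemma up_down {n} {o : Option (Fin (n+1))} (h : o ≠ some (Fin.last n)) : up (down o) = o := by
  cases o with
  | none => rfl
  | some j =>
    have hj : j ≠ Fin.last n := by simpa using h
    simp [up, down, dif_neg hj]

lemma down_eq_some {n} {o : Option (Fin (n+1))} {j : Fin n} :
    down o = some j ↔ o = some j.castSucc := by
  cases o with
  | none => simp [down]
  | some v =>
    by_cases hv : v = Fin.last n
    · subst hv
      constructor
      · intro h; simp [down] at h
      · intro h
        exact absurd (Option.some.inj h).symm (Fin.castSucc_lt_last j).ne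
    · simp only [down, Option.bind_some, dif_neg hv, Option.some.injEq]
      constructor
      · rintro rfl; simp
      · rintro rfl; simp

def build {n : ℕ} (tgt : Option (Fin n)) (ψ : Fin n → Option (Fin n)) (S : Finset (Fin n)) :
    Fin (n+1) → Option (Fin (n+1)) :=
  fun i => if h : i = Fin.last n then up tgt
    else if i.castPred h ∈ S then some (Fin.last n) else up (ψ (i.castPred h))

@[simp] lemma build_last {n} (tgt) (ψ : Fin n → Option (Fin n)) (S) :
    build tgt ψ S (Fin.last n) = up tgt := by simp [build]

@[simp] lemma build_castSucc {n} (tgt) (ψ : Fin n → Option (Fin n)) (S) (i : Fin n) :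
    build tgt ψ S i.castSucc = if i ∈ S then some (Fin.last n) else up (ψ i) := by
  simp [build, dif_neg (Fin.castSucc_lt_last i).ne, Fin.castPred_castSucc]
  rfl



lemma up_eq_some {n} {o : Option (Fin n)} {v : Fin (n+1)} (h : up o = some v) :
    ∃ j₀, o = some j₀ ∧ v = j₀.castSucc := by
  cases o with
  | none => simp [up] at h
  | some j₀ => exact ⟨j₀, rfl, (Option.some.inj h).symm⟩

lemma forest_build {n} {tgt : Option (Fin n)} {ψ : Fin n → Option (Fin n)} {S : Finset (Fin n)}
    (hψ : IsForest ψ) (hS : ∀ i ∈ S, ψ i = tgt) : IsForest (build tgt ψ S) := by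
  obtain ⟨d, hd⟩ := (isForest_iff_depth ψ).1 hψ
  rw [isForest_iff_depth]
  refine ⟨fun v => if h : v = Fin.last n then tgt.elim 1 (fun j₀ => 2 * d j₀ + 3)
    else 2 * d (v.castPred h) + 2, ?_⟩
  intro i j hij
  dsimp only
  by_cases hi : i = Fin.last n
  · subst hi
    rw [build_last] at hij
    obtain ⟨j₀, rfl, rfl⟩ := up_eq_some hij
    rw [dif_pos rfl, dif_neg (Fin.castSucc_lt_last j₀).ne]
    simp only [Option.elim_some, Fin.castPred_castSucc]
    omega
  · have hij' : (if i.castPred hi ∈ S then some (Fin.last n) else up (ψ (i.castPred hi))) = some j := by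
      rw [← hij]; simp [build, dif_neg hi]
    rw [dif_neg hi]
    by_cases hmem : i.castPred hi ∈ S
    · rw [if_pos hmem] at hij'
      obtain rfl : Fin.last n = j := Option.some.inj hij'
      rw [dif_pos rfl]
      have := hS _ hmem
      cases tgt with
      | none => simp only [Option.elim_none]; omega
      | some j₀ =>
        have := hd _ _ this
        simp only [Option.elim_some]
        omega
    · rw [if_neg hmem] at hij'
      obtain ⟨j₀, hj₀, rfl⟩ := up_eq_some hij'
      have := hd _ _ hj₀
      rw [dif_neg (Fin.castSucc_lt_last j₀).ne]
      simp only [Fin.castPred_castSucc]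
      omega

lemma forest_unbuild {n} {φ : Fin (n+1) → Option (Fin (n+1))} (hφ : IsForest φ) :
    IsForest (fun i : Fin n => if φ i.castSucc = some (Fin.last n) then down (φ (Fin.last n))
      else down (φ i.castSucc)) := by
  obtain ⟨d, hd⟩ := (isForest_iff_depth φ).1 hφ
  rw [isForest_iff_depth]
  refine ⟨fun i => d i.castSucc, ?_⟩
  intro i j hij
  dsimp only at hij ⊢
  by_cases hc : φ i.castSucc = some (Fin.last n)
  · rw [if_pos hc] at hij
    have h1 := hd _ _ hc
    have h2 := hd _ _ (down_eq_some.1 hij)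
    omega
  · rw [if_neg hc] at hij
    exact hd _ _ (down_eq_some.1 hij)

lemma forest_ne_self {n} {φ : Fin n → Option (Fin n)} (hφ : IsForest φ) (i : Fin n) :
    φ i ≠ some i := fun h => not_reaches_fixed h (hφ i)


set_option maxHeartbeats 1000000 in
open Finset in
open scoped Classical in
theorem forest_sum : ∀ (n : ℕ) (t : ℕ) (x : Fin (n+1) → ℕ),
    ∑ φ ∈ Finset.univ.filter (fun φ : Fin (n+1) → Option (Fin (n+1)) => IsForest φ),
      ∏ i, wt t x (φ i) = t * (t + ∑ i, x i) ^ n := by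
  intro n
  induction n with
  | zero =>
    intro t x
    have hfilter : Finset.univ.filter (fun φ : Fin 1 → Option (Fin 1) => IsForest φ)
        = {fun _ => none} := by
      ext φ
      simp only [Finset.mem_filter, Finset.mem_univ, true_and, Finset.mem_singleton]
      constructor
      · intro h
        funext i
        cases hφ : φ i with
        | none => rfl
        | some j =>
          have : j = i := Subsingleton.elim _ _
          exact absurd (h i) (not_reaches_fixed (this ▸ hφ))
      · rintro rfl i
        exact ⟨1, by simp [stepf]⟩
    rw [hfilter]
    simp [wt]
  | succ n IH =>
    intro t x
    set a := x (Fin.last (n+1)) with ha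
    set X := t + ∑ i, x i with hX
    -- the triple reindexing
    have key : ∑ p ∈ Finset.univ.filter
          (fun p : (Option (Fin (n+1))) × (Fin (n+1) → Option (Fin (n+1))) × Finset (Fin (n+1)) =>
            IsForest p.2.1 ∧ ∀ i ∈ p.2.2, p.2.1 i = p.1),
          wt t x (up p.1) * ∏ i : Fin (n+1), (if i ∈ p.2.2 then a else wt t x (up (p.2.1 i)))
        = ∑ φ ∈ Finset.univ.filter (fun φ : Fin (n+2) → Option (Fin (n+2)) => IsForest φ),
          ∏ i, wt t x (φ i) := by
      refine Finset.sum_nbij' (fun p => build p.1 p.2.1 p.2.2)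
        (fun φ => (down (φ (Fin.last (n+1))),
          fun i : Fin (n+1) => if φ i.castSucc = some (Fin.last (n+1))
            then down (φ (Fin.last (n+1))) else down (φ i.castSucc),
          Finset.univ.filter (fun i : Fin (n+1) => φ i.castSucc = some (Fin.last (n+1)))))
        ?_ ?_ ?_ ?_ ?_
      · rintro ⟨tgt, ψ, S⟩ hp
        rw [Finset.mem_filter] at hp ⊢
        exact ⟨Finset.mem_univ _, forest_build hp.2.1 hp.2.2⟩
      · intro φ hφ
        rw [Finset.mem_filter] at hφ ⊢
        refine ⟨Finset.mem_univ _, forest_unbuild hφ.2, ?_⟩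
        intro i hi
        rw [Finset.mem_filter] at hi
        simp only [if_pos hi.2]
      · -- left inverse
        rintro ⟨tgt, ψ, S⟩ hp
        rw [Finset.mem_filter] at hp
        obtain ⟨-, hforest, hvalid⟩ := hp
        refine Prod.ext ?_ (Prod.ext ?_ ?_)
        · simp [build_last, down_up]
        · funext i
          simp only [build_castSucc, build_last]
          by_cases hi : i ∈ S
          · rw [if_pos hi, if_pos rfl, down_up]; exact (hvalid i hi).symm
          · rw [if_neg hi, if_neg (up_ne_some_last _), down_up]
        · simp only
          ext i
          rw [Finset.mem_filter, build_castSucc]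
          by_cases hi : i ∈ S
          · simp [hi]
          · simp [hi, up_ne_some_last]
      · -- right inverse
        intro φ hφ
        rw [Finset.mem_filter] at hφ
        funext v
        dsimp only
        by_cases hv : v = Fin.last (n+1)
        · subst hv
          rw [build_last, up_down (forest_ne_self hφ.2 _)]
        · have hv' : v = (v.castPred hv).castSucc := by simp
          rw [hv', build_castSucc]
          by_cases hc : φ (v.castPred hv).castSucc = some (Fin.last (n+1))
          · simp only [Finset.mem_filter, Finset.mem_univ, true_and, hc, if_pos]
          · simp only [Finset.mem_filter, Finset.mem_univ, true_and, hc, if_false]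
            exact up_down hc
      · -- weights
        rintro ⟨tgt, ψ, S⟩ hp
        dsimp only
        conv_rhs => rw [Fin.prod_univ_castSucc]
        simp only [build_last, build_castSucc]
        rw [mul_comm]
        congr 1
        refine Finset.prod_congr rfl ?_
        intro i _
        by_cases hi : i ∈ S
        · simp [hi, wt, ha]
        · simp [hi]
    rw [← key]
    -- now pure algebra
    have inner1 : ∀ (tgt : Option (Fin (n+1))) (ψ : Fin (n+1) → Option (Fin (n+1))),
        (∑ S : Finset (Fin (n+1)), if IsForest ψ ∧ ∀ i ∈ S, ψ i = tgt then
            wt t x (up tgt) * ∏ i, (if i ∈ S then a else wt t x (up (ψ i))) else 0)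
          = (if IsForest ψ then
              wt t x (up tgt) * ∏ i, ((if ψ i = tgt then a else 0) + wt t x (up (ψ i))) else 0) := by
      intro tgt ψ
      by_cases hf : IsForest ψ
      · rw [if_pos hf]
        simp only [hf, true_and]
        rw [← Finset.sum_filter]
        have hps : Finset.univ.filter (fun S : Finset (Fin (n+1)) => ∀ i ∈ S, ψ i = tgt)
            = (Finset.univ.filter (fun i : Fin (n+1) => ψ i = tgt)).powerset := by
          ext S
          simp [Finset.mem_powerset, Finset.subset_iff]
        rw [hps, ← Finset.mul_sum]
        congr 1
        set F := Finset.univ.filter (fun i : Fin (n+1) => ψ i = tgt) with hF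
        have step1 : ∀ S ∈ F.powerset,
            (∏ i, (if i ∈ S then a else wt t x (up (ψ i))))
              = ((∏ _i ∈ S, a) * ∏ i ∈ F \ S, wt t x (up (ψ i))) *
                  ∏ i ∈ Finset.univ \ F, wt t x (up (ψ i)) := by
          intro S hS
          rw [Finset.mem_powerset] at hS
          have e1 : (∏ i, (if i ∈ S then a else wt t x (up (ψ i))))
              = (∏ _i ∈ S, a) * ∏ i ∈ Finset.univ \ S, wt t x (up (ψ i)) := by
            rw [← Finset.prod_sdiff (Finset.subset_univ S), mul_comm]
            congr 1
            · exact Finset.prod_congr rfl (fun i hi => if_pos hi)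
            · exact Finset.prod_congr rfl
                (fun i hi => if_neg (Finset.mem_sdiff.1 hi).2)
          have e2 : (∏ i ∈ Finset.univ \ S, wt t x (up (ψ i)))
              = (∏ i ∈ F \ S, wt t x (up (ψ i))) *
                  ∏ i ∈ Finset.univ \ F, wt t x (up (ψ i)) := by
            have hsub : Finset.univ \ F ⊆ Finset.univ \ S :=
              Finset.sdiff_subset_sdiff (le_refl _) hS
            have hset : (Finset.univ \ S) \ (Finset.univ \ F) = F \ S := by
              ext i
              simp only [Finset.mem_sdiff, Finset.mem_univ, true_and, not_and, not_not]
              tauto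
            rw [← Finset.prod_sdiff hsub, hset]
          rw [e1, e2, mul_assoc]
        rw [Finset.sum_congr rfl step1, ← Finset.sum_mul, ← Finset.prod_add]
        have e3 : (∏ i, ((if ψ i = tgt then a else 0) + wt t x (up (ψ i))))
            = (∏ i ∈ F, (a + wt t x (up (ψ i)))) *
                ∏ i ∈ Finset.univ \ F, wt t x (up (ψ i)) := by
          rw [← Finset.prod_sdiff (Finset.subset_univ F), mul_comm]
          congr 1
          · refine Finset.prod_congr rfl (fun i hi => ?_)
            have hi' : ψ i = tgt := by
              have := hi
              rw [hF, Finset.mem_filter] at this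
              exact this.2
            rw [if_pos hi']
          · refine Finset.prod_congr rfl (fun i hi => ?_)
            rw [if_neg, zero_add]
            have := (Finset.mem_sdiff.1 hi).2
            rw [hF] at this
            simpa using this
        rw [e3]
      · simp [hf]
    have inner2 : ∀ tgt : Option (Fin (n+1)),
        (∑ ψ : Fin (n+1) → Option (Fin (n+1)), if IsForest ψ then
            wt t x (up tgt) * ∏ i, ((if ψ i = tgt then a else 0) + wt t x (up (ψ i))) else 0)
          = wt t x (up tgt) *
              ((((if (none : Option (Fin (n+1))) = tgt then a else 0) + t)) * X ^ n) := by
      intro tgt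
      rw [← Finset.sum_filter, ← Finset.mul_sum]
      congr 1
      have hwt : ∀ ψ : Fin (n+1) → Option (Fin (n+1)),
          (∏ i, ((if ψ i = tgt then a else 0) + wt t x (up (ψ i))))
            = ∏ i, wt ((if (none : Option (Fin (n+1))) = tgt then a else 0) + t)
                (fun j => (if (some j : Option (Fin (n+1))) = tgt then a else 0) + x j.castSucc)
                (ψ i) := by
        intro ψ
        refine Finset.prod_congr rfl (fun i _ => ?_)
        cases hψi : ψ i with
        | none => simp [wt, up]
        | some j => simp [wt, up]
      have hXeq : ((if (none : Option (Fin (n+1))) = tgt then a else 0) + t)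
          + (∑ j, ((if (some j : Option (Fin (n+1))) = tgt then a else 0) + x j.castSucc)) = X := by
        rw [Finset.sum_add_distrib]
        have hsum2 : X = t + ((∑ j : Fin (n+1), x j.castSucc) + a) := by
          rw [hX, Fin.sum_univ_castSucc]
        cases tgt with
        | none =>
          simp only [if_pos rfl]
          have : ∀ j : Fin (n+1), (if (some j : Option (Fin (n+1))) = none then a else 0) = 0 := by
            intro j; simp
          rw [Finset.sum_congr rfl (fun j _ => this j), Finset.sum_const, smul_zero, hsum2]
          simp only [if_true]
          ring
        | some j₀ =>
          have hn : (if (none : Option (Fin (n+1))) = some j₀ then a else 0) = 0 := by simp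
          have heq : (∑ j : Fin (n+1), (if (some j : Option (Fin (n+1))) = some j₀ then a else 0))
              = a := by
            have h1 : ∀ j : Fin (n+1),
                (if (some j : Option (Fin (n+1))) = some j₀ then a else 0)
                  = (if j = j₀ then a else 0) := by
              intro j
              by_cases h : j = j₀ <;> simp [h]
            rw [Finset.sum_congr rfl (fun j _ => h1 j)]
            simp
          rw [hn, heq, hsum2]
          ring
      rw [Finset.sum_congr rfl (fun ψ _ => hwt ψ), IH, hXeq]
    calc (∑ p ∈ Finset.univ.filter
          (fun p : (Option (Fin (n+1))) × (Fin (n+1) → Option (Fin (n+1))) × Finset (Fin (n+1)) =>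
            IsForest p.2.1 ∧ ∀ i ∈ p.2.2, p.2.1 i = p.1),
          wt t x (up p.1) * ∏ i : Fin (n+1), (if i ∈ p.2.2 then a else wt t x (up (p.2.1 i))))
        = ∑ tgt : Option (Fin (n+1)), ∑ ψ : Fin (n+1) → Option (Fin (n+1)),
            ∑ S : Finset (Fin (n+1)), if IsForest ψ ∧ ∀ i ∈ S, ψ i = tgt then
              wt t x (up tgt) * ∏ i, (if i ∈ S then a else wt t x (up (ψ i))) else 0 := by
          rw [Finset.sum_filter, Fintype.sum_prod_type]
          refine Finset.sum_congr rfl (fun tgt _ => ?_)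
          rw [Fintype.sum_prod_type]
      _ = ∑ tgt : Option (Fin (n+1)), wt t x (up tgt) *
            ((((if (none : Option (Fin (n+1))) = tgt then a else 0) + t)) * X ^ n) := by
          refine Finset.sum_congr rfl (fun tgt _ => ?_)
          rw [← inner2 tgt]
          exact Finset.sum_congr rfl (fun ψ _ => inner1 tgt ψ)
      _ = t * X ^ (n + 1) := by
          rw [Fintype.sum_option]
          have hn2 : wt t x (up (none : Option (Fin (n+1)))) *
              (((if (none : Option (Fin (n+1))) = none then a else 0) + t) * X ^ n)
                = t * ((a + t) * X ^ n) := by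
            simp [wt, up]
          have hs2 : ∀ j : Fin (n+1), wt t x (up (some j)) *
              (((if (none : Option (Fin (n+1))) = some j then a else 0) + t) * X ^ n)
                = x j.castSucc * (t * X ^ n) := by
            intro j; simp [wt, up]
          rw [hn2, Finset.sum_congr rfl (fun j _ => hs2 j), ← Finset.sum_mul]
          have hsum2 : X = t + ((∑ j : Fin (n+1), x j.castSucc) + a) := by
            rw [hX, Fin.sum_univ_castSucc]
          calc t * ((a + t) * X ^ n) + (∑ j : Fin (n+1), x j.castSucc) * (t * X ^ n)
              = (t * (t + ((∑ j : Fin (n+1), x j.castSucc) + a))) * X ^ n := by ring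
            _ = (t * X) * X ^ n := by rw [← hsum2]
            _ = t * X ^ (n + 1) := by ring


lemma walk_closed {V : Type*} {G : SimpleGraph V} (S : V → Prop)
    (hcl : ∀ u v, G.Adj u v → S u → S v) {u v : V} (p : G.Walk u v) (hu : S u) : S v := by
  induction p with
  | nil => exact hu
  | cons h p ih => exact ih (hcl _ _ h hu)

lemma parent_acyclic {V : Type*} {G : SimpleGraph V} (par : V → Option V) (hgt : V → ℕ)
    (hedge : ∀ u v, G.Adj u v →
      (par u = some v ∧ hgt v < hgt u) ∨ (par v = some u ∧ hgt u < hgt v)) :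
    G.IsAcyclic := by
  classical
  intro v0 c hc
  have hne : (c.support.toFinset : Finset V).Nonempty :=
    ⟨v0, by simp [SimpleGraph.Walk.start_mem_support]⟩
  obtain ⟨v, hvmem, hmax⟩ := Finset.exists_max_image c.support.toFinset hgt hne
  rw [List.mem_toFinset] at hvmem
  have hmax' : ∀ w ∈ c.support, hgt w ≤ hgt v := fun w hw => hmax w (List.mem_toFinset.2 hw)
  have hc' : (c.rotate v hvmem).IsCycle := hc.rotate hvmem
  have hsup : ∀ w ∈ (c.rotate v hvmem).support, hgt w ≤ hgt v := by
    intro w hw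
    rw [SimpleGraph.Walk.support_eq_cons] at hw
    rcases List.mem_cons.1 hw with rfl | hw
    · exact le_refl _
    · have : w ∈ c.support.tail := ((SimpleGraph.Walk.support_rotate c v hvmem).mem_iff).1 hw
      exact hmax' w (List.mem_of_mem_tail this)
  set c' := c.rotate v hvmem with hc'def
  clear_value c'
  cases c' with
  | nil => exact hc'.ne_nil rfl
  | @cons _ u₁ _ hadj p =>
    have hlen3 : 3 ≤ p.length + 1 := by
      have := hc'.three_le_length
      simpa using this
    rw [SimpleGraph.Walk.cons_isCycle_iff] at hc'
    obtain ⟨hpath, hne1⟩ := hc'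
    have hu₁ : hgt u₁ ≤ hgt v := by
      apply hsup
      rw [SimpleGraph.Walk.support_cons]
      exact List.mem_cons_of_mem _ (SimpleGraph.Walk.start_mem_support p)
    have h1 : par v = some u₁ := by
      rcases hedge v u₁ hadj with ⟨h, _⟩ | ⟨_, hlt⟩
      · exact h
      · omega
    cases hrev : p.reverse with
    | nil =>
      have h0 : p.length = 0 := by
        have := congrArg SimpleGraph.Walk.length hrev
        simpa [SimpleGraph.Walk.length_reverse] using this
      omega
    | @cons _ u₂ _ hadj2 q =>
      have hedge2 : s(v, u₂) ∈ p.edges := by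
        have : s(v, u₂) ∈ p.reverse.edges := by
          rw [hrev, SimpleGraph.Walk.edges_cons]
          exact List.mem_cons_self
        rw [SimpleGraph.Walk.edges_reverse, List.mem_reverse] at this
        exact this
      have hu₂ : hgt u₂ ≤ hgt v := by
        apply hsup
        rw [SimpleGraph.Walk.support_cons]
        exact List.mem_cons_of_mem _ (SimpleGraph.Walk.snd_mem_support_of_mem_edges p hedge2)
      have h2 : par v = some u₂ := by
        rcases hedge v u₂ hadj2 with ⟨h, _⟩ | ⟨_, hlt⟩
        · exact h
        · omega
      have : u₁ = u₂ := by
        rw [h1] at h2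
        exact Option.some.inj h2
      subst this
      exact hne1 hedge2


variable {vL vR : ℕ} (GR : SimpleGraph (Fin vL ⊕ Fin vR)) {L : Fin vL → ℕ}

open scoped Classical in
noncomputable def owner (j : Fin vR) : Option (Fin vL) :=
  if h : ∃ i, GR.Adj (Sum.inl i) (Sum.inr j) then some h.choose else none

lemma owner_unique (hdegR : ∀ j : Fin vR, deg GR (Sum.inr j) ≤ 1) {i i' : Fin vL} {j : Fin vR}
    (h : GR.Adj (Sum.inl i) (Sum.inr j)) (h' : GR.Adj (Sum.inl i') (Sum.inr j)) : i = i' := by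
  have h1 : (Sum.inl i : Fin vL ⊕ Fin vR) ∈ GR.neighborSet (Sum.inr j) := h.symm
  have h2 : (Sum.inl i' : Fin vL ⊕ Fin vR) ∈ GR.neighborSet (Sum.inr j) := h'.symm
  have := hdegR j
  rw [deg] at this
  have heq := (Set.ncard_le_one (Set.toFinite _)).1 this _ h1 _ h2
  exact Sum.inl_injective heq

lemma owner_spec (hdegR : ∀ j : Fin vR, deg GR (Sum.inr j) ≤ 1) {i : Fin vL} {j : Fin vR} :
    owner GR j = some i ↔ GR.Adj (Sum.inl i) (Sum.inr j) := by
  constructor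
  · intro h
    rw [owner] at h
    split_ifs at h with hex
    · have hcs := hex.choose_spec
      rwa [Option.some.inj h] at hcs
  · intro h
    have hex : ∃ i', GR.Adj (Sum.inl i') (Sum.inr j) := ⟨i, h⟩
    rw [owner, dif_pos hex]
    exact congrArg some (owner_unique GR hdegR hex.choose_spec h)

lemma owner_none (hdegR : ∀ j : Fin vR, deg GR (Sum.inr j) ≤ 1) {j : Fin vR} :
    owner GR j = none ↔ ∀ i, ¬ GR.Adj (Sum.inl i) (Sum.inr j) := by
  rw [owner]
  split_ifs with hex
  · simp only [iff_false_intro (Option.some_ne_none _), false_iff]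
    push_neg
    exact hex
  · push_neg at hex
    simp [hex]

variable {L : Fin vL → ℕ}

lemma card_fiber_some (hbip : IsBipartiteSum GR) (hdegL : ∀ i, deg GR (Sum.inl i) = L i)
    (hdegR : ∀ j : Fin vR, deg GR (Sum.inr j) ≤ 1) (i : Fin vL) :
    (Finset.univ.filter (fun j : Fin vR => owner GR j = some i)).card = L i := by
  classical
  have himg : GR.neighborSet (Sum.inl i)
      = Sum.inr '' {j : Fin vR | GR.Adj (Sum.inl i) (Sum.inr j)} := by
    ext v
    cases v with
    | inl a => simp [SimpleGraph.mem_neighborSet, hbip.1 i a]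
    | inr j => simp [SimpleGraph.mem_neighborSet]
  have h1 := hdegL i
  rw [deg, himg, Set.ncard_image_of_injective _ Sum.inr_injective] at h1
  have h2 : {j : Fin vR | GR.Adj (Sum.inl i) (Sum.inr j)}
      = ↑(Finset.univ.filter (fun j : Fin vR => owner GR j = some i)) := by
    ext j
    simp [owner_spec GR hdegR]
  rw [h2, Set.ncard_coe_finset] at h1
  exact h1

lemma card_fiber_none (hbip : IsBipartiteSum GR) (hdegL : ∀ i, deg GR (Sum.inl i) = L i)
    (hdegR : ∀ j : Fin vR, deg GR (Sum.inr j) ≤ 1) (hvR : vR = 1 + ∑ i, L i) :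
    (Finset.univ.filter (fun j : Fin vR => owner GR j = none)).card = 1 := by
  classical
  have hsplit := Finset.card_filter_add_card_filter_not
    (s := (Finset.univ : Finset (Fin vR))) (p := fun j => owner GR j = none)
  have hbi : (Finset.univ.filter (fun j : Fin vR => ¬ owner GR j = none))
      = Finset.univ.biUnion (fun i : Fin vL =>
          Finset.univ.filter (fun j : Fin vR => owner GR j = some i)) := by
    ext j
    simp only [Finset.mem_filter, Finset.mem_biUnion, Finset.mem_univ, true_and]
    cases h : owner GR j with
    | none => simp
    | some i => simp [h]
  have hdisj : ∀ x ∈ (Finset.univ : Finset (Fin vL)), ∀ y ∈ (Finset.univ : Finset (Fin vL)),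
      x ≠ y → Disjoint (Finset.univ.filter (fun j : Fin vR => owner GR j = some x))
        (Finset.univ.filter (fun j : Fin vR => owner GR j = some y)) := by
    intro x _ y _ hxy
    rw [Finset.disjoint_left]
    intro j hj hj'
    rw [Finset.mem_filter] at hj hj'
    rw [hj.2] at hj'
    exact hxy (Option.some.inj hj'.2)
  rw [hbi, Finset.card_biUnion hdisj] at hsplit
  have : ∀ i ∈ (Finset.univ : Finset (Fin vL)),
      (Finset.univ.filter (fun j : Fin vR => owner GR j = some i)).card = L i :=
    fun i _ => card_fiber_some GR hbip hdegL hdegR i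
  rw [Finset.sum_congr rfl this] at hsplit
  rw [Finset.card_univ, Fintype.card_fin] at hsplit
  have h2 : univ.sum L = ∑ i : Fin vL, L i := rfl
  rw [h2] at hsplit
  omega


lemma union_adj {b : Fin vL → Fin vR} {u v : Fin vL ⊕ Fin vR} :
    (SimpleGraph.fromEdgeSet (GR.edgeSet ∪
        {e | ∃ i, e = s(Sum.inl i, Sum.inr (b i))})).Adj u v ↔
      GR.Adj u v ∨ (∃ i, u = Sum.inl i ∧ v = Sum.inr (b i)) ∨
        (∃ i, v = Sum.inl i ∧ u = Sum.inr (b i)) := by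
  rw [SimpleGraph.fromEdgeSet_adj]
  constructor
  · rintro ⟨hmem, hne⟩
    rcases hmem with hred | hblue
    · left; rwa [SimpleGraph.mem_edgeSet] at hred
    · obtain ⟨i, hi⟩ := hblue
      rw [Sym2.eq_iff] at hi
      rcases hi with ⟨rfl, rfl⟩ | ⟨h1, h2⟩
      · exact Or.inr (Or.inl ⟨i, rfl, rfl⟩)
      · exact Or.inr (Or.inr ⟨i, h2, h1⟩)
  · intro h
    rcases h with hred | ⟨i, rfl, rfl⟩ | ⟨i, rfl, rfl⟩
    · exact ⟨Or.inl hred, hred.ne⟩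
    · exact ⟨Or.inr ⟨i, rfl⟩, by simp⟩
    · exact ⟨Or.inr ⟨i, Sym2.eq_swap⟩, by simp⟩

theorem tree_iff_forest (hbip : IsBipartiteSum GR)
    (hdegR : ∀ j : Fin vR, deg GR (Sum.inr j) ≤ 1)
    {r0 : Fin vR} (hr0none : owner GR r0 = none)
    (hr0uniq : ∀ j, owner GR j = none → j = r0)
    (b : Fin vL → Fin vR) :
    (SimpleGraph.fromEdgeSet (GR.edgeSet ∪
        {e | ∃ i, e = s(Sum.inl i, Sum.inr (b i))})).IsTree
      ↔ IsForest (fun i => owner GR (b i)) := by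
  set G : SimpleGraph (Fin vL ⊕ Fin vR) := SimpleGraph.fromEdgeSet (GR.edgeSet ∪
      {e | ∃ i, e = s(Sum.inl i, Sum.inr (b i))}) with hG
  set φ : Fin vL → Option (Fin vL) := fun i => owner GR (b i) with hφdef
  constructor
  · -- tree → forest
    intro htree
    by_contra hnf
    rw [IsForest] at hnf
    push_neg at hnf
    obtain ⟨i₀, hi₀⟩ := hnf
    set S : Fin vL ⊕ Fin vR → Prop := Sum.elim (fun i => ¬ Reaches φ i)
      (fun r => ∃ j, owner GR r = some j ∧ ¬ Reaches φ j) with hS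
    have hcl : ∀ u v, G.Adj u v → S u → S v := by
      intro u v hadj hu
      rcases (union_adj GR).1 hadj with hred | ⟨i, rfl, rfl⟩ | ⟨i, rfl, rfl⟩
      · cases u with
        | inl i =>
          cases v with
          | inl i' => exact absurd hred (hbip.1 i i')
          | inr r => exact ⟨i, (owner_spec GR hdegR).2 hred, hu⟩
        | inr r =>
          cases v with
          | inl i =>
            obtain ⟨j, hown, hj⟩ := hu
            have : j = i := by
              rw [(owner_spec GR hdegR).2 hred.symm] at hown
              exact Option.some.inj hown.symm
            exact this ▸ hj
          | inr r' => exact absurd hred (hbip.2 r r')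
      · -- u = inl i, v = inr (b i)
        cases hφi : φ i with
        | none => exact absurd (reaches_none hφi) hu
        | some j => exact ⟨j, hφi, fun hr => hu (reaches_of_step hφi hr)⟩
      · -- v = inl i, u = inr (b i)
        obtain ⟨j, hown, hj⟩ := hu
        have hφi : φ i = some j := hown
        exact fun hr => hj (reaches_step hφi hr)
    have hreach : G.Reachable (Sum.inl i₀) (Sum.inr r0) :=
      htree.isConnected.preconnected _ _
    obtain ⟨p⟩ := hreach
    have : S (Sum.inr r0) := walk_closed S hcl p hi₀
    obtain ⟨j, hown, -⟩ := this
    rw [hr0none] at hown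
    cases hown
  · -- forest → tree
    intro hforest
    have hreach : ∀ k (i : Fin vL), (stepf φ)^[k] (some i) = none →
        G.Reachable (Sum.inl i) (Sum.inr r0) := by
      intro k
      induction k with
      | zero => intro i h; simp at h
      | succ k ih =>
        intro i h
        rw [Function.iterate_succ_apply] at h
        have hstep : (stepf φ)^[k] (φ i) = none := by simpa [stepf] using h
        cases hφi : φ i with
        | none =>
          have hb : b i = r0 := hr0uniq _ hφi
          have hadj : G.Adj (Sum.inl i) (Sum.inr (b i)) :=
            (union_adj GR).2 (Or.inr (Or.inl ⟨i, rfl, rfl⟩))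
          rw [hb] at hadj
          exact hadj.reachable
        | some j =>
          rw [hφi] at hstep
          have h1 : G.Adj (Sum.inl i) (Sum.inr (b i)) :=
            (union_adj GR).2 (Or.inr (Or.inl ⟨i, rfl, rfl⟩))
          have h2 : G.Adj (Sum.inr (b i)) (Sum.inl j) :=
            ((union_adj GR).2 (Or.inl ((owner_spec GR hdegR).1 hφi))).symm
          exact (h1.reachable.trans h2.reachable).trans (ih j hstep)
    have haux : ∀ w, G.Reachable w (Sum.inr r0) := by
      intro w
      cases w with
      | inl i =>
        obtain ⟨k, hk⟩ := hforest i
        exact hreach k i hk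
      | inr r =>
        cases hor : owner GR r with
        | none => rw [hr0uniq r hor]
        | some i =>
          have h2 : G.Adj (Sum.inr r) (Sum.inl i) :=
            ((union_adj GR).2 (Or.inl ((owner_spec GR hdegR).1 hor))).symm
          obtain ⟨k, hk⟩ := hforest i
          exact h2.reachable.trans (hreach k i hk)
    have hpre : G.Preconnected := fun u v => (haux u).trans (haux v).symm
    have hconn : G.Connected := { preconnected := hpre, nonempty := ⟨Sum.inr r0⟩ }
    obtain ⟨d, hd⟩ := (isForest_iff_depth φ).1 hforest
    have hacyc : G.IsAcyclic := by
      apply parent_acyclic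
        (par := Sum.elim (fun i => some (Sum.inr (b i)))
          (fun r => (owner GR r).map Sum.inl))
        (hgt := Sum.elim (fun i => 2 * d i + 2)
          (fun r => (owner GR r).elim 0 (fun j => 2 * d j + 3)))
      intro u v hadj
      rcases (union_adj GR).1 hadj with hred | ⟨i, rfl, rfl⟩ | ⟨i, rfl, rfl⟩
      · cases u with
        | inl i =>
          cases v with
          | inl i' => exact absurd hred (hbip.1 i i')
          | inr r =>
            right
            have hor : owner GR r = some i := (owner_spec GR hdegR).2 hred
            constructor
            · simp [hor]
            · simp [hor]
        | inr r =>
          cases v with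
          | inl i =>
            left
            have hor : owner GR r = some i := (owner_spec GR hdegR).2 hred.symm
            constructor
            · simp [hor]
            · simp [hor]
          | inr r' => exact absurd hred (hbip.2 r r')
      · left
        refine ⟨rfl, ?_⟩
        cases hφi : φ i with
        | none =>
          have : owner GR (b i) = none := hφi
          simp [this]
        | some j =>
          have hji := hd i j hφi
          have : owner GR (b i) = some j := hφi
          simp only [Sum.elim_inr, Sum.elim_inl, this, Option.elim_some]
          omega
      · right
        refine ⟨rfl, ?_⟩
        cases hφi : φ i with
        | none =>
          have : owner GR (b i) = none := hφi
          simp [this]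
        | some j =>
          have hji := hd i j hφi
          have : owner GR (b i) = some j := hφi
          simp only [Sum.elim_inr, Sum.elim_inl, this, Option.elim_some]
          omega
    exact ⟨hconn, hacyc⟩


end BlueCount

open BlueCount in
/-- Given any red graph `G_R` (a bipartite graph in which the `i`-th left vertex has
degree `L_i` and every right vertex has degree at most one), the number of functions
`b : V_L → V_R` such that adding the blue edges `{i, b(i)}` to `G_R` yields a tree
on the full vertex set equals `v_R^(v_L − 1)`; in particular it is independent of the
choice of `G_R`. -/
theorem blue_extension_count (vL : ℕ) (hvL : 0 < vL) (L : Fin vL → ℕ)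
    (vR : ℕ) (hvR : vR = 1 + ∑ i, L i)
    (GR : SimpleGraph (Fin vL ⊕ Fin vR))
    (hbip : IsBipartiteSum GR)
    (hdegL : ∀ i : Fin vL, deg GR (Sum.inl i) = L i)
    (hdegR : ∀ j : Fin vR, deg GR (Sum.inr j) ≤ 1) :
    Nat.card {b : Fin vL → Fin vR //
        (SimpleGraph.fromEdgeSet (GR.edgeSet ∪
          {e | ∃ i : Fin vL, e = s(Sum.inl i, Sum.inr (b i))})).IsTree}
      = vR ^ (vL - 1) := by
  classical
  obtain ⟨r0, hr0⟩ := Finset.card_eq_one.1 (card_fiber_none GR hbip hdegL hdegR hvR)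
  have hr0none : owner GR r0 = none := by
    have : r0 ∈ Finset.univ.filter (fun j : Fin vR => owner GR j = none) := by
      rw [hr0]; exact Finset.mem_singleton_self r0
    exact (Finset.mem_filter.1 this).2
  have hr0uniq : ∀ j, owner GR j = none → j = r0 := by
    intro j hj
    have : j ∈ Finset.univ.filter (fun j : Fin vR => owner GR j = none) :=
      Finset.mem_filter.2 ⟨Finset.mem_univ _, hj⟩
    rw [hr0] at this
    exact Finset.mem_singleton.1 this
  have hiff := tree_iff_forest GR hbip hdegR hr0none hr0uniq
  rw [Nat.card_congr (Equiv.subtypeEquivRight hiff)]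
  rw [Nat.card_eq_fintype_card, Fintype.card_subtype]
  have hmap : ∀ b ∈ Finset.univ.filter
      (fun b : Fin vL → Fin vR => IsForest (fun i => owner GR (b i))),
      (fun b : Fin vL → Fin vR => (fun i => owner GR (b i))) b ∈
        Finset.univ.filter (fun φ : Fin vL → Option (Fin vL) => IsForest φ) := by
    intro b hb
    rw [Finset.mem_filter] at hb ⊢
    exact ⟨Finset.mem_univ _, hb.2⟩
  rw [Finset.card_eq_sum_card_fiberwise hmap]
  have hfiber : ∀ φ ∈ Finset.univ.filter (fun φ : Fin vL → Option (Fin vL) => IsForest φ),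
      ((Finset.univ.filter
          (fun b : Fin vL → Fin vR => IsForest (fun i => owner GR (b i)))).filter
        (fun b => (fun b : Fin vL → Fin vR => (fun i => owner GR (b i))) b = φ)).card
        = ∏ i, wt 1 L (φ i) := by
    intro φ hφ
    rw [Finset.mem_filter] at hφ
    have h1 : ((Finset.univ.filter
          (fun b : Fin vL → Fin vR => IsForest (fun i => owner GR (b i)))).filter
        (fun b => (fun b : Fin vL → Fin vR => (fun i => owner GR (b i))) b = φ))
        = Fintype.piFinset (fun i : Fin vL =>
            Finset.univ.filter (fun r : Fin vR => owner GR r = φ i)) := by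
      ext b
      simp only [Finset.mem_filter, Finset.mem_univ, true_and, Fintype.mem_piFinset]
      constructor
      · rintro ⟨hforest, heq⟩ i
        exact congrFun heq i
      · intro h
        have heq : (fun i => owner GR (b i)) = φ := funext h
        exact ⟨by rw [heq]; exact hφ.2, heq⟩
    rw [h1, Fintype.card_piFinset]
    refine Finset.prod_congr rfl (fun i _ => ?_)
    cases hc : φ i with
    | none =>
      rw [card_fiber_none GR hbip hdegL hdegR hvR]
      rfl
    | some j =>
      rw [card_fiber_some GR hbip hdegL hdegR j]
      rfl
  rw [Finset.sum_congr rfl hfiber]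
  obtain ⟨n, rfl⟩ : ∃ n, vL = n + 1 := ⟨vL - 1, (Nat.succ_pred_eq_of_pos hvL).symm⟩
  rw [forest_sum n 1 L, hvR]
  simp
end

section
/- Let ν be a positive integer and L_{0a}, L_{0b}, L_1, …, L_{ν−1} non-negative integers. Set L^{(1)} = (L_{0a} + L_{0b}, L_1, …, L_{ν−1}), a vector with ν components, and L^{(2)} = (L_{0a}, L_{0b}, L_1, …, L_{ν−1}), a vector with ν + 1 components; both determine the same number v_R = 1 + L_{0a} + L_{0b} + Σ_{i=1}^{ν−1} L_i of right vertices. Let G_R^{(1)} (respectively G_R^{(2)}) be the red graph on the corresponding left vertex set and on V_R = {1, …, v_R} in which each left vertex is joined to its prescribed number of right vertices taken in consecutive blocks, in the order the components are listed, so that the last right vertex v_R is incident to no red edge. Let B(L^{(I)}) denote the number of functions b from the left vertex set of L^{(I)} to V_R such that the simple bipartite graph with edge set E(G_R^{(I)}) ∪ {{i, b(i)}} is a tree on the full vertex set. Then B(L^{(2)}) = v_R · B(L^{(1)}). -/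
open Finset
open scoped Classical



/-- The "consecutive-blocks" red graph for a vector `ℓ : Fin p → ℕ` of left degrees:
the `i`-th left vertex is joined to the block of right vertices with indices in
`[∑_{i' < i} ℓ i', ∑_{i' < i} ℓ i' + ℓ i)`, so the blocks are consecutive in the order
the components are listed and (when `v_R = 1 + ∑ ℓ`) the last right vertex is incident
to no red edge. -/
def consecRed (p : ℕ) (ℓ : Fin p → ℕ) (vR : ℕ) : SimpleGraph (Fin p ⊕ Fin vR) :=
  SimpleGraph.fromEdgeSet {e | ∃ (i : Fin p) (j : Fin vR),
    e = s(Sum.inl i, Sum.inr j) ∧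
    (∑ i' ∈ Finset.univ.filter (fun i' => i' < i), ℓ i') ≤ (j : ℕ) ∧
    (j : ℕ) < (∑ i' ∈ Finset.univ.filter (fun i' => i' < i), ℓ i') + ℓ i}

/-- `Bcount p ℓ vR` is the number of functions `b` from the left vertices to the right
vertices such that adding the blue edges `{i, b(i)}` to the consecutive-blocks red graph
of `ℓ` yields a tree on the full vertex set. -/
noncomputable def Bcount (p : ℕ) (ℓ : Fin p → ℕ) (vR : ℕ) : ℕ :=
  Nat.card {b : Fin p → Fin vR //
    (SimpleGraph.fromEdgeSet ((consecRed p ℓ vR).edgeSet ∪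
      {e | ∃ i : Fin p, e = s(Sum.inl i, Sum.inr (b i))})).IsTree}

private lemma natBlock_exists (g : ℕ → ℕ) : ∀ (p j : ℕ), j < ∑ k ∈ Finset.range p, g k →
    ∃ i < p, (∑ k ∈ Finset.range i, g k) ≤ j ∧ j < (∑ k ∈ Finset.range i, g k) + g i := by
  intro p
  induction p with
  | zero => simp
  | succ p ih =>
    intro j hj
    rw [Finset.sum_range_succ] at hj
    by_cases h : j < ∑ k ∈ Finset.range p, g k
    · obtain ⟨i, hi, h1, h2⟩ := ih j h
      exact ⟨i, by omega, h1, h2⟩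
    · exact ⟨p, by omega, by omega, by omega⟩

/-- start of block `i` -/
def bstart (p : ℕ) (ℓ : Fin p → ℕ) (i : Fin p) : ℕ :=
  ∑ i' ∈ Finset.univ.filter (fun i' => i' < i), ℓ i'

/-- extension of `ℓ` to `ℕ` -/
def extl (p : ℕ) (ℓ : Fin p → ℕ) (k : ℕ) : ℕ := if h : k < p then ℓ ⟨k, h⟩ else 0

lemma bstart_eq_range (p : ℕ) (ℓ : Fin p → ℕ) (i : Fin p) :
    bstart p ℓ i = ∑ k ∈ Finset.range i.val, extl p ℓ k := by
  unfold bstart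
  refine Finset.sum_bij' (fun i' _ => (i' : ℕ)) (fun k hk => ⟨k, by
    simp only [Finset.mem_range] at hk; omega⟩) ?_ ?_ ?_ ?_ ?_
  · intro a ha
    simp only [Finset.mem_filter, Finset.mem_univ, true_and, Fin.lt_def] at ha
    simpa using ha
  · intro k hk
    simp only [Finset.mem_range] at hk
    simp only [Finset.mem_filter, Finset.mem_univ, true_and, Fin.lt_def]
    exact hk
  · intro a ha; rfl
  · intro k hk; rfl
  · intro a ha
    simp [extl, a.isLt]

lemma sum_eq_range (p : ℕ) (ℓ : Fin p → ℕ) : ∑ i, ℓ i = ∑ k ∈ Finset.range p, extl p ℓ k := by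
  rw [← Fin.sum_univ_eq_sum_range]
  apply Finset.sum_congr rfl
  intro i _
  simp [extl, i.isLt]

lemma bstart_add_le (p : ℕ) (ℓ : Fin p → ℕ) {i i' : Fin p} (h : i < i') :
    bstart p ℓ i + ℓ i ≤ bstart p ℓ i' := by
  rw [bstart_eq_range, bstart_eq_range]
  have : ℓ i = extl p ℓ i.val := by simp [extl, i.isLt]
  rw [this, ← Finset.sum_range_succ]
  exact Finset.sum_le_sum_of_subset (Finset.range_subset_range.2 (by exact h))

lemma bstart_add_le_sum (p : ℕ) (ℓ : Fin p → ℕ) (i : Fin p) :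
    bstart p ℓ i + ℓ i ≤ ∑ i', ℓ i' := by
  rw [bstart_eq_range, sum_eq_range]
  have : ℓ i = extl p ℓ i.val := by simp [extl, i.isLt]
  rw [this, ← Finset.sum_range_succ]
  exact Finset.sum_le_sum_of_subset (Finset.range_subset_range.2 i.isLt)

/-- block membership function -/
def compo (p : ℕ) (ℓ : Fin p → ℕ) (vR : ℕ) (j : Fin vR) : Option (Fin p) :=
  Fin.find? (fun i => decide (bstart p ℓ i ≤ (j : ℕ) ∧ (j : ℕ) < bstart p ℓ i + ℓ i))

lemma compo_unique (p : ℕ) (ℓ : Fin p → ℕ) {j : ℕ} {i i' : Fin p}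
    (h : bstart p ℓ i ≤ j ∧ j < bstart p ℓ i + ℓ i)
    (h' : bstart p ℓ i' ≤ j ∧ j < bstart p ℓ i' + ℓ i') : i = i' := by
  rcases lt_trichotomy i i' with hlt | he | hgt
  · have := bstart_add_le p ℓ hlt; omega
  · exact he
  · have := bstart_add_le p ℓ hgt; omega

lemma compo_eq_some_iff {p : ℕ} {ℓ : Fin p → ℕ} {vR : ℕ} {j : Fin vR} {i : Fin p} :
    compo p ℓ vR j = some i ↔ bstart p ℓ i ≤ (j : ℕ) ∧ (j : ℕ) < bstart p ℓ i + ℓ i := by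
  constructor
  · intro h
    simpa using (Fin.find?_eq_some_iff.1 h).1
  · intro h
    rw [compo, Fin.find?_eq_some_iff]
    refine ⟨by simpa using h, fun i' hi' => ?_⟩
    by_contra hc
    simp only [Bool.not_eq_false, decide_eq_true_eq] at hc
    exact absurd (compo_unique p ℓ h hc) (ne_of_gt hi')

lemma compo_eq_none_iff {p : ℕ} {ℓ : Fin p → ℕ} {vR : ℕ} {j : Fin vR} :
    compo p ℓ vR j = none ↔ (∑ i, ℓ i) ≤ (j : ℕ) := by
  rw [compo]
  rw [Fin.find?_eq_none_iff]
  simp only [decide_eq_false_iff_not]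
  constructor
  · intro h
    by_contra hc
    push_neg at hc
    rw [sum_eq_range] at hc
    obtain ⟨i, hip, h1, h2⟩ := natBlock_exists _ p (j : ℕ) hc
    refine h ⟨i, hip⟩ ?_
    rw [bstart_eq_range]
    have : ℓ ⟨i, hip⟩ = extl p ℓ i := by simp [extl, hip]
    constructor
    · exact h1
    · rw [this]; exact h2
  · intro h i hi
    have := bstart_add_le_sum p ℓ i
    omega

/-- the parent map -/
def pmap (p : ℕ) (ℓ : Fin p → ℕ) (vR : ℕ) (b : Fin p → Fin vR) :
    Fin p ⊕ Fin vR → Fin p ⊕ Fin vR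
  | .inl i => .inr (b i)
  | .inr j => (compo p ℓ vR j).elim (.inr j) .inl


section Generic

variable (p : ℕ) (ℓ : Fin p → ℕ) (vR : ℕ) (b : Fin p → Fin vR)
  (root : Fin vR) (hvR : vR = 1 + ∑ i, ℓ i) (hroot : (root : ℕ) = ∑ i, ℓ i)

/-- the graph obtained by adding the blue edges to the red graph -/
def bgraph : SimpleGraph (Fin p ⊕ Fin vR) :=
  SimpleGraph.fromEdgeSet ((consecRed p ℓ vR).edgeSet ∪
      {e | ∃ i : Fin p, e = s(Sum.inl i, Sum.inr (b i))})

lemma pmap_inl (i : Fin p) : pmap p ℓ vR b (.inl i) = .inr (b i) := rfl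

lemma pmap_inr_some {j : Fin vR} {i : Fin p} (h : compo p ℓ vR j = some i) :
    pmap p ℓ vR b (.inr j) = .inl i := by simp [pmap, h]

lemma pmap_inr_none {j : Fin vR} (h : compo p ℓ vR j = none) :
    pmap p ℓ vR b (.inr j) = .inr j := by simp [pmap, h]

include hroot in
lemma pmap_root : pmap p ℓ vR b (.inr root) = .inr root := by
  apply pmap_inr_none
  rw [compo_eq_none_iff, hroot]

include hroot in
lemma edge_mem {e : Sym2 (Fin p ⊕ Fin vR)} (hvR : vR = 1 + ∑ i, ℓ i) :
    e ∈ (bgraph p ℓ vR b).edgeSet ↔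
      ∃ v, v ≠ Sum.inr root ∧ e = s(v, pmap p ℓ vR b v) := by
  rw [bgraph, SimpleGraph.edgeSet_fromEdgeSet]
  constructor
  · rintro ⟨he, -⟩
    rcases he with he | ⟨i, rfl⟩
    · rw [consecRed, SimpleGraph.edgeSet_fromEdgeSet] at he
      obtain ⟨⟨i, j, rfl, h1, h2⟩, -⟩ := he
      have hc : compo p ℓ vR j = some i := compo_eq_some_iff.2 ⟨h1, h2⟩
      refine ⟨.inr j, ?_, ?_⟩
      · intro hj
        have hb := bstart_add_le_sum p ℓ i
        have hbd : bstart p ℓ i = ∑ i' ∈ Finset.univ.filter (fun i' => i' < i), ℓ i' := rfl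
        obtain rfl : j = root := Sum.inr.inj hj
        omega
      · rw [pmap_inr_some p ℓ vR b hc, Sym2.eq_swap]
    · exact ⟨.inl i, by simp, rfl⟩
  · rintro ⟨v, hv, rfl⟩
    rcases v with i | j
    · refine ⟨Or.inr ⟨i, rfl⟩, ?_⟩
      simp [pmap]
    · have hj : (j : ℕ) ≠ (root : ℕ) := by
        intro h
        exact hv (by rw [Fin.ext_iff.2 h])
      rcases hc : compo p ℓ vR j with _ | i
      · exfalso
        rw [compo_eq_none_iff] at hc
        have : (j : ℕ) < vR := j.isLt
        omega
      · rw [pmap_inr_some p ℓ vR b hc]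
        obtain ⟨h1, h2⟩ := compo_eq_some_iff.1 hc
        refine ⟨Or.inl ?_, by simp⟩
        rw [consecRed, SimpleGraph.edgeSet_fromEdgeSet]
        refine ⟨⟨i, j, Sym2.eq_swap, h1, h2⟩, by simp⟩

/-- reaching the root -/
def rch (v : Fin p ⊕ Fin vR) : Prop := ∃ n, (pmap p ℓ vR b)^[n] v = .inr root

include hroot in
lemma rch_no_cycle {v : Fin p ⊕ Fin vR} {a : ℕ} (ha : 0 < a)
    (hc : (pmap p ℓ vR b)^[a] v = v) (hr : rch p ℓ vR b root v) : v = .inr root := by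
  obtain ⟨n, hn⟩ := hr
  have hfix : ∀ k, (pmap p ℓ vR b)^[k] (Sum.inr root : Fin p ⊕ Fin vR) = .inr root :=
    fun k => Function.iterate_fixed (pmap_root p ℓ vR b root hroot) k
  have hmul : ∀ k, (pmap p ℓ vR b)^[a * k] v = v := by
    intro k
    induction k with
    | zero => simp
    | succ k ih =>
      rw [Nat.mul_succ, Function.iterate_add_apply, hc, ih]
  have key : (pmap p ℓ vR b)^[a * (n + 1)] v = v := hmul (n + 1)
  have hge : n ≤ a * (n + 1) := by nlinarith
  calc v = (pmap p ℓ vR b)^[a * (n+1)] v := (key).symm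
    _ = (pmap p ℓ vR b)^[a * (n+1) - n] ((pmap p ℓ vR b)^[n] v) := by
        rw [← Function.iterate_add_apply]; congr 1; omega
    _ = .inr root := by rw [hn, hfix]

include hroot hvR in
lemma connected_of_rch (hR : ∀ v, rch p ℓ vR b root v) : (bgraph p ℓ vR b).Connected := by
  have key : ∀ (n : ℕ) (v), (pmap p ℓ vR b)^[n] v = .inr root →
      (bgraph p ℓ vR b).Reachable v (.inr root) := by
    intro n
    induction n with
    | zero =>
      intro v hv
      simp only [Function.iterate_zero_apply] at hv
      rw [hv]
    | succ n ih =>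
      intro v hv
      rw [Function.iterate_succ_apply] at hv
      by_cases hvr : v = Sum.inr root
      · rw [hvr]
      · have hadj : (bgraph p ℓ vR b).Adj v (pmap p ℓ vR b v) := by
          rw [← SimpleGraph.mem_edgeSet, edge_mem p ℓ vR b root hroot hvR]
          exact ⟨v, hvr, rfl⟩
        exact hadj.reachable.trans (ih _ hv)
  rw [SimpleGraph.connected_iff]
  refine ⟨fun u v => ?_, ⟨Sum.inr root⟩⟩
  obtain ⟨n, hn⟩ := hR u
  obtain ⟨k, hk⟩ := hR v
  exact (key n u hn).trans (key k v hk).symm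

include hroot hvR in
lemma acyclic_of_rch (hR : ∀ v, rch p ℓ vR b root v) : (bgraph p ℓ vR b).IsAcyclic := by
  classical
  set G := bgraph p ℓ vR b with hG
  set d : (Fin p ⊕ Fin vR) → ℕ := fun v => Nat.find (hR v) with hd
  have edge_down : ∀ x y, G.Adj x y → d y ≤ d x → y = pmap p ℓ vR b x := by
    intro x y hadj hdle
    rw [← SimpleGraph.mem_edgeSet, edge_mem p ℓ vR b root hroot hvR] at hadj
    obtain ⟨v, hv, he⟩ := hadj
    rw [Sym2.eq_iff] at he
    rcases he with ⟨rfl, h2⟩ | ⟨h1, rfl⟩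
    · exact h2
    · exfalso
      -- x = pmap y, y ≠ root
      have hspec : (pmap p ℓ vR b)^[d y] y = .inr root := Nat.find_spec (hR y)
      have hypos : 0 < d y := by
        rcases Nat.eq_zero_or_pos (d y) with h0 | h; · exfalso; apply hv; rw [← hspec, h0]; rfl
        exact h
      obtain ⟨k, hk⟩ : ∃ k, d y = k + 1 := ⟨d y - 1, by omega⟩
      rw [hk, Function.iterate_succ_apply] at hspec
      rw [← h1] at hspec
      have hxle : d x ≤ k := Nat.find_le hspec
      omega
  intro v c hc
  have hne : c.support.toFinset.Nonempty := by
    simp [SimpleGraph.Walk.support_ne_nil]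
  obtain ⟨x, hxmem, hxmax⟩ := Finset.exists_max_image c.support.toFinset d hne
  simp only [List.mem_toFinset] at hxmem
  have hc' := hc.rotate hxmem
  set c' := c.rotate x hxmem with hc'def
  have hsupp : ∀ w, w ∈ c'.support → w ∈ c.support := by
    intro w hw
    have hrot := SimpleGraph.Walk.support_rotate c x hxmem
    rcases (SimpleGraph.Walk.mem_support_iff _).1 hw with rfl | hw'
    · exact hxmem
    · exact List.mem_of_mem_tail (hrot.mem_iff.1 hw')
  clear_value c'
  cases c' with
  | nil => exact hc'.not_of_nil
  | cons h q =>
    rename_i y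
    -- h : G.Adj x y, q : Walk y x
    have hy : y ∈ c.support := by
      apply hsupp
      rw [SimpleGraph.Walk.support_cons]
      exact List.mem_cons_of_mem _ q.start_mem_support
    have hyd : d y ≤ d x := hxmax y (List.mem_toFinset.2 hy)
    have hy' : y = pmap p ℓ vR b x := edge_down x y h hyd
    cases hq : q.reverse with
    | nil => exact G.loopless.irrefl x h
    | cons h2 q'' =>
      rename_i z
      -- h2 : G.Adj x z, q'' : Walk z y
      have hz : z ∈ q.support := by
        have hzz : z ∈ q.reverse.support := by
          rw [hq, SimpleGraph.Walk.support_cons]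
          exact List.mem_cons_of_mem _ q''.start_mem_support
        rwa [SimpleGraph.Walk.support_reverse, List.mem_reverse] at hzz
      have hzc : z ∈ c.support := by
        apply hsupp
        rw [SimpleGraph.Walk.support_cons]
        exact List.mem_cons_of_mem _ hz
      have hzd : d z ≤ d x := hxmax z (List.mem_toFinset.2 hzc)
      have hz' : z = pmap p ℓ vR b x := edge_down x z h2 hzd
      have hedge : s(x, z) ∈ q.edges := by
        have hzz : s(x, z) ∈ q.reverse.edges := by
          rw [hq, SimpleGraph.Walk.edges_cons]
          exact List.mem_cons_self
        rwa [SimpleGraph.Walk.edges_reverse, List.mem_reverse] at hzz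
      have hnodup := hc'.edges_nodup
      rw [SimpleGraph.Walk.edges_cons] at hnodup
      have hns : s(x, y) ∉ q.edges := (List.nodup_cons.1 hnodup).1
      apply hns
      have hyz : s(x, y) = s(x, z) := by rw [hy', hz']
      rw [hyz]
      exact hedge

include hroot hvR in
theorem tree_iff : (bgraph p ℓ vR b).IsTree ↔ ∀ v, rch p ℓ vR b root v := by
  constructor
  · intro ht v
    have hconn := ht.isConnected
    have hreach : (bgraph p ℓ vR b).Reachable (.inr root) v := hconn.preconnected _ _
    obtain ⟨w⟩ := hreach
    have key : ∀ {u u' : Fin p ⊕ Fin vR}, (bgraph p ℓ vR b).Walk u u' →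
        rch p ℓ vR b root u → rch p ℓ vR b root u' := by
      intro u u' w
      induction w with
      | nil => exact id
      | @cons a a' _ hadj w ih =>
        intro hu
        apply ih
        rw [← SimpleGraph.mem_edgeSet, edge_mem p ℓ vR b root hroot hvR] at hadj
        obtain ⟨v', hv', he⟩ := hadj
        rw [Sym2.eq_iff] at he
        rcases he with ⟨rfl, rfl⟩ | ⟨h1, rfl⟩
        · -- a' = pmap a, a ≠ root
          obtain ⟨n, hn⟩ := hu
          have hnpos : 0 < n := by
            rcases Nat.eq_zero_or_pos n with h0 | h; · exfalso; apply hv'; rw [← hn, h0]; rfl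
            exact h
          refine ⟨n - 1, ?_⟩
          rw [← hn]
          conv_rhs => rw [show n = (n-1) + 1 by omega]
          rw [Function.iterate_succ_apply]
        · -- a = pmap a'
          obtain ⟨n, hn⟩ := hu
          exact ⟨n + 1, by rw [Function.iterate_succ_apply, ← h1]; exact hn⟩
    exact key w ⟨0, rfl⟩
  · intro hR
    exact ⟨connected_of_rch p ℓ vR b root hvR hroot hR,
      acyclic_of_rch p ℓ vR b root hvR hroot hR⟩

end Generic

lemma Bcount_eq (p : ℕ) (ℓ : Fin p → ℕ) (vR : ℕ) (root : Fin vR)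
    (hvR : vR = 1 + ∑ i, ℓ i) (hroot : (root : ℕ) = ∑ i, ℓ i) :
    Bcount p ℓ vR = (Finset.univ.filter
      (fun b : Fin p → Fin vR => ∀ v, rch p ℓ vR b root v)).card := by
  classical
  rw [Bcount, Nat.card_eq_fintype_card]
  have : ∀ b : Fin p → Fin vR,
      (SimpleGraph.fromEdgeSet ((consecRed p ℓ vR).edgeSet ∪
        {e | ∃ i : Fin p, e = s(Sum.inl i, Sum.inr (b i))})).IsTree ↔
      ∀ v, rch p ℓ vR b root v := fun b => tree_iff p ℓ vR b root hvR hroot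
  rw [Fintype.card_subtype]
  congr 1
  apply Finset.filter_congr
  intro b _
  simp only [this b]

section Instance

variable (m A B : ℕ) (Ls : Fin m → ℕ) (vR : ℕ)

/-- merged degree vector -/
def l1 : Fin (m + 1) → ℕ := Fin.cons (A + B) Ls

/-- split degree vector -/
def l2 : Fin (m + 2) → ℕ := Fin.cons A (Fin.cons B Ls)

lemma suml1 : ∑ i, l1 m A B Ls i = A + B + ∑ i, Ls i := by
  rw [l1, Fin.sum_cons]

lemma suml2 : ∑ i, l2 m A B Ls i = A + B + ∑ i, Ls i := by
  rw [l2, Fin.sum_cons, Fin.sum_cons]; omega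

/-- the root right vertex -/
def rootF (hvR : vR = 1 + (A + B + ∑ i, Ls i)) : Fin vR :=
  ⟨A + B + ∑ i, Ls i, by omega⟩

lemma bstart_cons_zero (p : ℕ) (x : ℕ) (f : Fin p → ℕ) :
    bstart (p + 1) (Fin.cons x f) 0 = 0 := by
  rw [bstart_eq_range]
  simp

lemma extl_cons_succ (p : ℕ) (x : ℕ) (f : Fin p → ℕ) (k : ℕ) :
    extl (p + 1) (Fin.cons x f) (k + 1) = extl p f k := by
  unfold extl
  by_cases h : k < p
  · rw [dif_pos (by omega), dif_pos h]
    have : (⟨k + 1, by omega⟩ : Fin (p + 1)) = Fin.succ ⟨k, h⟩ := rfl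
    rw [this, Fin.cons_succ]
  · rw [dif_neg (by omega), dif_neg h]

lemma bstart_cons_succ (p : ℕ) (x : ℕ) (f : Fin p → ℕ) (i₀ : Fin p) :
    bstart (p + 1) (Fin.cons x f) i₀.succ = x + bstart p f i₀ := by
  rw [bstart_eq_range, bstart_eq_range]
  have hv : (i₀.succ : Fin (p+1)).val = i₀.val + 1 := rfl
  rw [hv, Finset.sum_range_succ']
  have h0 : extl (p+1) (Fin.cons x f) 0 = x := by simp [extl, Fin.cons_zero]
  rw [h0]
  rw [Nat.add_comm]
  congr 1
  apply Finset.sum_congr rfl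
  intro k _
  exact extl_cons_succ p x f k

lemma compo1_zero {j : Fin vR} :
    compo (m+1) (l1 m A B Ls) vR j = some 0 ↔ (j : ℕ) < A + B := by
  rw [compo_eq_some_iff]
  simp only [l1]
  rw [bstart_cons_zero m (A+B) Ls, Fin.cons_zero]
  omega

lemma compo1_succ {j : Fin vR} {i₀ : Fin m} :
    compo (m+1) (l1 m A B Ls) vR j = some i₀.succ ↔
      A + B + bstart m Ls i₀ ≤ (j : ℕ) ∧ (j : ℕ) < A + B + bstart m Ls i₀ + Ls i₀ := by
  rw [compo_eq_some_iff]
  simp only [l1]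
  rw [bstart_cons_succ m (A+B) Ls i₀, Fin.cons_succ]

lemma compo1_none {j : Fin vR} :
    compo (m+1) (l1 m A B Ls) vR j = none ↔ A + B + ∑ i, Ls i ≤ (j : ℕ) := by
  rw [compo_eq_none_iff, suml1]

lemma compo2_zero {j : Fin vR} :
    compo (m+2) (l2 m A B Ls) vR j = some 0 ↔ (j : ℕ) < A := by
  rw [compo_eq_some_iff]
  simp only [l2]
  rw [bstart_cons_zero (m+1) A _, Fin.cons_zero]
  omega

lemma compo2_one {j : Fin vR} :
    compo (m+2) (l2 m A B Ls) vR j = some (Fin.succ 0) ↔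
      A ≤ (j : ℕ) ∧ (j : ℕ) < A + B := by
  rw [compo_eq_some_iff]
  simp only [l2]
  rw [bstart_cons_succ (m+1) A _ 0, bstart_cons_zero m B Ls, Fin.cons_succ, Fin.cons_zero]
  omega

lemma compo2_succ2 {j : Fin vR} {i₀ : Fin m} :
    compo (m+2) (l2 m A B Ls) vR j = some i₀.succ.succ ↔
      A + B + bstart m Ls i₀ ≤ (j : ℕ) ∧ (j : ℕ) < A + B + bstart m Ls i₀ + Ls i₀ := by
  rw [compo_eq_some_iff]
  simp only [l2]
  rw [bstart_cons_succ (m+1) A _ i₀.succ, bstart_cons_succ m B Ls i₀,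
    Fin.cons_succ, Fin.cons_succ]
  omega

lemma compo2_none {j : Fin vR} :
    compo (m+2) (l2 m A B Ls) vR j = none ↔ A + B + ∑ i, Ls i ≤ (j : ℕ) := by
  rw [compo_eq_none_iff, suml2]

/-- the deterministic step map on right vertices -/
def stepf (rest : Fin m → Fin vR) (j : Fin vR) : Fin vR :=
  (compo (m+1) (l1 m A B Ls) vR j).elim j (fun i => Fin.cases j rest i)

lemma stepf_absorb {rest : Fin m → Fin vR} {j : Fin vR}
    (h : (j : ℕ) < A + B ∨ A + B + ∑ i, Ls i ≤ (j : ℕ)) :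
    stepf m A B Ls vR rest j = j := by
  rcases h with h | h
  · rw [stepf, (compo1_zero m A B Ls vR).2 h]
    simp
  · rw [stepf, (compo1_none m A B Ls vR).2 h]
    simp

lemma stepf_mid {rest : Fin m → Fin vR} {j : Fin vR} {i₀ : Fin m}
    (h : compo (m+1) (l1 m A B Ls) vR j = some i₀.succ) :
    stepf m A B Ls vR rest j = rest i₀ := by
  rw [stepf, h]
  simp

/-- trajectory is absorbed at the root -/
def Pr (rest : Fin m → Fin vR) (j : Fin vR) : Prop :=
  ∃ n, ((stepf m A B Ls vR rest)^[n] j : ℕ) = A + B + ∑ i, Ls i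

/-- trajectory is absorbed in the first half-block -/
def Qa (rest : Fin m → Fin vR) (j : Fin vR) : Prop :=
  ∃ n, ((stepf m A B Ls vR rest)^[n] j : ℕ) < A

/-- trajectory is absorbed in the second half-block -/
def Qb (rest : Fin m → Fin vR) (j : Fin vR) : Prop :=
  ∃ n, A ≤ ((stepf m A B Ls vR rest)^[n] j : ℕ) ∧
    ((stepf m A B Ls vR rest)^[n] j : ℕ) < A + B

lemma absorb_unique {rest : Fin m → Fin vR} {j u w : Fin vR} {n k : ℕ}
    (hn : (stepf m A B Ls vR rest)^[n] j = u) (hu : stepf m A B Ls vR rest u = u)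
    (hk : (stepf m A B Ls vR rest)^[k] j = w) (hw : stepf m A B Ls vR rest w = w) :
    u = w := by
  rcases le_total n k with h | h
  · calc u = (stepf m A B Ls vR rest)^[k - n] u := (Function.iterate_fixed hu _).symm
      _ = (stepf m A B Ls vR rest)^[k - n] ((stepf m A B Ls vR rest)^[n] j) := by rw [hn]
      _ = w := by rw [← Function.iterate_add_apply]; rw [show k - n + n = k by omega]; exact hk
  · calc u = (stepf m A B Ls vR rest)^[n - k + k] j := by rw [show n - k + k = n by omega]; exact hn.symm
      _ = (stepf m A B Ls vR rest)^[n - k] w := by rw [Function.iterate_add_apply, hk]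
      _ = w := Function.iterate_fixed hw _

lemma classify_disjoint {rest : Fin m → Fin vR} {j : Fin vR} :
    (¬ (Pr m A B Ls vR rest j ∧ Qa m A B Ls vR rest j)) ∧
    (¬ (Pr m A B Ls vR rest j ∧ Qb m A B Ls vR rest j)) ∧
    (¬ (Qa m A B Ls vR rest j ∧ Qb m A B Ls vR rest j)) := by
  have key : ∀ n k : ℕ,
      ((stepf m A B Ls vR rest)^[n] j : ℕ) < A + B ∨
        A + B + ∑ i, Ls i ≤ ((stepf m A B Ls vR rest)^[n] j : ℕ) →
      ((stepf m A B Ls vR rest)^[k] j : ℕ) < A + B ∨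
        A + B + ∑ i, Ls i ≤ ((stepf m A B Ls vR rest)^[k] j : ℕ) →
      (stepf m A B Ls vR rest)^[n] j = (stepf m A B Ls vR rest)^[k] j := by
    intro n k h1 h2
    exact absorb_unique m A B Ls vR rfl
      (stepf_absorb m A B Ls vR (by omega)) rfl (stepf_absorb m A B Ls vR (by omega))
  refine ⟨?_, ?_, ?_⟩
  · rintro ⟨⟨n, hn⟩, ⟨k, hk⟩⟩
    have := key n k (by omega) (by omega)
    rw [Fin.ext_iff] at this
    omega
  · rintro ⟨⟨n, hn⟩, ⟨k, hk⟩⟩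
    have := key n k (by omega) (by omega)
    rw [Fin.ext_iff] at this
    omega
  · rintro ⟨⟨n, hn⟩, ⟨k, hk⟩⟩
    have := key n k (by omega) (by omega)
    rw [Fin.ext_iff] at this
    omega

lemma class_step {rest : Fin m → Fin vR} {j : Fin vR} {i₀ : Fin m}
    (hc : compo (m+1) (l1 m A B Ls) vR j = some i₀.succ) :
    (Pr m A B Ls vR rest (rest i₀) → Pr m A B Ls vR rest j) ∧
    (Qa m A B Ls vR rest (rest i₀) → Qa m A B Ls vR rest j) ∧
    (Qb m A B Ls vR rest (rest i₀) → Qb m A B Ls vR rest j) := by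
  have hs : stepf m A B Ls vR rest j = rest i₀ := stepf_mid m A B Ls vR hc
  refine ⟨fun ⟨n, hn⟩ => ⟨n + 1, ?_⟩, fun ⟨n, hn⟩ => ⟨n + 1, ?_⟩, fun ⟨n, hn⟩ => ⟨n + 1, ?_⟩⟩ <;>
    rw [Function.iterate_succ_apply, hs] <;> exact hn

section Bridges

variable (hvR : vR = 1 + (A + B + ∑ i, Ls i))

lemma bridge_P1 (d : Fin vR) (rest : Fin m → Fin vR) :
    ∀ (n : ℕ) (j : Fin vR), ((stepf m A B Ls vR rest)^[n] j : ℕ) = A + B + ∑ i, Ls i →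
    ∃ k, (pmap (m+1) (l1 m A B Ls) vR (Fin.cons d rest))^[k] (.inr j)
      = .inr (rootF m A B Ls vR hvR) := by
  intro n
  induction n with
  | zero =>
    intro j hj
    simp only [Function.iterate_zero_apply] at hj
    exact ⟨0, by simp only [Function.iterate_zero_apply]; congr 1; exact Fin.ext hj⟩
  | succ n ih =>
    intro j hj
    rcases hc : compo (m+1) (l1 m A B Ls) vR j with _ | i
    · have h1 := (compo1_none m A B Ls vR).1 hc
      have hlt : (j : ℕ) < vR := j.isLt
      refine ⟨0, ?_⟩
      simp only [Function.iterate_zero_apply]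
      congr 1
      rw [Fin.ext_iff]
      show (j : ℕ) = A + B + ∑ i, Ls i
      omega
    · cases i using Fin.cases with
      | zero =>
        exfalso
        have hb : (j : ℕ) < A + B := (compo1_zero m A B Ls vR).1 hc
        have habs :  (stepf m A B Ls vR rest)^[n+1] j = j :=
          Function.iterate_fixed (stepf_absorb m A B Ls vR (Or.inl hb)) _
        rw [habs] at hj
        omega
      | succ i₀ =>
        have hs : stepf m A B Ls vR rest j = rest i₀ := stepf_mid m A B Ls vR hc
        rw [Function.iterate_succ_apply, hs] at hj
        obtain ⟨k, hk⟩ := ih (rest i₀) hj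
        refine ⟨k + 2, ?_⟩
        show (pmap (m+1) (l1 m A B Ls) vR (Fin.cons d rest))^[k+1+1] (.inr j) = _
        rw [Function.iterate_succ_apply, pmap_inr_some _ _ _ _ hc,
          Function.iterate_succ_apply]
        rw [show pmap (m+1) (l1 m A B Ls) vR (Fin.cons d rest) (.inl i₀.succ)
          = .inr (rest i₀) from by rw [pmap_inl, Fin.cons_succ]]
        exact hk

lemma bridge_Q1 (d : Fin vR) (rest : Fin m → Fin vR) :
    ∀ (n : ℕ) (j : Fin vR), ((stepf m A B Ls vR rest)^[n] j : ℕ) < A + B →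
    ∃ k, (pmap (m+1) (l1 m A B Ls) vR (Fin.cons d rest))^[k] (.inr j) = .inl 0 := by
  intro n
  induction n with
  | zero =>
    intro j hj
    simp only [Function.iterate_zero_apply] at hj
    exact ⟨1, by rw [Function.iterate_one]
                 exact pmap_inr_some _ _ _ _ ((compo1_zero m A B Ls vR).2 hj)⟩
  | succ n ih =>
    intro j hj
    rcases hc : compo (m+1) (l1 m A B Ls) vR j with _ | i
    · exfalso
      have h1 := (compo1_none m A B Ls vR).1 hc
      have habs : (stepf m A B Ls vR rest)^[n+1] j = j :=
        Function.iterate_fixed (stepf_absorb m A B Ls vR (Or.inr h1)) _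
      rw [habs] at hj
      omega
    · cases i using Fin.cases with
      | zero =>
        exact ⟨1, by rw [Function.iterate_one]; exact pmap_inr_some _ _ _ _ hc⟩
      | succ i₀ =>
        have hs : stepf m A B Ls vR rest j = rest i₀ := stepf_mid m A B Ls vR hc
        rw [Function.iterate_succ_apply, hs] at hj
        obtain ⟨k, hk⟩ := ih (rest i₀) hj
        refine ⟨k + 2, ?_⟩
        show (pmap (m+1) (l1 m A B Ls) vR (Fin.cons d rest))^[k+1+1] (.inr j) = _
        rw [Function.iterate_succ_apply, pmap_inr_some _ _ _ _ hc,
          Function.iterate_succ_apply]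
        rw [show pmap (m+1) (l1 m A B Ls) vR (Fin.cons d rest) (.inl i₀.succ)
          = .inr (rest i₀) from by rw [pmap_inl, Fin.cons_succ]]
        exact hk

lemma compo2_of_compo1 {j : Fin vR} {i₀ : Fin m}
    (hc : compo (m+2) (l2 m A B Ls) vR j = some i₀.succ.succ) :
    compo (m+1) (l1 m A B Ls) vR j = some i₀.succ :=
  (compo1_succ m A B Ls vR).2 ((compo2_succ2 m A B Ls vR).1 hc)

lemma bridge_P2 (a c : Fin vR) (rest : Fin m → Fin vR) :
    ∀ (n : ℕ) (j : Fin vR), ((stepf m A B Ls vR rest)^[n] j : ℕ) = A + B + ∑ i, Ls i →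
    ∃ k, (pmap (m+2) (l2 m A B Ls) vR (Fin.cons a (Fin.cons c rest)))^[k] (.inr j)
      = .inr (rootF m A B Ls vR hvR) := by
  intro n
  induction n with
  | zero =>
    intro j hj
    simp only [Function.iterate_zero_apply] at hj
    exact ⟨0, by simp only [Function.iterate_zero_apply]; congr 1; exact Fin.ext hj⟩
  | succ n ih =>
    intro j hj
    rcases hc : compo (m+2) (l2 m A B Ls) vR j with _ | i
    · have h1 := (compo2_none m A B Ls vR).1 hc
      have hlt : (j : ℕ) < vR := j.isLt
      refine ⟨0, ?_⟩
      simp only [Function.iterate_zero_apply]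
      congr 1
      rw [Fin.ext_iff]
      show (j : ℕ) = A + B + ∑ i, Ls i
      omega
    · cases i using Fin.cases with
      | zero =>
        exfalso
        have hb : (j : ℕ) < A := (compo2_zero m A B Ls vR).1 hc
        have habs : (stepf m A B Ls vR rest)^[n+1] j = j :=
          Function.iterate_fixed (stepf_absorb m A B Ls vR (Or.inl (by omega))) _
        rw [habs] at hj
        omega
      | succ i' =>
        cases i' using Fin.cases with
        | zero =>
          exfalso
          have hb := (compo2_one m A B Ls vR).1 hc
          have habs : (stepf m A B Ls vR rest)^[n+1] j = j :=
            Function.iterate_fixed (stepf_absorb m A B Ls vR (Or.inl (by omega))) _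
          rw [habs] at hj
          omega
        | succ i₀ =>
          have hc1 := compo2_of_compo1 m A B Ls vR hc
          have hs : stepf m A B Ls vR rest j = rest i₀ := stepf_mid m A B Ls vR hc1
          rw [Function.iterate_succ_apply, hs] at hj
          obtain ⟨k, hk⟩ := ih (rest i₀) hj
          refine ⟨k + 2, ?_⟩
          show (pmap (m+2) (l2 m A B Ls) vR (Fin.cons a (Fin.cons c rest)))^[k+1+1]
            (.inr j) = _
          rw [Function.iterate_succ_apply, pmap_inr_some _ _ _ _ hc,
            Function.iterate_succ_apply]
          rw [show pmap (m+2) (l2 m A B Ls) vR (Fin.cons a (Fin.cons c rest))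
            (.inl i₀.succ.succ) = .inr (rest i₀) from by
              rw [pmap_inl, Fin.cons_succ, Fin.cons_succ]]
          exact hk

lemma bridge_Qa2 (a c : Fin vR) (rest : Fin m → Fin vR) :
    ∀ (n : ℕ) (j : Fin vR), ((stepf m A B Ls vR rest)^[n] j : ℕ) < A →
    ∃ k, (pmap (m+2) (l2 m A B Ls) vR (Fin.cons a (Fin.cons c rest)))^[k] (.inr j)
      = .inl 0 := by
  intro n
  induction n with
  | zero =>
    intro j hj
    simp only [Function.iterate_zero_apply] at hj
    exact ⟨1, by rw [Function.iterate_one]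
                 exact pmap_inr_some _ _ _ _ ((compo2_zero m A B Ls vR).2 hj)⟩
  | succ n ih =>
    intro j hj
    rcases hc : compo (m+2) (l2 m A B Ls) vR j with _ | i
    · exfalso
      have h1 := (compo2_none m A B Ls vR).1 hc
      have habs : (stepf m A B Ls vR rest)^[n+1] j = j :=
        Function.iterate_fixed (stepf_absorb m A B Ls vR (Or.inr h1)) _
      rw [habs] at hj
      omega
    · cases i using Fin.cases with
      | zero =>
        exact ⟨1, by rw [Function.iterate_one]; exact pmap_inr_some _ _ _ _ hc⟩
      | succ i' =>
        cases i' using Fin.cases with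
        | zero =>
          exfalso
          have hb := (compo2_one m A B Ls vR).1 hc
          have habs : (stepf m A B Ls vR rest)^[n+1] j = j :=
            Function.iterate_fixed (stepf_absorb m A B Ls vR (Or.inl (by omega))) _
          rw [habs] at hj
          omega
        | succ i₀ =>
          have hc1 := compo2_of_compo1 m A B Ls vR hc
          have hs : stepf m A B Ls vR rest j = rest i₀ := stepf_mid m A B Ls vR hc1
          rw [Function.iterate_succ_apply, hs] at hj
          obtain ⟨k, hk⟩ := ih (rest i₀) hj
          refine ⟨k + 2, ?_⟩
          show (pmap (m+2) (l2 m A B Ls) vR (Fin.cons a (Fin.cons c rest)))^[k+1+1]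
            (.inr j) = _
          rw [Function.iterate_succ_apply, pmap_inr_some _ _ _ _ hc,
            Function.iterate_succ_apply]
          rw [show pmap (m+2) (l2 m A B Ls) vR (Fin.cons a (Fin.cons c rest))
            (.inl i₀.succ.succ) = .inr (rest i₀) from by
              rw [pmap_inl, Fin.cons_succ, Fin.cons_succ]]
          exact hk

lemma bridge_Qb2 (a c : Fin vR) (rest : Fin m → Fin vR) :
    ∀ (n : ℕ) (j : Fin vR), A ≤ ((stepf m A B Ls vR rest)^[n] j : ℕ) →
      ((stepf m A B Ls vR rest)^[n] j : ℕ) < A + B →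
    ∃ k, (pmap (m+2) (l2 m A B Ls) vR (Fin.cons a (Fin.cons c rest)))^[k] (.inr j)
      = .inl (Fin.succ 0) := by
  intro n
  induction n with
  | zero =>
    intro j hj1 hj2
    simp only [Function.iterate_zero_apply] at hj1 hj2
    exact ⟨1, by rw [Function.iterate_one]
                 exact pmap_inr_some _ _ _ _ ((compo2_one m A B Ls vR).2 ⟨hj1, hj2⟩)⟩
  | succ n ih =>
    intro j hj1 hj2
    rcases hc : compo (m+2) (l2 m A B Ls) vR j with _ | i
    · exfalso
      have h1 := (compo2_none m A B Ls vR).1 hc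
      have habs : (stepf m A B Ls vR rest)^[n+1] j = j :=
        Function.iterate_fixed (stepf_absorb m A B Ls vR (Or.inr h1)) _
      rw [habs] at hj1 hj2
      omega
    · cases i using Fin.cases with
      | zero =>
        exfalso
        have hb : (j : ℕ) < A := (compo2_zero m A B Ls vR).1 hc
        have habs : (stepf m A B Ls vR rest)^[n+1] j = j :=
          Function.iterate_fixed (stepf_absorb m A B Ls vR (Or.inl (by omega))) _
        rw [habs] at hj1 hj2
        omega
      | succ i' =>
        cases i' using Fin.cases with
        | zero =>
          exact ⟨1, by rw [Function.iterate_one]; exact pmap_inr_some _ _ _ _ hc⟩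
        | succ i₀ =>
          have hc1 := compo2_of_compo1 m A B Ls vR hc
          have hs : stepf m A B Ls vR rest j = rest i₀ := stepf_mid m A B Ls vR hc1
          rw [Function.iterate_succ_apply, hs] at hj1 hj2
          obtain ⟨k, hk⟩ := ih (rest i₀) hj1 hj2
          refine ⟨k + 2, ?_⟩
          show (pmap (m+2) (l2 m A B Ls) vR (Fin.cons a (Fin.cons c rest)))^[k+1+1]
            (.inr j) = _
          rw [Function.iterate_succ_apply, pmap_inr_some _ _ _ _ hc,
            Function.iterate_succ_apply]
          rw [show pmap (m+2) (l2 m A B Ls) vR (Fin.cons a (Fin.cons c rest))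
            (.inl i₀.succ.succ) = .inr (rest i₀) from by
              rw [pmap_inl, Fin.cons_succ, Fin.cons_succ]]
          exact hk

end Bridges

section Chars

variable (hvR : vR = 1 + (A + B + ∑ i, Ls i))

include hvR in
lemma total_class (rest : Fin m → Fin vR)
    (Hrest : ∀ i₀, Pr m A B Ls vR rest (rest i₀) ∨ Qa m A B Ls vR rest (rest i₀) ∨
      Qb m A B Ls vR rest (rest i₀)) :
    ∀ j, Pr m A B Ls vR rest j ∨ Qa m A B Ls vR rest j ∨ Qb m A B Ls vR rest j := by
  intro j
  rcases hc : compo (m+1) (l1 m A B Ls) vR j with _ | i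
  · left
    have h1 := (compo1_none m A B Ls vR).1 hc
    have h2 : (j : ℕ) < vR := j.isLt
    exact ⟨0, by simp only [Function.iterate_zero_apply]; omega⟩
  · cases i using Fin.cases with
    | zero =>
      have hb := (compo1_zero m A B Ls vR).1 hc
      by_cases hA : (j : ℕ) < A
      · right; left; exact ⟨0, by simpa using hA⟩
      · right; right
        exact ⟨0, by simp only [Function.iterate_zero_apply]; omega⟩
    | succ i₀ =>
      obtain ⟨s1, s2, s3⟩ := class_step m A B Ls vR (rest := rest) hc
      rcases Hrest i₀ with h | h | h
      · exact Or.inl (s1 h)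
      · exact Or.inr (Or.inl (s2 h))
      · exact Or.inr (Or.inr (s3 h))

lemma class1 (d : Fin vR) (rest : Fin m → Fin vR) :
    ∀ (n : ℕ) (j : Fin vR),
      (pmap (m+1) (l1 m A B Ls) vR (Fin.cons d rest))^[n] (.inr j)
        = .inr (rootF m A B Ls vR hvR) →
      Pr m A B Ls vR rest j ∨ Qa m A B Ls vR rest j ∨ Qb m A B Ls vR rest j := by
  intro n
  induction n using Nat.strong_induction_on with
  | _ n ih =>
    intro j hj
    rcases hc : compo (m+1) (l1 m A B Ls) vR j with _ | i
    · left
      have h1 := (compo1_none m A B Ls vR).1 hc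
      have h2 : (j : ℕ) < vR := j.isLt
      exact ⟨0, by simp only [Function.iterate_zero_apply]; omega⟩
    · cases i using Fin.cases with
      | zero =>
        have hb := (compo1_zero m A B Ls vR).1 hc
        by_cases hA : (j : ℕ) < A
        · right; left; exact ⟨0, by simpa using hA⟩
        · right; right
          exact ⟨0, by simp only [Function.iterate_zero_apply]; omega⟩
      | succ i₀ =>
        rcases n with _ | n
        · exfalso
          simp only [Function.iterate_zero_apply, Sum.inr.injEq] at hj
          rw [Fin.ext_iff] at hj
          have hjv : (j : ℕ) = A + B + ∑ i, Ls i := hj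
          have hb := (compo1_succ m A B Ls vR).1 hc
          have hs := bstart_add_le_sum m Ls i₀
          omega
        rcases n with _ | n
        · exfalso
          rw [Function.iterate_one, pmap_inr_some _ _ _ _ hc] at hj
          exact absurd hj (by simp)
        · rw [Function.iterate_succ_apply, pmap_inr_some _ _ _ _ hc,
            Function.iterate_succ_apply,
            show pmap (m+1) (l1 m A B Ls) vR (Fin.cons d rest) (.inl i₀.succ)
              = .inr (rest i₀) from by rw [pmap_inl, Fin.cons_succ]] at hj
          obtain ⟨s1, s2, s3⟩ := class_step m A B Ls vR (rest := rest) hc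
          rcases ih n (by omega) (rest i₀) hj with h | h | h
          · exact Or.inl (s1 h)
          · exact Or.inr (Or.inl (s2 h))
          · exact Or.inr (Or.inr (s3 h))

lemma class2 (a c : Fin vR) (rest : Fin m → Fin vR) :
    ∀ (n : ℕ) (j : Fin vR),
      (pmap (m+2) (l2 m A B Ls) vR (Fin.cons a (Fin.cons c rest)))^[n] (.inr j)
        = .inr (rootF m A B Ls vR hvR) →
      Pr m A B Ls vR rest j ∨ Qa m A B Ls vR rest j ∨ Qb m A B Ls vR rest j := by
  intro n
  induction n using Nat.strong_induction_on with
  | _ n ih =>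
    intro j hj
    rcases hc : compo (m+2) (l2 m A B Ls) vR j with _ | i
    · left
      have h1 := (compo2_none m A B Ls vR).1 hc
      have h2 : (j : ℕ) < vR := j.isLt
      exact ⟨0, by simp only [Function.iterate_zero_apply]; omega⟩
    · cases i using Fin.cases with
      | zero =>
        have hb := (compo2_zero m A B Ls vR).1 hc
        right; left; exact ⟨0, by simpa using hb⟩
      | succ i' =>
        cases i' using Fin.cases with
        | zero =>
          have hb := (compo2_one m A B Ls vR).1 hc
          right; right
          exact ⟨0, by simp only [Function.iterate_zero_apply]; omega⟩
        | succ i₀ =>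
          rcases n with _ | n
          · exfalso
            simp only [Function.iterate_zero_apply, Sum.inr.injEq] at hj
            rw [Fin.ext_iff] at hj
            have hjv : (j : ℕ) = A + B + ∑ i, Ls i := hj
            have hb := (compo2_succ2 m A B Ls vR).1 hc
            have hs := bstart_add_le_sum m Ls i₀
            omega
          rcases n with _ | n
          · exfalso
            rw [Function.iterate_one, pmap_inr_some _ _ _ _ hc] at hj
            exact absurd hj (by simp)
          · have hc1 := compo2_of_compo1 m A B Ls vR hc
            rw [Function.iterate_succ_apply, pmap_inr_some _ _ _ _ hc,
              Function.iterate_succ_apply,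
              show pmap (m+2) (l2 m A B Ls) vR (Fin.cons a (Fin.cons c rest))
                (.inl i₀.succ.succ) = .inr (rest i₀) from by
                  rw [pmap_inl, Fin.cons_succ, Fin.cons_succ]] at hj
            obtain ⟨s1, s2, s3⟩ := class_step m A B Ls vR (rest := rest) hc1
            rcases ih n (by omega) (rest i₀) hj with h | h | h
            · exact Or.inl (s1 h)
            · exact Or.inr (Or.inl (s2 h))
            · exact Or.inr (Or.inr (s3 h))

lemma root1_val : ((rootF m A B Ls vR hvR : Fin vR) : ℕ) = ∑ i, l1 m A B Ls i := by
  rw [suml1]; rfl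

lemma root2_val : ((rootF m A B Ls vR hvR : Fin vR) : ℕ) = ∑ i, l2 m A B Ls i := by
  rw [suml2]; rfl

include hvR in
lemma hvR1 : vR = 1 + ∑ i, l1 m A B Ls i := by rw [suml1]; exact hvR

include hvR in
lemma hvR2 : vR = 1 + ∑ i, l2 m A B Ls i := by rw [suml2]; exact hvR

lemma char1 (d : Fin vR) (rest : Fin m → Fin vR) :
    (∀ v, rch (m+1) (l1 m A B Ls) vR (Fin.cons d rest) (rootF m A B Ls vR hvR) v) ↔
      (Pr m A B Ls vR rest d ∧ ∀ i₀, Pr m A B Ls vR rest (rest i₀) ∨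
        Qa m A B Ls vR rest (rest i₀) ∨ Qb m A B Ls vR rest (rest i₀)) := by
  constructor
  · intro hR
    have hclass : ∀ j : Fin vR, (∃ n, (pmap (m+1) (l1 m A B Ls) vR (Fin.cons d rest))^[n]
        (.inr j) = .inr (rootF m A B Ls vR hvR)) →
        Pr m A B Ls vR rest j ∨ Qa m A B Ls vR rest j ∨ Qb m A B Ls vR rest j := by
      rintro j ⟨n, hn⟩
      exact class1 m A B Ls vR hvR d rest n j hn
    have hfromL : ∀ i : Fin (m+1), ∃ n,
        (pmap (m+1) (l1 m A B Ls) vR (Fin.cons d rest))^[n]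
          (.inr ((Fin.cons d rest : Fin (m+1) → Fin vR) i)) = .inr (rootF m A B Ls vR hvR) := by
      intro i
      obtain ⟨n, hn⟩ := hR (.inl i)
      rcases n with _ | n
      · exact absurd hn (by simp [rch])
      · rw [Function.iterate_succ_apply, pmap_inl] at hn
        exact ⟨n, hn⟩
    constructor
    · have := hclass d (by have h := hfromL 0; rwa [Fin.cons_zero] at h)
      rcases this with h | h | h
      · exact h
      · exfalso
        obtain ⟨n, hn⟩ := h
        obtain ⟨k, hk⟩ := bridge_Q1 m A B Ls vR d rest n d (by omega)
        have hcyc : (pmap (m+1) (l1 m A B Ls) vR (Fin.cons d rest))^[k+1]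
            (.inl 0) = .inl 0 := by
          rw [Function.iterate_succ_apply, pmap_inl, Fin.cons_zero]
          exact hk
        have := rch_no_cycle (m+1) (l1 m A B Ls) vR (Fin.cons d rest)
          (rootF m A B Ls vR hvR) (root1_val m A B Ls vR hvR) (by omega) hcyc (hR (.inl 0))
        exact absurd this (by simp)
      · exfalso
        obtain ⟨n, hn⟩ := h
        obtain ⟨k, hk⟩ := bridge_Q1 m A B Ls vR d rest n d (by omega)
        have hcyc : (pmap (m+1) (l1 m A B Ls) vR (Fin.cons d rest))^[k+1]
            (.inl 0) = .inl 0 := by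
          rw [Function.iterate_succ_apply, pmap_inl, Fin.cons_zero]
          exact hk
        have := rch_no_cycle (m+1) (l1 m A B Ls) vR (Fin.cons d rest)
          (rootF m A B Ls vR hvR) (root1_val m A B Ls vR hvR) (by omega) hcyc (hR (.inl 0))
        exact absurd this (by simp)
    · intro i₀
      apply hclass
      have h := hfromL i₀.succ
      rwa [Fin.cons_succ] at h
  · rintro ⟨hPd, Hrest⟩
    have total := total_class m A B Ls vR hvR rest Hrest
    have reach_inl0 : rch (m+1) (l1 m A B Ls) vR (Fin.cons d rest)
        (rootF m A B Ls vR hvR) (.inl 0) := by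
      obtain ⟨n, hn⟩ := hPd
      obtain ⟨k, hk⟩ := bridge_P1 m A B Ls vR hvR d rest n d hn
      exact ⟨k + 1, by rw [Function.iterate_succ_apply, pmap_inl, Fin.cons_zero]; exact hk⟩
    have reach_inr : ∀ j : Fin vR, rch (m+1) (l1 m A B Ls) vR (Fin.cons d rest)
        (rootF m A B Ls vR hvR) (.inr j) := by
      intro j
      rcases total j with h | h | h
      · obtain ⟨n, hn⟩ := h
        exact bridge_P1 m A B Ls vR hvR d rest n j hn
      · obtain ⟨n, hn⟩ := h
        obtain ⟨k, hk⟩ := bridge_Q1 m A B Ls vR d rest n j (by omega)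
        obtain ⟨k', hk'⟩ := reach_inl0
        exact ⟨k' + k, by rw [Function.iterate_add_apply, hk, hk']⟩
      · obtain ⟨n, hn⟩ := h
        obtain ⟨k, hk⟩ := bridge_Q1 m A B Ls vR d rest n j (by omega)
        obtain ⟨k', hk'⟩ := reach_inl0
        exact ⟨k' + k, by rw [Function.iterate_add_apply, hk, hk']⟩
    intro v
    rcases v with i | j
    · cases i using Fin.cases with
      | zero => exact reach_inl0
      | succ i₀ =>
        obtain ⟨k, hk⟩ := reach_inr (rest i₀)
        exact ⟨k + 1, by rw [Function.iterate_succ_apply, pmap_inl, Fin.cons_succ]; exact hk⟩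
    · exact reach_inr j

end Chars

section Char2

variable (hvR : vR = 1 + (A + B + ∑ i, Ls i))

/-- the allowed configurations of the two special blue edges -/
def combo (rest : Fin m → Fin vR) (a c : Fin vR) : Prop :=
  (Pr m A B Ls vR rest a ∧ Pr m A B Ls vR rest c) ∨
  (Pr m A B Ls vR rest a ∧ Qa m A B Ls vR rest c) ∨
  (Qb m A B Ls vR rest a ∧ Pr m A B Ls vR rest c)

lemma char2 (a c : Fin vR) (rest : Fin m → Fin vR) :
    (∀ v, rch (m+2) (l2 m A B Ls) vR (Fin.cons a (Fin.cons c rest))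
        (rootF m A B Ls vR hvR) v) ↔
      (combo m A B Ls vR rest a c ∧ ∀ i₀, Pr m A B Ls vR rest (rest i₀) ∨
        Qa m A B Ls vR rest (rest i₀) ∨ Qb m A B Ls vR rest (rest i₀)) := by
  have hb2_0 : pmap (m+2) (l2 m A B Ls) vR (Fin.cons a (Fin.cons c rest)) (.inl 0)
      = .inr a := by rw [pmap_inl, Fin.cons_zero]
  have hb2_1 : pmap (m+2) (l2 m A B Ls) vR (Fin.cons a (Fin.cons c rest))
      (.inl (Fin.succ 0)) = .inr c := by rw [pmap_inl, Fin.cons_succ, Fin.cons_zero]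
  have hb2_s : ∀ i₀ : Fin m, pmap (m+2) (l2 m A B Ls) vR (Fin.cons a (Fin.cons c rest))
      (.inl i₀.succ.succ) = .inr (rest i₀) := by
    intro i₀; rw [pmap_inl, Fin.cons_succ, Fin.cons_succ]
  constructor
  · intro hR
    have hclass : ∀ j : Fin vR, (∃ n, (pmap (m+2) (l2 m A B Ls) vR
        (Fin.cons a (Fin.cons c rest)))^[n]
        (.inr j) = .inr (rootF m A B Ls vR hvR)) →
        Pr m A B Ls vR rest j ∨ Qa m A B Ls vR rest j ∨ Qb m A B Ls vR rest j := by
      rintro j ⟨n, hn⟩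
      exact class2 m A B Ls vR hvR a c rest n j hn
    have hstep : ∀ (v : Fin (m+2) ⊕ Fin vR) (j : Fin vR),
        pmap (m+2) (l2 m A B Ls) vR (Fin.cons a (Fin.cons c rest)) v = .inr j →
        (∃ n, (pmap (m+2) (l2 m A B Ls) vR (Fin.cons a (Fin.cons c rest)))^[n]
          v = .inr (rootF m A B Ls vR hvR)) →
        (∃ n, (pmap (m+2) (l2 m A B Ls) vR (Fin.cons a (Fin.cons c rest)))^[n]
          (.inr j) = .inr (rootF m A B Ls vR hvR)) := by
      rintro v j hv ⟨n, hn⟩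
      rcases n with _ | n
      · refine ⟨0, ?_⟩
        simp only [Function.iterate_zero_apply] at hn ⊢
        rw [hn] at hv
        have hroot : pmap (m+2) (l2 m A B Ls) vR (Fin.cons a (Fin.cons c rest))
            (.inr (rootF m A B Ls vR hvR)) = .inr (rootF m A B Ls vR hvR) := by
          apply pmap_inr_none
          rw [compo_eq_none_iff, ← root2_val m A B Ls vR hvR]
        rw [hroot] at hv
        exact hv.symm
      · rw [Function.iterate_succ_apply, hv] at hn
        exact ⟨n, hn⟩
    -- classes of a and c
    have hca : Pr m A B Ls vR rest a ∨ Qa m A B Ls vR rest a ∨ Qb m A B Ls vR rest a :=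
      hclass a (hstep (.inl 0) a hb2_0 (hR (.inl 0)))
    have hcc : Pr m A B Ls vR rest c ∨ Qa m A B Ls vR rest c ∨ Qb m A B Ls vR rest c :=
      hclass c (hstep (.inl (Fin.succ 0)) c hb2_1 (hR (.inl (Fin.succ 0))))
    -- exclusions
    have hnotQaa : ¬ Qa m A B Ls vR rest a := by
      rintro ⟨n, hn⟩
      obtain ⟨k, hk⟩ := bridge_Qa2 m A B Ls vR a c rest n a hn
      have hcyc : (pmap (m+2) (l2 m A B Ls) vR (Fin.cons a (Fin.cons c rest)))^[k+1]
          (.inl 0) = .inl 0 := by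
        rw [Function.iterate_succ_apply, hb2_0]; exact hk
      have := rch_no_cycle (m+2) (l2 m A B Ls) vR (Fin.cons a (Fin.cons c rest))
        (rootF m A B Ls vR hvR) (root2_val m A B Ls vR hvR) (by omega) hcyc (hR (.inl 0))
      exact absurd this (by simp)
    have hnotQbc : ¬ Qb m A B Ls vR rest c := by
      rintro ⟨n, hn⟩
      obtain ⟨k, hk⟩ := bridge_Qb2 m A B Ls vR a c rest n c hn.1 hn.2
      have hcyc : (pmap (m+2) (l2 m A B Ls) vR (Fin.cons a (Fin.cons c rest)))^[k+1]
          (.inl (Fin.succ 0)) = .inl (Fin.succ 0) := by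
        rw [Function.iterate_succ_apply, hb2_1]; exact hk
      have := rch_no_cycle (m+2) (l2 m A B Ls) vR (Fin.cons a (Fin.cons c rest))
        (rootF m A B Ls vR hvR) (root2_val m A B Ls vR hvR) (by omega) hcyc
        (hR (.inl (Fin.succ 0)))
      exact absurd this (by simp)
    have hnotQbaQac : ¬ (Qb m A B Ls vR rest a ∧ Qa m A B Ls vR rest c) := by
      rintro ⟨⟨n, hn⟩, ⟨n', hn'⟩⟩
      obtain ⟨k, hk⟩ := bridge_Qb2 m A B Ls vR a c rest n a hn.1 hn.2
      obtain ⟨k', hk'⟩ := bridge_Qa2 m A B Ls vR a c rest n' c hn'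
      have hcyc : (pmap (m+2) (l2 m A B Ls) vR (Fin.cons a (Fin.cons c rest)))^[(k'+1)+(k+1)]
          (.inl 0) = .inl 0 := by
        rw [Function.iterate_add_apply]
        rw [show (pmap (m+2) (l2 m A B Ls) vR (Fin.cons a (Fin.cons c rest)))^[k+1]
            (.inl 0) = .inl (Fin.succ 0) from by
          rw [Function.iterate_succ_apply, hb2_0]; exact hk]
        rw [Function.iterate_succ_apply, hb2_1]
        exact hk'
      have := rch_no_cycle (m+2) (l2 m A B Ls) vR (Fin.cons a (Fin.cons c rest))
        (rootF m A B Ls vR hvR) (root2_val m A B Ls vR hvR) (by omega) hcyc (hR (.inl 0))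
      exact absurd this (by simp)
    constructor
    · rw [combo]
      rcases hca with ha | ha | ha
      · rcases hcc with hc' | hc' | hc'
        · exact Or.inl ⟨ha, hc'⟩
        · exact Or.inr (Or.inl ⟨ha, hc'⟩)
        · exact absurd hc' hnotQbc
      · exact absurd ha hnotQaa
      · rcases hcc with hc' | hc' | hc'
        · exact Or.inr (Or.inr ⟨ha, hc'⟩)
        · exact absurd ⟨ha, hc'⟩ hnotQbaQac
        · exact absurd hc' hnotQbc
    · intro i₀
      exact hclass (rest i₀) (hstep (.inl i₀.succ.succ) (rest i₀) (hb2_s i₀)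
        (hR (.inl i₀.succ.succ)))
  · rintro ⟨hcombo, Hrest⟩
    have total := total_class m A B Ls vR hvR rest Hrest
    -- reachability of the two special left vertices
    have reach01 : rch (m+2) (l2 m A B Ls) vR (Fin.cons a (Fin.cons c rest))
        (rootF m A B Ls vR hvR) (.inl 0) ∧
        rch (m+2) (l2 m A B Ls) vR (Fin.cons a (Fin.cons c rest))
        (rootF m A B Ls vR hvR) (.inl (Fin.succ 0)) := by
      rcases hcombo with ⟨ha, hc'⟩ | ⟨ha, hc'⟩ | ⟨ha, hc'⟩
      · obtain ⟨n, hn⟩ := ha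
        obtain ⟨k, hk⟩ := bridge_P2 m A B Ls vR hvR a c rest n a hn
        obtain ⟨n', hn'⟩ := hc'
        obtain ⟨k', hk'⟩ := bridge_P2 m A B Ls vR hvR a c rest n' c hn'
        exact ⟨⟨k + 1, by rw [Function.iterate_succ_apply, hb2_0]; exact hk⟩,
          ⟨k' + 1, by rw [Function.iterate_succ_apply, hb2_1]; exact hk'⟩⟩
      · obtain ⟨n, hn⟩ := ha
        obtain ⟨k, hk⟩ := bridge_P2 m A B Ls vR hvR a c rest n a hn
        have r0 : rch (m+2) (l2 m A B Ls) vR (Fin.cons a (Fin.cons c rest))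
            (rootF m A B Ls vR hvR) (.inl 0) :=
          ⟨k + 1, by rw [Function.iterate_succ_apply, hb2_0]; exact hk⟩
        obtain ⟨n', hn'⟩ := hc'
        obtain ⟨k', hk'⟩ := bridge_Qa2 m A B Ls vR a c rest n' c hn'
        obtain ⟨k0, hk0⟩ := id r0
        refine ⟨r0, ⟨k0 + (k' + 1), ?_⟩⟩
        rw [Function.iterate_add_apply]
        rw [show (pmap (m+2) (l2 m A B Ls) vR (Fin.cons a (Fin.cons c rest)))^[k'+1]
            (.inl (Fin.succ 0)) = .inl 0 from by
          rw [Function.iterate_succ_apply, hb2_1]; exact hk']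
        exact hk0
      · obtain ⟨n, hn⟩ := hc'
        obtain ⟨k, hk⟩ := bridge_P2 m A B Ls vR hvR a c rest n c hn
        have r1 : rch (m+2) (l2 m A B Ls) vR (Fin.cons a (Fin.cons c rest))
            (rootF m A B Ls vR hvR) (.inl (Fin.succ 0)) :=
          ⟨k + 1, by rw [Function.iterate_succ_apply, hb2_1]; exact hk⟩
        obtain ⟨n', hn'⟩ := ha
        obtain ⟨k', hk'⟩ := bridge_Qb2 m A B Ls vR a c rest n' a hn'.1 hn'.2
        obtain ⟨k1, hk1⟩ := id r1
        refine ⟨⟨k1 + (k' + 1), ?_⟩, r1⟩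
        rw [Function.iterate_add_apply]
        rw [show (pmap (m+2) (l2 m A B Ls) vR (Fin.cons a (Fin.cons c rest)))^[k'+1]
            (.inl 0) = .inl (Fin.succ 0) from by
          rw [Function.iterate_succ_apply, hb2_0]; exact hk']
        exact hk1
    obtain ⟨r0, r1⟩ := reach01
    have reach_inr : ∀ j : Fin vR, rch (m+2) (l2 m A B Ls) vR
        (Fin.cons a (Fin.cons c rest)) (rootF m A B Ls vR hvR) (.inr j) := by
      intro j
      rcases total j with h | h | h
      · obtain ⟨n, hn⟩ := h
        exact bridge_P2 m A B Ls vR hvR a c rest n j hn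
      · obtain ⟨n, hn⟩ := h
        obtain ⟨k, hk⟩ := bridge_Qa2 m A B Ls vR a c rest n j hn
        obtain ⟨k', hk'⟩ := r0
        exact ⟨k' + k, by rw [Function.iterate_add_apply, hk, hk']⟩
      · obtain ⟨n, hn⟩ := h
        obtain ⟨k, hk⟩ := bridge_Qb2 m A B Ls vR a c rest n j hn.1 hn.2
        obtain ⟨k', hk'⟩ := r1
        exact ⟨k' + k, by rw [Function.iterate_add_apply, hk, hk']⟩
    intro v
    rcases v with i | j
    · cases i using Fin.cases with
      | zero => exact r0
      | succ i' =>
        cases i' using Fin.cases with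
        | zero => exact r1
        | succ i₀ =>
          obtain ⟨k, hk⟩ := reach_inr (rest i₀)
          exact ⟨k + 1, by rw [Function.iterate_succ_apply, hb2_s]; exact hk⟩
    · exact reach_inr j

end Char2

section Counting

variable (hvR : vR = 1 + (A + B + ∑ i, Ls i))

/-- the condition on the remaining blue edges -/
def Hrest (rest : Fin m → Fin vR) : Prop :=
  ∀ i₀, Pr m A B Ls vR rest (rest i₀) ∨ Qa m A B Ls vR rest (rest i₀) ∨
    Qb m A B Ls vR rest (rest i₀)

include hvR in
lemma count_total (rest : Fin m → Fin vR) (hH : Hrest m A B Ls vR rest) :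
    (Finset.univ.filter (Pr m A B Ls vR rest)).card
      + (Finset.univ.filter (Qa m A B Ls vR rest)).card
      + (Finset.univ.filter (Qb m A B Ls vR rest)).card = vR := by
  have d1 : Disjoint (Finset.univ.filter (Pr m A B Ls vR rest))
      (Finset.univ.filter (Qa m A B Ls vR rest)) := by
    rw [Finset.disjoint_left]
    intro j hj1 hj2
    simp only [Finset.mem_filter] at hj1 hj2
    exact (classify_disjoint m A B Ls vR).1 ⟨hj1.2, hj2.2⟩
  have d2 : Disjoint (Finset.univ.filter (Pr m A B Ls vR rest) ∪
      Finset.univ.filter (Qa m A B Ls vR rest))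
      (Finset.univ.filter (Qb m A B Ls vR rest)) := by
    rw [Finset.disjoint_left]
    intro j hj1 hj2
    simp only [Finset.mem_union, Finset.mem_filter] at hj1 hj2
    rcases hj1 with h | h
    · exact (classify_disjoint m A B Ls vR).2.1 ⟨h.2, hj2.2⟩
    · exact (classify_disjoint m A B Ls vR).2.2 ⟨h.2, hj2.2⟩
  have hu : (Finset.univ.filter (Pr m A B Ls vR rest) ∪
      Finset.univ.filter (Qa m A B Ls vR rest)) ∪
      Finset.univ.filter (Qb m A B Ls vR rest) = Finset.univ := by
    ext j
    simp only [Finset.mem_union, Finset.mem_filter, Finset.mem_univ, true_and, iff_true]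
    rcases total_class m A B Ls vR hvR rest hH j with h | h | h
    · exact Or.inl (Or.inl h)
    · exact Or.inl (Or.inr h)
    · exact Or.inr h
  have := Finset.card_union_of_disjoint d2
  rw [Finset.card_union_of_disjoint d1] at this
  rw [hu] at this
  rw [← this]
  simp

include hvR in
lemma card_combo (rest : Fin m → Fin vR) (hH : Hrest m A B Ls vR rest) :
    (Finset.univ.filter (fun y : Fin vR × Fin vR => combo m A B Ls vR rest y.1 y.2)).card
      = (Finset.univ.filter (Pr m A B Ls vR rest)).card * vR := by
  have hsplit : Finset.univ.filter (fun y : Fin vR × Fin vR => combo m A B Ls vR rest y.1 y.2)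
      = ((Finset.univ ×ˢ Finset.univ).filter
          (fun y : Fin vR × Fin vR => Pr m A B Ls vR rest y.1 ∧ Pr m A B Ls vR rest y.2) ∪
        (Finset.univ ×ˢ Finset.univ).filter
          (fun y : Fin vR × Fin vR => Pr m A B Ls vR rest y.1 ∧ Qa m A B Ls vR rest y.2)) ∪
        (Finset.univ ×ˢ Finset.univ).filter
          (fun y : Fin vR × Fin vR => Qb m A B Ls vR rest y.1 ∧ Pr m A B Ls vR rest y.2) := by
    ext y
    rw [Finset.mem_filter]
    simp only [Finset.mem_filter, Finset.mem_union, Finset.mem_univ, true_and,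
      Finset.univ_product_univ, combo]
    tauto
  have d1 : Disjoint ((Finset.univ ×ˢ Finset.univ).filter
      (fun y : Fin vR × Fin vR => Pr m A B Ls vR rest y.1 ∧ Pr m A B Ls vR rest y.2))
      ((Finset.univ ×ˢ Finset.univ).filter
      (fun y : Fin vR × Fin vR => Pr m A B Ls vR rest y.1 ∧ Qa m A B Ls vR rest y.2)) := by
    rw [Finset.disjoint_left]
    intro y h1 h2
    simp only [Finset.mem_filter] at h1 h2
    exact (classify_disjoint m A B Ls vR).1 ⟨h1.2.2, h2.2.2⟩
  have d2 : Disjoint (((Finset.univ ×ˢ Finset.univ).filter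
      (fun y : Fin vR × Fin vR => Pr m A B Ls vR rest y.1 ∧ Pr m A B Ls vR rest y.2)) ∪
      ((Finset.univ ×ˢ Finset.univ).filter
      (fun y : Fin vR × Fin vR => Pr m A B Ls vR rest y.1 ∧ Qa m A B Ls vR rest y.2)))
      ((Finset.univ ×ˢ Finset.univ).filter
      (fun y : Fin vR × Fin vR => Qb m A B Ls vR rest y.1 ∧ Pr m A B Ls vR rest y.2)) := by
    rw [Finset.disjoint_left]
    intro y h1 h2
    simp only [Finset.mem_union, Finset.mem_filter] at h1 h2
    rcases h1 with h | h
    · exact (classify_disjoint m A B Ls vR).2.1 ⟨h.2.1, h2.2.1⟩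
    · exact (classify_disjoint m A B Ls vR).2.1 ⟨h.2.1, h2.2.1⟩
  rw [hsplit, Finset.card_union_of_disjoint d2, Finset.card_union_of_disjoint d1]
  rw [Finset.filter_product, Finset.filter_product, Finset.filter_product]
  rw [Finset.card_product, Finset.card_product, Finset.card_product]
  have ht := count_total m A B Ls vR hvR rest hH
  set np := (Finset.univ.filter (Pr m A B Ls vR rest)).card
  set na := (Finset.univ.filter (Qa m A B Ls vR rest)).card
  set nb := (Finset.univ.filter (Qb m A B Ls vR rest)).card
  rw [← ht]
  ring

end Counting

section Assemble

variable (hvR : vR = 1 + (A + B + ∑ i, Ls i))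

include hvR in
lemma merged_count :
    Bcount (m+1) (l1 m A B Ls) vR = ∑ rest : Fin m → Fin vR,
      (Finset.univ.filter fun d : Fin vR =>
        Pr m A B Ls vR rest d ∧ Hrest m A B Ls vR rest).card := by
  rw [Bcount_eq (m+1) (l1 m A B Ls) vR (rootF m A B Ls vR hvR)
    (hvR1 m A B Ls vR hvR) (root1_val m A B Ls vR hvR)]
  rw [Finset.card_eq_sum_card_fiberwise
    (f := fun b : Fin (m+1) → Fin vR => Fin.tail b) (t := Finset.univ)
    (fun _ _ => Finset.mem_univ _)]
  apply Finset.sum_congr rfl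
  intro rest _
  refine Finset.card_bij' (fun b _ => b 0) (fun d _ => Fin.cons d rest) ?_ ?_ ?_ ?_
  · intro b hb
    simp only [Finset.mem_filter, Finset.mem_univ, true_and] at hb ⊢
    obtain ⟨hP, htail⟩ := hb
    have hcons : Fin.cons (b 0) rest = b := by
      rw [← htail]; exact Fin.cons_self_tail b
    have := (char1 m A B Ls vR hvR (b 0) rest).1 (by rw [hcons]; exact hP)
    exact ⟨this.1, this.2⟩
  · intro d hd
    simp only [Finset.mem_filter, Finset.mem_univ, true_and] at hd ⊢
    refine ⟨(char1 m A B Ls vR hvR d rest).2 ⟨hd.1, hd.2⟩, by simp⟩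
  · intro b hb
    simp only [Finset.mem_filter, Finset.mem_univ, true_and] at hb
    show Fin.cons (b 0) rest = b
    rw [← hb.2]
    exact Fin.cons_self_tail b
  · intro d hd
    show (Fin.cons d rest : Fin (m+1) → Fin vR) 0 = d
    simp


include hvR in
lemma split_count :
    Bcount (m+2) (l2 m A B Ls) vR = ∑ rest : Fin m → Fin vR,
      (Finset.univ.filter fun y : Fin vR × Fin vR =>
        combo m A B Ls vR rest y.1 y.2 ∧ Hrest m A B Ls vR rest).card := by
  rw [Bcount_eq (m+2) (l2 m A B Ls) vR (rootF m A B Ls vR hvR)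
    (hvR2 m A B Ls vR hvR) (root2_val m A B Ls vR hvR)]
  rw [Finset.card_eq_sum_card_fiberwise
    (f := fun b : Fin (m+2) → Fin vR => Fin.tail (Fin.tail b)) (t := Finset.univ)
    (fun _ _ => Finset.mem_univ _)]
  apply Finset.sum_congr rfl
  intro rest _
  refine Finset.card_bij' (fun b _ => ((b 0, b (Fin.succ 0)) : Fin vR × Fin vR))
    (fun y _ => Fin.cons y.1 (Fin.cons y.2 rest)) ?_ ?_ ?_ ?_
  · intro b hb
    simp only [Finset.mem_filter, Finset.mem_univ, true_and] at hb ⊢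
    obtain ⟨hP, htail⟩ := hb
    have hcons : Fin.cons (b 0) (Fin.cons (b (Fin.succ 0)) rest) = b := by
      have h1 : Fin.cons (b (Fin.succ 0)) rest = Fin.tail b := by
        rw [← htail]
        exact Fin.cons_self_tail (Fin.tail b)
      rw [h1]
      exact Fin.cons_self_tail b
    have := (char2 m A B Ls vR hvR (b 0) (b (Fin.succ 0)) rest).1
      (by rw [hcons]; exact hP)
    exact ⟨this.1, this.2⟩
  · intro y hy
    simp only [Finset.mem_filter, Finset.mem_univ, true_and] at hy ⊢
    refine ⟨(char2 m A B Ls vR hvR y.1 y.2 rest).2 ⟨hy.1, hy.2⟩, by simp⟩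
  · intro b hb
    simp only [Finset.mem_filter, Finset.mem_univ, true_and] at hb
    have h1 : Fin.cons (b (Fin.succ 0)) rest = Fin.tail b := by
      rw [← hb.2]
      exact Fin.cons_self_tail (Fin.tail b)
    show Fin.cons (b 0) (Fin.cons (b (Fin.succ 0)) rest) = b
    rw [h1]
    exact Fin.cons_self_tail b
  · intro y hy
    show ((Fin.cons y.1 (Fin.cons y.2 rest) : Fin (m+2) → Fin vR) 0,
      (Fin.cons y.1 (Fin.cons y.2 rest) : Fin (m+2) → Fin vR) (Fin.succ 0)) = y
    simp

include hvR in
lemma per_rest (rest : Fin m → Fin vR) :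
    (Finset.univ.filter fun y : Fin vR × Fin vR =>
      combo m A B Ls vR rest y.1 y.2 ∧ Hrest m A B Ls vR rest).card
    = vR * (Finset.univ.filter fun d : Fin vR =>
      Pr m A B Ls vR rest d ∧ Hrest m A B Ls vR rest).card := by
  by_cases hH : Hrest m A B Ls vR rest
  · simp only [hH, and_true]
    rw [card_combo m A B Ls vR hvR rest hH, Nat.mul_comm]
  · rw [Finset.filter_false_of_mem (fun y _ h => hH h.2),
      Finset.filter_false_of_mem (fun d _ h => hH h.2)]
    simp

end Assemble

end Instance


/-- Splitting the first left vertex: with `L^{(1)} = (L_{0a}+L_{0b}, L_1, …, L_{ν−1})`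
(`ν = m+1` components) and `L^{(2)} = (L_{0a}, L_{0b}, L_1, …, L_{ν−1})` (`ν+1`
components), both with `v_R = 1 + L_{0a} + L_{0b} + ∑ L_i` right vertices and the
consecutive-blocks red graphs, one has `B(L^{(2)}) = v_R · B(L^{(1)})`. -/
theorem Bcount_split (m : ℕ) (L0a L0b : ℕ) (Ls : Fin m → ℕ)
    (vR : ℕ) (hvR : vR = 1 + (L0a + L0b + ∑ i, Ls i)) :
    Bcount (m + 2) (Fin.cons L0a (Fin.cons L0b Ls)) vR
      = vR * Bcount (m + 1) (Fin.cons (L0a + L0b) Ls) vR := by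
  classical
  have e2 : Bcount (m + 2) (Fin.cons L0a (Fin.cons L0b Ls)) vR
      = Bcount (m+2) (l2 m L0a L0b Ls) vR := rfl
  have e1 : Bcount (m + 1) (Fin.cons (L0a + L0b) Ls) vR
      = Bcount (m+1) (l1 m L0a L0b Ls) vR := rfl
  rw [e2, e1, split_count m L0a L0b Ls vR hvR, merged_count m L0a L0b Ls vR hvR,
    Finset.mul_sum]
  exact Finset.sum_congr rfl (fun rest _ => per_rest m L0a L0b Ls vR hvR rest)
end
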